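/- arXiv:2209.04690 — 11 statements merged into one kernel-verified Lean document; each statement's English description precedes it below -/
import Mathlib

section
/- Let n, m be positive integers with m ≤ n, let f : ℝⁿ → ℝ and g : ℝⁿ → ℝᵐ be C² functions, and let x* be a local minimum of f subject to the constraint g = 0 such that the Jacobian matrix Jg(x*) has full rank m. Then there exists a vector λ* ∈ ℝᵐ such that ∇f(x*) = Jg(x*)ᵀ λ*, and for every v ∈ Ker(Jg(x*)) one has vᵀ(∇²f(x*) − Σᵢ₌₁ᵐ λᵢ* ∇²gᵢ(x*)) v ≥ 0. -/
open Matrix Set Metric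

noncomputable def grad {n : ℕ} (f : (Fin n → ℝ) → ℝ) (x : Fin n → ℝ) : Fin n → ℝ :=
  fun i => fderiv ℝ f x (Pi.single i 1)

noncomputable def hess {n : ℕ} (f : (Fin n → ℝ) → ℝ) (x : Fin n → ℝ) :
    Matrix (Fin n) (Fin n) ℝ :=
  Matrix.of fun i j => fderiv ℝ (fun y => fderiv ℝ f y (Pi.single j 1)) x (Pi.single i 1)

noncomputable def jac {n m : ℕ} (g : (Fin n → ℝ) → Fin m → ℝ) (x : Fin n → ℝ) :
    Matrix (Fin m) (Fin n) ℝ :=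
  Matrix.of fun i j => fderiv ℝ (fun y => g y i) x (Pi.single j 1)

noncomputable def euclNorm {n : ℕ} (v : Fin n → ℝ) : ℝ := Real.sqrt (v ⬝ᵥ v)

open Filter Topology

section Aux

lemma pi_single_expand {n : ℕ} (w : Fin n → ℝ) :
    w = ∑ i, w i • (Pi.single i 1 : Fin n → ℝ) := by
  ext j
  simp [Pi.single_apply, Finset.sum_apply]

lemma clm_apply_eq_sum {n : ℕ} {F : Type*} [NormedAddCommGroup F] [NormedSpace ℝ F]
    (T : (Fin n → ℝ) →L[ℝ] F) (w : Fin n → ℝ) :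
    T w = ∑ i, w i • T (Pi.single i 1) := by
  conv_lhs => rw [pi_single_expand w]
  simp

lemma fderiv_apply_eq_dot {n : ℕ} (f : (Fin n → ℝ) → ℝ) (x w : Fin n → ℝ) :
    fderiv ℝ f x w = w ⬝ᵥ grad f x := by
  rw [clm_apply_eq_sum]
  simp [grad, dotProduct]

lemma fderiv_g_eq_mulVec {n m : ℕ} {g : (Fin n → ℝ) → Fin m → ℝ} {x : Fin n → ℝ}
    (hg : ∀ i, DifferentiableAt ℝ (fun y => g y i) x) (w : Fin n → ℝ) :
    fderiv ℝ g x w = jac g x *ᵥ w := by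
  have h := fderiv_pi hg
  have h2 : fderiv ℝ g x = fderiv ℝ (fun y i => g y i) x := rfl
  rw [h2, h]
  ext i
  rw [ContinuousLinearMap.pi_apply, clm_apply_eq_sum]
  simp [jac, mulVec, dotProduct, mul_comm]

lemma bij_of_rank {n m : ℕ} (J : Matrix (Fin m) (Fin n) ℝ) (hrank : J.rank = m) :
    Function.Bijective (Matrix.mulVecLin (J * Jᵀ)) := by
  have h1 : (J * Jᵀ).rank = m := by rw [Matrix.rank_self_mul_transpose]; exact hrank
  have h2 : LinearMap.range (Matrix.mulVecLin (J * Jᵀ)) = ⊤ := by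
    apply Submodule.eq_top_of_finrank_eq
    rw [← Matrix.rank, h1, Module.finrank_fin_fun]
  have hsurj : Function.Surjective (Matrix.mulVecLin (J * Jᵀ)) :=
    LinearMap.range_eq_top.mp h2
  exact ⟨LinearMap.injective_iff_surjective.mpr hsurj, hsurj⟩

lemma second_deriv_nonneg_of_isLocalMin {φ φ' : ℝ → ℝ} {d : ℝ}
    (h1 : ∀ᶠ t in 𝓝 (0:ℝ), HasDerivAt φ (φ' t) t)
    (h2 : HasDerivAt φ' d 0) (hmin : IsLocalMin φ 0) : 0 ≤ d := by
  by_contra hd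
  push_neg at hd
  have h0 : φ' 0 = 0 := by
    have := h1.self_of_nhds
    have hder := this.deriv
    rw [← hder]
    exact hmin.deriv_eq_zero
  have hslope : Tendsto (fun t : ℝ => φ' t / t) (𝓝[≠] 0) (𝓝 d) := by
    have := hasDerivAt_iff_tendsto_slope.mp h2
    have heq : (fun t : ℝ => φ' t / t) =ᶠ[𝓝[≠] (0:ℝ)] slope φ' 0 := by
      filter_upwards with t
      simp [slope_def_field, h0]
    exact Tendsto.congr' heq.symm (by simpa using this)
  have hneg : ∀ᶠ t in 𝓝[>] (0:ℝ), φ' t < 0 := by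
    have hsub : 𝓝[>] (0:ℝ) ≤ 𝓝[≠] (0:ℝ) :=
      nhdsWithin_mono 0 fun x hx => ne_of_gt hx
    have h3 : ∀ᶠ t in 𝓝[>] (0:ℝ), φ' t / t < d / 2 := by
      have := hslope.mono_left hsub
      exact this.eventually_lt_const (by linarith)
    filter_upwards [h3, self_mem_nhdsWithin] with t ht ht0
    have ht0' : (0:ℝ) < t := ht0
    nlinarith [(div_lt_iff₀ ht0').mp ht]
  obtain ⟨ε1, hε1, hder⟩ := Metric.eventually_nhds_iff.mp h1
  obtain ⟨ε2, hε2, hmin'⟩ := Metric.eventually_nhds_iff.mp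
    (hmin : ∀ᶠ x in 𝓝 (0:ℝ), φ 0 ≤ φ x)
  obtain ⟨ε3, hε3, hneg'⟩ := Metric.eventually_nhds_iff.mp
    (eventually_nhdsWithin_iff.mp hneg)
  set δ := min ε1 (min ε2 ε3) with hδdef
  have hδ : 0 < δ := by positivity
  set t := δ / 2 with ht
  have htpos : 0 < t := by positivity
  have htδ : t < δ := by rw [ht]; linarith
  have hcont : ContinuousOn φ (Set.Icc 0 t) := by
    intro s hs
    have : |s| < ε1 := by
      rw [abs_of_nonneg hs.1]
      calc s ≤ t := hs.2
        _ < δ := htδ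
        _ ≤ ε1 := min_le_left _ _
    exact ((hder (by simpa [Real.dist_eq] using this)).continuousAt).continuousWithinAt
  have hdiff : ∀ s ∈ Set.Ioo (0:ℝ) t, HasDerivAt φ (φ' s) s := by
    intro s hs
    have : |s| < ε1 := by
      rw [abs_of_nonneg hs.1.le]
      calc s < t := hs.2
        _ < δ := htδ
        _ ≤ ε1 := min_le_left _ _
    exact hder (by simpa [Real.dist_eq] using this)
  obtain ⟨ξ, hξ, hξeq⟩ := exists_hasDerivAt_eq_slope φ φ' htpos hcont hdiff
  have hξneg : φ' ξ < 0 := by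
    apply hneg' (y := ξ) ?_ hξ.1
    rw [Real.dist_eq, sub_zero, abs_of_pos hξ.1]
    calc ξ < t := hξ.2
      _ < δ := htδ
      _ ≤ ε3 := le_trans (min_le_right _ _) (min_le_right _ _)
  have hφt : φ 0 ≤ φ t := by
    apply hmin'
    rw [Real.dist_eq, sub_zero, abs_of_pos htpos]
    exact lt_of_lt_of_le htδ (le_trans (min_le_right _ _) (min_le_left _ _))
  rw [hξeq] at hξneg
  have : (φ t - φ 0) / (t - 0) ≥ 0 := div_nonneg (by linarith) (by linarith)
  linarith

lemma exists_curve {n m : ℕ} {g : (Fin n → ℝ) → Fin m → ℝ} (hg : ContDiff ℝ 2 g)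
    {xs : Fin n → ℝ} (hgxs : g xs = 0)
    (hrank : (jac g xs).rank = m)
    (v : Fin n → ℝ) (hv : jac g xs *ᵥ v = 0) :
    ∃ c : ℝ → (Fin n → ℝ), ContDiffAt ℝ 2 c 0 ∧ c 0 = xs ∧ HasDerivAt c v 0 ∧
      ∀ᶠ t in 𝓝 (0:ℝ), g (c t) = 0 := by
  classical
  set J := jac g xs with hJ
  have hbij := bij_of_rank J hrank
  let Mlin : (Fin m → ℝ) ≃ₗ[ℝ] (Fin m → ℝ) := LinearEquiv.ofBijective _ hbij
  let M : (Fin m → ℝ) ≃L[ℝ] (Fin m → ℝ) := Mlin.toContinuousLinearEquiv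
  have hM : ∀ u, M u = (J * Jᵀ) *ᵥ u := fun u => rfl
  let A : (ℝ × (Fin m → ℝ)) →L[ℝ] (Fin n → ℝ) :=
    (ContinuousLinearMap.fst ℝ ℝ (Fin m → ℝ)).smulRight v +
      (LinearMap.toContinuousLinearMap (Matrix.mulVecLin Jᵀ)).comp
        (ContinuousLinearMap.snd ℝ ℝ (Fin m → ℝ))
  have hA : ∀ p : ℝ × (Fin m → ℝ), A p = p.1 • v + Jᵀ *ᵥ p.2 := fun p => rfl
  set ψ : (ℝ × (Fin m → ℝ)) → (Fin n → ℝ) := fun p => xs + A p with hψdef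
  have hψcd : ContDiff ℝ 2 ψ := contDiff_const.add (A.contDiff)
  set F : (ℝ × (Fin m → ℝ)) → (ℝ × (Fin m → ℝ)) := fun p => (p.1, g (ψ p)) with hFdef
  have hFcd : ContDiff ℝ 2 F := contDiff_fst.prodMk (hg.comp hψcd)
  have hψ0 : ψ (0, 0) = xs := by
    simp [hψdef, hA]
  have hF0 : F (0, 0) = (0, 0) := by
    show ((0:ℝ), g (ψ (0,0))) = (0, 0)
    rw [hψ0, hgxs]
  have hgdiff : ∀ y, ∀ i, DifferentiableAt ℝ (fun z => g z i) y := fun y i =>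
    (((ContinuousLinearMap.proj (R := ℝ) (φ := fun _ : Fin m => ℝ) i).contDiff).comp
      hg).differentiable (by norm_num) y
  set Eqv : (ℝ × (Fin m → ℝ)) ≃L[ℝ] (ℝ × (Fin m → ℝ)) :=
    (ContinuousLinearEquiv.refl ℝ ℝ).prodCongr M with hEqv
  have hgfd : HasFDerivAt g (fderiv ℝ g xs) xs :=
    ((hg.differentiable (by norm_num)) xs).hasFDerivAt
  have hF' : HasFDerivAt F (Eqv : (ℝ × (Fin m → ℝ)) →L[ℝ] (ℝ × (Fin m → ℝ))) (0, 0) := by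
    have h1 : HasFDerivAt ψ A (0, 0) := A.hasFDerivAt.const_add xs
    have h2 : HasFDerivAt g (fderiv ℝ g xs) (ψ (0, 0)) := hψ0 ▸ hgfd
    have h3 := h2.comp (0, 0) h1
    have h4 : HasFDerivAt F (((ContinuousLinearMap.fst ℝ ℝ (Fin m → ℝ))).prod
        ((fderiv ℝ g xs).comp A)) (0, 0) := (hasFDerivAt_fst).prodMk h3
    convert h4 using 1
    apply ContinuousLinearMap.ext
    intro p
    have hfd : fderiv ℝ g xs (A p) = J *ᵥ (A p) := fderiv_g_eq_mulVec (hgdiff xs) _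
    have hEp : (Eqv : (ℝ × (Fin m → ℝ)) →L[ℝ] (ℝ × (Fin m → ℝ))) p
        = (p.1, (J * Jᵀ) *ᵥ p.2) := rfl
    rw [hEp]
    have hJA : J *ᵥ (A p) = (J * Jᵀ) *ᵥ p.2 := by
      rw [hA, mulVec_add, mulVec_smul, hv, mulVec_mulVec]
      simp
    simp only [ContinuousLinearMap.prod_apply, ContinuousLinearMap.coe_fst',
      ContinuousLinearMap.coe_comp', Function.comp_apply, hfd, hJA]
  have one_le : (2 : WithTop ℕ∞) ≠ 0 := by norm_num
  set N := (hFcd.contDiffAt).localInverse hF' one_le with hNdef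
  have hN : ContDiffAt ℝ 2 N (0, 0) := by
    have := (hFcd.contDiffAt).to_localInverse hF' one_le
    rwa [hF0] at this
  have hNs : HasStrictFDerivAt N
      (Eqv.symm : (ℝ × (Fin m → ℝ)) →L[ℝ] (ℝ × (Fin m → ℝ))) (0, 0) := by
    have := ((hFcd.contDiffAt).hasStrictFDerivAt' hF' one_le).to_localInverse
    rwa [hF0] at this
  have hrev : ∀ᶠ y in 𝓝 ((0:ℝ), (0 : Fin m → ℝ)), F (N y) = y := by
    have := ((hFcd.contDiffAt).hasStrictFDerivAt' hF' one_le).eventually_right_inverse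
    rwa [hF0] at this
  have hN0 : N (0, 0) = (0, 0) := by
    have := (hFcd.contDiffAt).localInverse_apply_image hF' one_le
    rwa [hF0] at this
  refine ⟨fun t => ψ (N (t, 0)), ?_, ?_, ?_, ?_⟩
  · have : ContDiffAt ℝ 2 (ψ ∘ fun t : ℝ => N (t, 0)) 0 :=
      ContDiffAt.comp 0 (hψcd.contDiffAt)
        (ContDiffAt.comp 0 hN ((contDiff_id.prodMk contDiff_const).contDiffAt))
    exact this
  · show ψ (N (0, 0)) = xs
    rw [hN0, hψ0]
  · have hι : HasDerivAt (fun t : ℝ => ((t, 0) : ℝ × (Fin m → ℝ))) (1, 0) 0 :=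
      (hasDerivAt_id 0).prodMk (hasDerivAt_const 0 0)
    have h5 : HasDerivAt (fun t : ℝ => N (t, 0)) (Eqv.symm (1, 0)) 0 :=
      by have := hNs.hasFDerivAt.comp_hasDerivAt 0 hι; exact this
    have h6 : HasFDerivAt ψ A (N (0, 0)) := A.hasFDerivAt.const_add xs
    have h7 := h6.comp_hasDerivAt 0 h5
    have h8 : Eqv.symm (1, 0) = ((1:ℝ), (0 : Fin m → ℝ)) := by
      have h9 : Eqv ((1:ℝ), (0 : Fin m → ℝ)) = (1, 0) := by
        have hM0 : M 0 = 0 := map_zero _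
        simp [hEqv, ContinuousLinearEquiv.prodCongr_apply, hM0]
      exact (Eqv.symm_apply_eq).mpr h9.symm
    rw [h8] at h7
    have h10 : A ((1:ℝ), (0 : Fin m → ℝ)) = v := by
      rw [hA]
      simp
    rwa [h10] at h7
  · have hcont : ContinuousAt (fun t : ℝ => ((t, 0) : ℝ × (Fin m → ℝ))) 0 :=
      (continuous_id.prodMk continuous_const).continuousAt
    have := hcont.tendsto.eventually hrev
    filter_upwards [this] with t ht
    have h11 : (F (N (t, 0))).2 = (((t : ℝ), (0 : Fin m → ℝ)) : ℝ × (Fin m → ℝ)).2 := by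
      rw [ht]
    simpa [hFdef] using h11

end Aux

/-- first- and second-order necessary optimality conditions for an
equality-constrained local minimum. -/
theorem stmt_0 {n m : ℕ} (hm : 0 < m) (hmn : m ≤ n)
    (f : (Fin n → ℝ) → ℝ) (g : (Fin n → ℝ) → Fin m → ℝ)
    (hf : ContDiff ℝ 2 f) (hg : ContDiff ℝ 2 g)
    (xs : Fin n → ℝ) (hgxs : g xs = 0)
    (hmin : ∃ U ∈ nhds xs, ∀ y ∈ U, g y = 0 → f xs ≤ f y)
    (hrank : (jac g xs).rank = m) :
    ∃ lam : Fin m → ℝ,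
      grad f xs = (jac g xs)ᵀ *ᵥ lam ∧
      ∀ v : Fin n → ℝ, jac g xs *ᵥ v = 0 →
        0 ≤ v ⬝ᵥ ((hess f xs - ∑ i, lam i • hess (fun y => g y i) xs) *ᵥ v) := by
  classical
  obtain ⟨U, hU, hUmin⟩ := hmin
  set J := jac g xs with hJ
  -- Step 1: the gradient of f vanishes on ker J
  have hker : ∀ v, J *ᵥ v = 0 → fderiv ℝ f xs v = 0 := by
    intro v hv
    obtain ⟨c, hc2, hc0, hc', hcg⟩ := exists_curve hg hgxs hrank v hv
    have hctU : ∀ᶠ t in 𝓝 (0:ℝ), c t ∈ U := by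
      have h := hc2.continuousAt.tendsto
      rw [hc0] at h
      exact h.eventually (Filter.eventually_of_mem hU fun y hy => hy)
    have hlocmin : IsLocalMin (fun t => f (c t)) 0 := by
      filter_upwards [hctU, hcg] with t h1 h2
      show f (c 0) ≤ f (c t)
      rw [hc0]
      exact hUmin _ h1 h2
    have hfd : HasFDerivAt f (fderiv ℝ f xs) (c 0) := by
      rw [hc0]
      exact ((hf.differentiable (by norm_num)) xs).hasFDerivAt
    have hd : HasDerivAt (fun t => f (c t)) (fderiv ℝ f xs v) 0 :=
      hfd.comp_hasDerivAt 0 hc'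
    have h0 := hlocmin.deriv_eq_zero
    rwa [hd.deriv] at h0
  -- Step 2: construct the multiplier
  have hbij := bij_of_rank J hrank
  obtain ⟨lam, hlam⟩ := hbij.2 (J *ᵥ grad f xs)
  have hlam' : (J * Jᵀ) *ᵥ lam = J *ᵥ grad f xs := hlam
  set w : Fin n → ℝ := grad f xs - Jᵀ *ᵥ lam with hw
  have hJw : J *ᵥ w = 0 := by
    rw [hw, mulVec_sub, mulVec_mulVec, hlam', sub_self]
  have hfw : fderiv ℝ f xs w = 0 := hker w hJw
  have h1 : w ⬝ᵥ grad f xs = 0 := by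
    have h := fderiv_apply_eq_dot f xs w
    rw [hfw] at h
    exact h.symm
  have h2 : w ⬝ᵥ (Jᵀ *ᵥ lam) = 0 := by
    rw [dotProduct_mulVec, vecMul_transpose, hJw, zero_dotProduct]
  have hwdot : w ⬝ᵥ w = 0 := by
    calc w ⬝ᵥ w = w ⬝ᵥ grad f xs - w ⬝ᵥ (Jᵀ *ᵥ lam) := by
          rw [hw, dotProduct_sub]
      _ = 0 := by rw [h1, h2, sub_self]
  have hw0 : w = 0 := dotProduct_self_eq_zero.mp hwdot
  have hgrad : grad f xs = Jᵀ *ᵥ lam := by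
    have := sub_eq_zero.mp hw0
    exact this
  refine ⟨lam, hgrad, ?_⟩
  -- Step 3: second-order conditions
  intro v hv
  -- the Lagrangian
  set L : (Fin n → ℝ) → ℝ := fun y => f y - ∑ i, lam i * g y i with hLdef
  have hgi : ∀ i, ContDiff ℝ 2 (fun y => g y i) := fun i =>
    ((ContinuousLinearMap.proj (R := ℝ) (φ := fun _ : Fin m => ℝ) i).contDiff).comp hg
  have hL : ContDiff ℝ 2 L :=
    hf.sub (ContDiff.sum fun i _ => contDiff_const.mul (hgi i))
  have hgdiffy : ∀ i y, DifferentiableAt ℝ (fun z => g z i) y := fun i y =>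
    (hgi i).differentiable (by norm_num) y
  have hfderivL : ∀ y, fderiv ℝ L y =
      fderiv ℝ f y - ∑ i, lam i • fderiv ℝ (fun z => g z i) y := by
    intro y
    rw [hLdef]
    rw [fderiv_fun_sub ((hf.differentiable (by norm_num)) y)
      (DifferentiableAt.fun_sum fun i _ => ((hgdiffy i y).const_mul (lam i)))]
    congr 1
    rw [fderiv_fun_sum fun i _ => ((hgdiffy i y).const_mul (lam i))]
    exact Finset.sum_congr rfl fun i _ => fderiv_const_mul (hgdiffy i y) (lam i)
  -- first-order condition for the Lagrangian
  have hL0 : ∀ u, fderiv ℝ L xs u = 0 := by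
    intro u
    rw [hfderivL xs]
    rw [ContinuousLinearMap.sub_apply, ContinuousLinearMap.sum_apply]
    have hfu : fderiv ℝ f xs u = u ⬝ᵥ (Jᵀ *ᵥ lam) := by
      rw [fderiv_apply_eq_dot, hgrad]
    have hgu : ∀ i, fderiv ℝ (fun z => g z i) xs u = ∑ j, u j * J i j := by
      intro i
      rw [clm_apply_eq_sum]
      exact Finset.sum_congr rfl fun j _ => rfl
    rw [hfu]
    have hsum : ∑ i, (lam i • fderiv ℝ (fun z => g z i) xs) u
        = ∑ i, lam i * ∑ j, u j * J i j := by
      refine Finset.sum_congr rfl fun i _ => ?_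
      rw [ContinuousLinearMap.smul_apply, smul_eq_mul, hgu i]
    rw [hsum, dotProduct_mulVec, vecMul_transpose, sub_eq_zero]
    simp only [dotProduct, mulVec]
    refine Finset.sum_congr rfl fun i _ => ?_
    simp only [Finset.sum_mul, Finset.mul_sum]
    refine Finset.sum_congr rfl fun j _ => ?_
    ring
  -- the second derivative of L
  set T := fderiv ℝ (fderiv ℝ L) xs with hT
  have hL1 : ContDiff ℝ 1 (fderiv ℝ L) := hL.fderiv_right (by norm_num)
  have hTd : HasFDerivAt (fderiv ℝ L) T xs :=
    ((hL1.differentiable (by norm_num)) xs).hasFDerivAt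
  have hf1 : ContDiff ℝ 1 (fderiv ℝ f) := hf.fderiv_right (by norm_num)
  have hg1 : ∀ i, ContDiff ℝ 1 (fderiv ℝ (fun z => g z i)) := fun i =>
    (hgi i).fderiv_right (by norm_num)
  -- identification of hessian entries
  have hTij : ∀ i j, fderiv ℝ (fun y => fderiv ℝ L y (Pi.single j 1)) xs (Pi.single i 1)
      = (T (Pi.single i 1)) (Pi.single j 1) := by
    intro i j
    have hB := (ContinuousLinearMap.apply ℝ ℝ
      ((Pi.single j 1 : Fin n → ℝ))).hasFDerivAt (x := fderiv ℝ L xs)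
    have hcomp := hB.comp xs hTd
    have : fderiv ℝ (fun y => fderiv ℝ L y (Pi.single j 1)) xs
        = (ContinuousLinearMap.apply ℝ ℝ ((Pi.single j 1 : Fin n → ℝ))).comp T :=
      hcomp.fderiv
    rw [this]
    rfl
  have key : ∀ i j, (T (Pi.single i 1)) (Pi.single j 1)
      = hess f xs i j - ∑ k, lam k * hess (fun y => g y k) xs i j := by
    intro i j
    rw [← hTij i j]
    have hfun : (fun y => fderiv ℝ L y (Pi.single j 1)) =
        fun y => fderiv ℝ f y (Pi.single j 1)
          - ∑ k, lam k * fderiv ℝ (fun z => g z k) y (Pi.single j 1) := by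
      funext y
      rw [hfderivL y]
      simp [ContinuousLinearMap.sub_apply, ContinuousLinearMap.sum_apply,
        ContinuousLinearMap.smul_apply]
    rw [hfun]
    have hdf : DifferentiableAt ℝ (fun y => fderiv ℝ f y (Pi.single j 1)) xs := by
      have := ((ContinuousLinearMap.apply ℝ ℝ
        ((Pi.single j 1 : Fin n → ℝ))).differentiable.comp
        (hf1.differentiable (by norm_num))) xs
      exact this
    have hdg : ∀ k, DifferentiableAt ℝ
        (fun y => fderiv ℝ (fun z => g z k) y (Pi.single j 1)) xs := by
      intro k
      have := ((ContinuousLinearMap.apply ℝ ℝ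
        ((Pi.single j 1 : Fin n → ℝ))).differentiable.comp
        ((hg1 k).differentiable (by norm_num))) xs
      exact this
    rw [fderiv_fun_sub hdf (DifferentiableAt.fun_sum fun k _ => (hdg k).const_mul (lam k))]
    rw [ContinuousLinearMap.sub_apply]
    rw [fderiv_fun_sum fun k _ => (hdg k).const_mul (lam k)]
    rw [ContinuousLinearMap.sum_apply]
    congr 1
    refine Finset.sum_congr rfl fun k _ => ?_
    rw [fderiv_const_mul (hdg k) (lam k)]
    rfl
  -- get the curve for v
  obtain ⟨c, hc2, hc0, hc', hcg⟩ := exists_curve hg hgxs hrank v hv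
  obtain ⟨u, hu_nhds, hcu⟩ := hc2.contDiffOn (le_refl 2) (by simp)
  set s := interior u with hs
  have hs_open : IsOpen s := isOpen_interior
  have h0s : (0:ℝ) ∈ s := mem_interior_iff_mem_nhds.mpr hu_nhds
  have hcs : ContDiffOn ℝ 2 c s := hcu.mono interior_subset
  have hder_c : ∀ t ∈ s, HasDerivAt c (deriv c t) t := fun t ht =>
    (((hcs.differentiableOn (by norm_num)).differentiableAt
      (hs_open.mem_nhds ht))).hasDerivAt
  set φ : ℝ → ℝ := fun t => L (c t) with hφdef
  set φ' : ℝ → ℝ := fun t => fderiv ℝ L (c t) (deriv c t) with hφ'def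
  have h1 : ∀ᶠ t in 𝓝 (0:ℝ), HasDerivAt φ (φ' t) t := by
    filter_upwards [hs_open.mem_nhds h0s] with t ht
    exact (((hL.differentiable (by norm_num)) (c t)).hasFDerivAt).comp_hasDerivAt
      t (hder_c t ht)
  have hMder : HasDerivAt (fun t => fderiv ℝ L (c t)) (T v) 0 := by
    have hTd' : HasFDerivAt (fderiv ℝ L) T (c 0) := by
      rw [hc0]; exact hTd
    exact hTd'.comp_hasDerivAt 0 hc'
  have hudiff : HasDerivAt (deriv c) (deriv (deriv c) 0) 0 := by
    have h2 : ContDiffOn ℝ 1 (deriv c) s := hcs.deriv_of_isOpen hs_open (by norm_num)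
    exact (((h2.differentiableOn (by norm_num)).differentiableAt
      (hs_open.mem_nhds h0s))).hasDerivAt
  have hφ'der : HasDerivAt φ' ((T v) v) 0 := by
    have h3 := hMder.clm_apply hudiff
    have hdc0 : deriv c 0 = v := hc'.deriv
    rw [hdc0, hc0] at h3
    rw [hL0 (deriv (deriv c) 0), add_zero] at h3
    exact h3
  have hctU : ∀ᶠ t in 𝓝 (0:ℝ), c t ∈ U := by
    have h := hc2.continuousAt.tendsto
    rw [hc0] at h
    exact h.eventually (Filter.eventually_of_mem hU fun y hy => hy)
  have hlm : IsLocalMin φ 0 := by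
    filter_upwards [hctU, hcg] with t htU htg
    show φ 0 ≤ φ t
    have e0 : φ 0 = f xs := by
      rw [hφdef]
      simp only [hc0, hLdef]
      rw [hgxs]
      simp
    have et : φ t = f (c t) := by
      rw [hφdef]
      simp only [hLdef, htg]
      simp
    rw [e0, et]
    exact hUmin _ htU htg
  have hTvv : 0 ≤ (T v) v := second_deriv_nonneg_of_isLocalMin h1 hφ'der hlm
  -- convert to the matrix form
  have expand : (T v) v = ∑ j, v j * ∑ i, v i * (T (Pi.single i 1)) (Pi.single j 1) := by
    calc (T v) v = ∑ j, v j • (T v) (Pi.single j 1) := clm_apply_eq_sum _ v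
      _ = ∑ j, v j * ∑ i, v i * (T (Pi.single i 1)) (Pi.single j 1) := by
          refine Finset.sum_congr rfl fun j _ => ?_
          rw [smul_eq_mul]
          congr 1
          rw [clm_apply_eq_sum T v]
          simp [ContinuousLinearMap.sum_apply, ContinuousLinearMap.smul_apply]
  have hmat : v ⬝ᵥ ((hess f xs - ∑ i, lam i • hess (fun y => g y i) xs) *ᵥ v)
      = ∑ i, ∑ j, v i * ((T (Pi.single i 1)) (Pi.single j 1) * v j) := by
    simp only [dotProduct, mulVec, Finset.mul_sum]
    refine Finset.sum_congr rfl fun i _ => Finset.sum_congr rfl fun j _ => ?_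
    have hentry : (hess f xs - ∑ k, lam k • hess (fun y => g y k) xs) i j
        = (T (Pi.single i 1)) (Pi.single j 1) := by
      rw [key i j]
      simp [Matrix.sub_apply, Matrix.sum_apply, Matrix.smul_apply]
    rw [hentry]
  rw [hmat]
  rw [Finset.sum_comm]
  calc (0:ℝ) ≤ ∑ j, v j * ∑ i, v i * (T (Pi.single i 1)) (Pi.single j 1) := by
        rw [← expand]; exact hTvv
    _ = ∑ j, ∑ i, v i * ((T (Pi.single i 1)) (Pi.single j 1) * v j) := by
        refine Finset.sum_congr rfl fun j _ => ?_
        rw [Finset.mul_sum]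
        refine Finset.sum_congr rfl fun i _ => ?_
        ring
end

section
/- Let n, m be positive integers with m ≤ n, let f : ℝⁿ → ℝ and g : ℝⁿ → ℝᵐ be C² functions, and let x* ∈ ℝⁿ satisfy g(x*) = 0 with Jg(x*) of full rank m. Suppose there exists λ* ∈ ℝᵐ with ∇f(x*) = Jg(x*)ᵀ λ* (first-order conditions) and suppose that vᵀ(∇²f(x*) − Σᵢ₌₁ᵐ λᵢ* ∇²gᵢ(x*)) v > 0 for every nonzero v ∈ Ker(Jg(x*)). Then x* is a local minimum of f subject to the constraint g = 0, i.e. there is a neighborhood U of x* such that f(x) ≥ f(x*) for every x ∈ U with g(x) = 0. -/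
open Matrix Set Metric

lemma sum_smul_single {n : ℕ} (v : Fin n → ℝ) :
    ∑ j, v j • (Pi.single j 1 : Fin n → ℝ) = v := by
  ext k; simp [Finset.sum_apply, Pi.single_apply]

lemma clm_apply_eq_sum_s1 {n : ℕ} (T : (Fin n → ℝ) →L[ℝ] ℝ) (v : Fin n → ℝ) :
    T v = ∑ j, v j * T (Pi.single j 1) := by
  conv_lhs => rw [← sum_smul_single v]
  rw [map_sum]; simp [smul_eq_mul]

lemma clm_ext_basis {n : ℕ} (T S : (Fin n → ℝ) →L[ℝ] ℝ)
    (h : ∀ j, T (Pi.single j 1) = S (Pi.single j 1)) : T = S := by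
  ext v
  rw [clm_apply_eq_sum_s1, clm_apply_eq_sum_s1]
  simp [h]

lemma hasDerivAt_line {n : ℕ} {F : (Fin n → ℝ) → ℝ} (hF : Differentiable ℝ F)
    (x d : Fin n → ℝ) (t : ℝ) :
    HasDerivAt (fun s => F (x + s • d)) (fderiv ℝ F (x + t • d) d) t := by
  have h1 : HasDerivAt (fun s : ℝ => x + s • d) d t := by
    simpa using ((hasDerivAt_id t).smul_const d).const_add x
  exact (hF (x + t • d)).hasFDerivAt.comp_hasDerivAt t h1

lemma hasDerivAt_line2 {n : ℕ} {F : (Fin n → ℝ) → ℝ} (hF : ContDiff ℝ 2 F)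
    (x d : Fin n → ℝ) (t : ℝ) :
    HasDerivAt (fun s => fderiv ℝ F (x + s • d) d)
      (d ⬝ᵥ (hess F (x + t • d) *ᵥ d)) t := by
  have hG : ∀ j : Fin n, ContDiff ℝ 1 (fun y => fderiv ℝ F y (Pi.single j 1)) := by
    intro j
    exact (hF.fderiv_right (le_refl 2)).clm_apply contDiff_const
  have key : (fun s : ℝ => fderiv ℝ F (x + s • d) d)
      = fun s => ∑ j, d j * fderiv ℝ F (x + s • d) (Pi.single j 1) := by
    funext s; exact clm_apply_eq_sum_s1 _ d
  rw [key]
  have h2 : HasDerivAt (fun s : ℝ => ∑ j, d j * fderiv ℝ F (x + s • d) (Pi.single j 1))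
      (∑ j, d j * fderiv ℝ (fun y => fderiv ℝ F y (Pi.single j 1)) (x + t • d) d) t := by
    apply HasDerivAt.fun_sum
    intro j _
    exact (hasDerivAt_line ((hG j).differentiable one_ne_zero) x d t).const_mul (d j)
  convert h2 using 1
  have h3 : ∀ j, fderiv ℝ (fun y => fderiv ℝ F y (Pi.single j 1)) (x + t • d) d
      = ∑ i, d i * hess F (x + t • d) i j := fun j => clm_apply_eq_sum_s1 _ d
  simp only [h3, dotProduct, mulVec, Finset.mul_sum]
  rw [Finset.sum_comm]
  congr 1; funext j; congr 1; funext i; ring_nf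


lemma hess_continuous {n : ℕ} {F : (Fin n → ℝ) → ℝ} (hF : ContDiff ℝ 2 F) (i j : Fin n) :
    Continuous (fun y => hess F y i j) := by
  have hG : ContDiff ℝ 1 (fun y => fderiv ℝ F y (Pi.single j 1)) :=
    (hF.fderiv_right (le_refl 2)).clm_apply contDiff_const
  have : Continuous (fderiv ℝ (fun y => fderiv ℝ F y (Pi.single j 1))) :=
    hG.continuous_fderiv one_ne_zero
  exact this.clm_apply continuous_const

lemma quad_continuous {n : ℕ} (H : Matrix (Fin n) (Fin n) ℝ) :
    Continuous (fun v : Fin n → ℝ => v ⬝ᵥ (H *ᵥ v)) := by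
  simp only [dotProduct, mulVec]
  fun_prop

lemma quad_smul {n : ℕ} (H : Matrix (Fin n) (Fin n) ℝ) (a : ℝ) (v : Fin n → ℝ) :
    (a • v) ⬝ᵥ (H *ᵥ (a • v)) = a^2 * (v ⬝ᵥ (H *ᵥ v)) := by
  rw [smul_dotProduct, mulVec_smul, dotProduct_smul]
  simp [smul_eq_mul]; ring

lemma quad_pos_near {n : ℕ} {F : (Fin n → ℝ) → ℝ} (hF : ContDiff ℝ 2 F)
    (x₀ : Fin n → ℝ) (h2 : ∀ v : Fin n → ℝ, v ≠ 0 → 0 < v ⬝ᵥ (hess F x₀ *ᵥ v)) :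
    ∃ r > 0, ∀ y ∈ ball x₀ r, ∀ v : Fin n → ℝ, 0 ≤ v ⬝ᵥ (hess F y *ᵥ v) := by
  rcases Nat.eq_zero_or_pos n with hn | hn
  · refine ⟨1, one_pos, fun y _ v => ?_⟩
    subst hn
    simp [dotProduct]
  -- sphere is nonempty and compact
  have hsne : (sphere (0 : Fin n → ℝ) 1).Nonempty := by
    refine ⟨Pi.single ⟨0, hn⟩ 1, ?_⟩
    rw [mem_sphere_iff_norm, sub_zero, Pi.norm_single, norm_one]
  obtain ⟨v₀, hv₀s, hmin⟩ := (isCompact_sphere (0 : Fin n → ℝ) 1).exists_isMinOn hsne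
    (quad_continuous (hess F x₀)).continuousOn
  set c : ℝ := v₀ ⬝ᵥ (hess F x₀ *ᵥ v₀) with hc
  have hv₀ : v₀ ≠ 0 := by
    intro h
    rw [mem_sphere_iff_norm, h] at hv₀s
    simp at hv₀s
  have hcpos : 0 < c := h2 v₀ hv₀
  -- homogeneity: c * ‖v‖^2 ≤ q v
  have hhom : ∀ v : Fin n → ℝ, c * ‖v‖^2 ≤ v ⬝ᵥ (hess F x₀ *ᵥ v) := by
    intro v
    rcases eq_or_ne v 0 with rfl | hv
    · simp
    · have hnv : (0:ℝ) < ‖v‖ := norm_pos_iff.mpr hv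
      have hu : (‖v‖⁻¹ • v) ∈ sphere (0 : Fin n → ℝ) 1 := by
        simp [mem_sphere_iff_norm, norm_smul, abs_of_pos (inv_pos.mpr hnv),
          inv_mul_cancel₀ hnv.ne']
      have := isMinOn_iff.mp hmin _ hu
      rw [quad_smul] at this
      have h3 : c * ‖v‖^2 ≤ (‖v‖⁻¹^2 * (v ⬝ᵥ (hess F x₀ *ᵥ v))) * ‖v‖^2 := by nlinarith
      calc c * ‖v‖^2 ≤ (‖v‖⁻¹^2 * (v ⬝ᵥ (hess F x₀ *ᵥ v))) * ‖v‖^2 := h3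
        _ = v ⬝ᵥ (hess F x₀ *ᵥ v) := by field_simp
  -- the entrywise error function
  have hecont : Continuous (fun y => ∑ i, ∑ j, |hess F y i j - hess F x₀ i j|) := by
    apply continuous_finset_sum _ (fun i _ => continuous_finset_sum _ (fun j _ => ?_))
    exact ((hess_continuous hF i j).sub continuous_const).abs
  have hev : ∀ᶠ y in nhds x₀, (∑ i, ∑ j, |hess F y i j - hess F x₀ i j|) < c := by
    have h0 : (∑ i, ∑ j, |hess F x₀ i j - hess F x₀ i j|) = 0 := by simp
    have := hecont.continuousAt (x := x₀)
    exact this.eventually_lt continuousAt_const (by rw [h0]; exact hcpos)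
  obtain ⟨r, hr, hball⟩ := Metric.eventually_nhds_iff_ball.mp hev
  refine ⟨r, hr, fun y hy v => ?_⟩
  have herr : |v ⬝ᵥ ((hess F y - hess F x₀) *ᵥ v)|
      ≤ (∑ i, ∑ j, |hess F y i j - hess F x₀ i j|) * ‖v‖^2 := by
    simp only [dotProduct, mulVec, Matrix.sub_apply, Finset.sum_mul]
    refine (Finset.abs_sum_le_sum_abs _ _).trans (Finset.sum_le_sum fun i _ => ?_)
    rw [abs_mul]
    calc |v i| * |∑ j, (hess F y i j - hess F x₀ i j) * v j|
        ≤ ‖v‖ * ∑ j, |hess F y i j - hess F x₀ i j| * ‖v‖ := by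
          apply mul_le_mul
          · exact (Real.norm_eq_abs (v i)) ▸ norm_le_pi_norm v i
          · refine (Finset.abs_sum_le_sum_abs _ _).trans (Finset.sum_le_sum fun j _ => ?_)
            rw [abs_mul]
            exact mul_le_mul_of_nonneg_left ((Real.norm_eq_abs (v j)) ▸ norm_le_pi_norm v j)
              (abs_nonneg _)
          · exact abs_nonneg _
          · exact norm_nonneg _
      _ = ∑ j, |hess F y i j - hess F x₀ i j| * ‖v‖^2 := by
          rw [Finset.mul_sum]; congr 1; funext j; ring
  have hsplit : v ⬝ᵥ (hess F y *ᵥ v)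
      = v ⬝ᵥ (hess F x₀ *ᵥ v) + v ⬝ᵥ ((hess F y - hess F x₀) *ᵥ v) := by
    rw [Matrix.sub_mulVec, dotProduct_sub]; ring
  have hey := le_of_lt (hball _ hy)
  have := hhom v
  have h5 : -((∑ i, ∑ j, |hess F y i j - hess F x₀ i j|) * ‖v‖^2)
      ≤ v ⬝ᵥ ((hess F y - hess F x₀) *ᵥ v) := neg_le_of_abs_le herr
  nlinarith [sq_nonneg ‖v‖, norm_nonneg v, hball _ hy]

lemma core_unconstrained {n : ℕ} {F : (Fin n → ℝ) → ℝ} (hF : ContDiff ℝ 2 F)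
    (x₀ : Fin n → ℝ) (h1 : fderiv ℝ F x₀ = 0)
    (h2 : ∀ v : Fin n → ℝ, v ≠ 0 → 0 < v ⬝ᵥ (hess F x₀ *ᵥ v)) :
    ∃ U ∈ nhds x₀, ∀ y ∈ U, F x₀ ≤ F y := by
  obtain ⟨r, hr, hq⟩ := quad_pos_near hF x₀ h2
  have hFd : Differentiable ℝ F := hF.differentiable two_ne_zero
  refine ⟨ball x₀ r, ball_mem_nhds _ hr, fun y hy => ?_⟩
  set d : Fin n → ℝ := y - x₀ with hd
  have hyd : x₀ + (1:ℝ) • d = y := by simp [hd]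
  have hmem : ∀ s : ℝ, |s| ≤ 1 → x₀ + s • d ∈ ball x₀ r := by
    intro s hs
    rw [mem_ball, dist_eq_norm]
    have : x₀ + s • d - x₀ = s • d := by ring_nf
    rw [this, norm_smul]
    have hdy : ‖d‖ < r := by
      rw [hd, ← dist_eq_norm']; exact mem_ball'.mp hy
    calc ‖s‖ * ‖d‖ ≤ 1 * ‖d‖ :=
          mul_le_mul_of_nonneg_right (by rwa [Real.norm_eq_abs]) (norm_nonneg _)
      _ = ‖d‖ := one_mul _
      _ < r := hdy
  rcases eq_or_ne d 0 with hd0 | hd0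
  · have : y = x₀ := by rw [← hyd, hd0]; simp
    rw [this]
  -- first MVT
  have hcont1 : ContinuousOn (fun s : ℝ => F (x₀ + s • d)) (Icc 0 1) :=
    (hF.continuous.comp (by fun_prop)).continuousOn
  have hderiv1 : ∀ s ∈ Ioo (0:ℝ) 1,
      HasDerivAt (fun s : ℝ => F (x₀ + s • d)) (fderiv ℝ F (x₀ + s • d) d) s :=
    fun s _ => hasDerivAt_line hFd x₀ d s
  obtain ⟨t, ht, hteq⟩ := exists_hasDerivAt_eq_slope (fun s : ℝ => F (x₀ + s • d))
    (fun s => fderiv ℝ F (x₀ + s • d) d) one_pos hcont1 hderiv1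
  -- second MVT on [0, t]
  have hcont2 : ContinuousOn (fun s : ℝ => fderiv ℝ F (x₀ + s • d) d) (Icc 0 t) := by
    have : Continuous (fun s : ℝ => fderiv ℝ F (x₀ + s • d) d) := by
      have hc : Continuous (fderiv ℝ F) := (hF.continuous_fderiv two_ne_zero)
      exact (hc.comp (by fun_prop)).clm_apply continuous_const
    exact this.continuousOn
  have hderiv2 : ∀ s ∈ Ioo (0:ℝ) t,
      HasDerivAt (fun s : ℝ => fderiv ℝ F (x₀ + s • d) d)
        (d ⬝ᵥ (hess F (x₀ + s • d) *ᵥ d)) s :=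
    fun s _ => hasDerivAt_line2 hF x₀ d s
  obtain ⟨u, hu, hueq⟩ := exists_hasDerivAt_eq_slope
    (fun s : ℝ => fderiv ℝ F (x₀ + s • d) d)
    (fun s => d ⬝ᵥ (hess F (x₀ + s • d) *ᵥ d)) ht.1 hcont2 hderiv2
  -- assemble
  have h00 : fderiv ℝ F (x₀ + (0:ℝ) • d) d = 0 := by
    rw [zero_smul, add_zero, h1]; rfl
  have hquad : 0 ≤ d ⬝ᵥ (hess F (x₀ + u • d) *ᵥ d) := by
    apply hq
    apply hmem
    rw [abs_of_pos hu.1]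
    exact le_of_lt (lt_of_lt_of_le hu.2 ht.2.le)
  have htpos : (0:ℝ) < t := ht.1
  rw [h00, sub_zero] at hueq
  have hft : fderiv ℝ F (x₀ + t • d) d = t * (d ⬝ᵥ (hess F (x₀ + u • d) *ᵥ d)) := by
    rw [sub_zero, eq_div_iff htpos.ne'] at hueq
    linarith [hueq]
  have hslope : fderiv ℝ F (x₀ + t • d) d = F (x₀ + (1:ℝ) • d) - F (x₀ + (0:ℝ) • d) := by
    rw [hteq]; simp
  have : 0 ≤ F (x₀ + (1:ℝ) • d) - F (x₀ + (0:ℝ) • d) := by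
    rw [← hslope, hft]
    exact mul_nonneg htpos.le hquad
  rw [hyd] at this
  simp at this
  linarith [this]

lemma dotProduct_self_nonneg' {k : ℕ} (w : Fin k → ℝ) : 0 ≤ w ⬝ᵥ w :=
  Finset.sum_nonneg fun i _ => mul_self_nonneg (w i)

lemma penalty_param {n m : ℕ} (H : Matrix (Fin n) (Fin n) ℝ) (J : Matrix (Fin m) (Fin n) ℝ)
    (hyp : ∀ v : Fin n → ℝ, J *ᵥ v = 0 → v ≠ 0 → 0 < v ⬝ᵥ (H *ᵥ v)) :
    ∃ ρ : ℝ, 0 < ρ ∧ ∀ v : Fin n → ℝ, v ≠ 0 →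
      0 < v ⬝ᵥ (H *ᵥ v) + ρ * ((J *ᵥ v) ⬝ᵥ (J *ᵥ v)) := by
  rcases Nat.eq_zero_or_pos n with hn | hn
  · refine ⟨1, one_pos, fun v hv => ?_⟩
    exfalso; apply hv
    subst hn
    ext i; exact absurd i.2 (by omega)
  by_contra hcon
  push_neg at hcon
  -- for each k, get a unit vector u k with q (u k) + (k+1) p (u k) ≤ 0
  have hstep : ∀ k : ℕ, ∃ u : Fin n → ℝ, ‖u‖ = 1 ∧
      u ⬝ᵥ (H *ᵥ u) + ((k:ℝ)+1) * ((J *ᵥ u) ⬝ᵥ (J *ᵥ u)) ≤ 0 := by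
    intro k
    obtain ⟨v, hv, hle⟩ := hcon ((k:ℝ)+1) (by positivity)
    have hnv : (0:ℝ) < ‖v‖ := norm_pos_iff.mpr hv
    refine ⟨‖v‖⁻¹ • v, by simp [norm_smul, abs_of_pos (inv_pos.mpr hnv),
      inv_mul_cancel₀ hnv.ne'], ?_⟩
    have hq : (‖v‖⁻¹ • v) ⬝ᵥ (H *ᵥ (‖v‖⁻¹ • v)) = ‖v‖⁻¹^2 * (v ⬝ᵥ (H *ᵥ v)) :=
      quad_smul H _ v
    have hp : (J *ᵥ (‖v‖⁻¹ • v)) ⬝ᵥ (J *ᵥ (‖v‖⁻¹ • v))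
        = ‖v‖⁻¹^2 * ((J *ᵥ v) ⬝ᵥ (J *ᵥ v)) := by
      rw [mulVec_smul, smul_dotProduct, dotProduct_smul]
      simp [smul_eq_mul]; ring
    rw [hq, hp]
    have h2 : ‖v‖⁻¹^2 * (v ⬝ᵥ (H *ᵥ v) + ((k:ℝ)+1) * ((J *ᵥ v) ⬝ᵥ (J *ᵥ v))) ≤ 0 :=
      mul_nonpos_of_nonneg_of_nonpos (by positivity) hle
    nlinarith [h2]
  choose u hu1 hu2 using hstep
  have husphere : ∀ k, u k ∈ sphere (0 : Fin n → ℝ) 1 := by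
    intro k; rw [mem_sphere_iff_norm, sub_zero]; exact hu1 k
  obtain ⟨w, hws, φ, hφmono, hφtend⟩ :=
    (isCompact_sphere (0 : Fin n → ℝ) 1).tendsto_subseq husphere
  set q : (Fin n → ℝ) → ℝ := fun v => v ⬝ᵥ (H *ᵥ v) with hqdef
  set p : (Fin n → ℝ) → ℝ := fun v => (J *ᵥ v) ⬝ᵥ (J *ᵥ v) with hpdef
  have hqcont : Continuous q := quad_continuous H
  have hpcont : Continuous p := by
    rw [hpdef]
    simp only [dotProduct, mulVec]
    fun_prop
  -- q (u k) ≤ 0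
  have hqle : ∀ k, q (u (φ k)) ≤ 0 := by
    intro k
    have := hu2 (φ k)
    have hpn : 0 ≤ p (u (φ k)) := dotProduct_self_nonneg' _
    nlinarith [this, hpn]
  have hqw : q w ≤ 0 :=
    le_of_tendsto ((hqcont.continuousAt.tendsto).comp hφtend) (Filter.Eventually.of_forall hqle)
  -- bound |q| on sphere
  obtain ⟨M, hM⟩ := ((isCompact_sphere (0 : Fin n → ℝ) 1).image hqcont).isBounded.subset_closedBall 0
  have hqbd : ∀ k, |q (u k)| ≤ M := by
    intro k
    have : q (u k) ∈ closedBall (0:ℝ) M := hM ⟨u k, husphere k, rfl⟩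
    rw [Real.closedBall_eq_Icc, Set.mem_Icc] at this
    rw [abs_le]; constructor <;> linarith [this.1, this.2]
  -- p (u (φ k)) ≤ M / (φ k + 1)
  have hple : ∀ k, p (u (φ k)) ≤ M / ((φ k : ℝ) + 1) := by
    intro k
    have h1 := hu2 (φ k)
    have h2 : -q (u (φ k)) ≤ M := by
      have := hqbd (φ k); rw [abs_le] at this; linarith [this.1]
    have hpos : (0:ℝ) < (φ k : ℝ) + 1 := by positivity
    rw [le_div_iff₀ hpos]
    nlinarith [h1, h2]
  have htend0 : Filter.Tendsto (fun k => M / ((φ k : ℝ) + 1)) Filter.atTop (nhds 0) := by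
    apply Filter.Tendsto.div_atTop tendsto_const_nhds
    apply Filter.tendsto_atTop_add_const_right
    exact Filter.Tendsto.comp tendsto_natCast_atTop_atTop hφmono.tendsto_atTop
  have hpw : p w ≤ 0 :=
    le_of_tendsto_of_tendsto' ((hpcont.continuousAt.tendsto).comp hφtend) htend0 hple
  have hpw0 : p w = 0 := le_antisymm hpw (dotProduct_self_nonneg' _)
  have hJw : J *ᵥ w = 0 := dotProduct_self_eq_zero.mp hpw0
  have hwne : w ≠ 0 := by
    intro h
    rw [mem_sphere_iff_norm, h] at hws
    simp at hws
  exact absurd hqw (not_le.mpr (hyp w hJw hwne))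

noncomputable def Lfun {n m : ℕ} (f : (Fin n → ℝ) → ℝ) (g : (Fin n → ℝ) → Fin m → ℝ)
    (lam : Fin m → ℝ) (ρ : ℝ) : (Fin n → ℝ) → ℝ :=
  fun y => f y - (∑ i, lam i * g y i) + ρ * ∑ i, g y i * g y i

section Lag
variable {n m : ℕ} {f : (Fin n → ℝ) → ℝ} {g : (Fin n → ℝ) → Fin m → ℝ}
  {lam : Fin m → ℝ} {ρ : ℝ}

lemma Lfun_contDiff (hf : ContDiff ℝ 2 f) (hg : ContDiff ℝ 2 g) :
    ContDiff ℝ 2 (Lfun f g lam ρ) := by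
  have hgi : ∀ i, ContDiff ℝ 2 (fun z => g z i) := fun i => (contDiff_pi.mp hg) i
  exact (hf.sub (ContDiff.sum fun i _ => contDiff_const.mul (hgi i))).add
    (contDiff_const.mul (ContDiff.sum fun i _ => (hgi i).mul (hgi i)))

lemma Lfun_hasFDerivAt (hf : ContDiff ℝ 2 f) (hg : ContDiff ℝ 2 g) (y : Fin n → ℝ) :
    HasFDerivAt (Lfun f g lam ρ)
      (fderiv ℝ f y - (∑ i, lam i • fderiv ℝ (fun z => g z i) y)
        + ρ • ∑ i, (2 * g y i) • fderiv ℝ (fun z => g z i) y) y := by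
  have hgi : ∀ i, ContDiff ℝ 2 (fun z => g z i) := fun i => (contDiff_pi.mp hg) i
  have hg' : ∀ i, HasFDerivAt (fun z => g z i) (fderiv ℝ (fun z => g z i) y) y :=
    fun i => (((hgi i).differentiable two_ne_zero) y).hasFDerivAt
  have hf' : HasFDerivAt f (fderiv ℝ f y) y := ((hf.differentiable two_ne_zero) y).hasFDerivAt
  have h1 : HasFDerivAt (fun z => ∑ i, lam i * g z i)
      (∑ i, lam i • fderiv ℝ (fun z => g z i) y) y :=
    HasFDerivAt.fun_sum (fun i _ => (hg' i).const_mul (lam i))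
  have h2 : HasFDerivAt (fun z => ∑ i, g z i * g z i)
      (∑ i, (2 * g y i) • fderiv ℝ (fun z => g z i) y) y := by
    apply HasFDerivAt.fun_sum
    intro i _
    have h := (hg' i).fun_mul (hg' i)
    rw [two_mul, add_smul]
    exact h
  exact (hf'.sub h1).add (h2.const_mul ρ)

lemma Lfun_fderiv (hf : ContDiff ℝ 2 f) (hg : ContDiff ℝ 2 g) (y : Fin n → ℝ) :
    fderiv ℝ (Lfun f g lam ρ) y
      = fderiv ℝ f y - (∑ i, lam i • fderiv ℝ (fun z => g z i) y)
        + ρ • ∑ i, (2 * g y i) • fderiv ℝ (fun z => g z i) y :=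
  (Lfun_hasFDerivAt hf hg y).fderiv

lemma Lfun_fderiv_apply (hf : ContDiff ℝ 2 f) (hg : ContDiff ℝ 2 g) (y v : Fin n → ℝ) :
    fderiv ℝ (Lfun f g lam ρ) y v
      = fderiv ℝ f y v - (∑ i, lam i * fderiv ℝ (fun z => g z i) y v)
        + ρ * ∑ i, (2 * g y i) * fderiv ℝ (fun z => g z i) y v := by
  rw [Lfun_fderiv hf hg y]
  simp [ContinuousLinearMap.sum_apply, smul_eq_mul]

lemma Lfun_fderiv_zero {xs : Fin n → ℝ} (hf : ContDiff ℝ 2 f) (hg : ContDiff ℝ 2 g)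
    (hgxs : g xs = 0) (hfo : grad f xs = (jac g xs)ᵀ *ᵥ lam) :
    fderiv ℝ (Lfun f g lam ρ) xs = 0 := by
  apply clm_ext_basis
  intro j
  rw [Lfun_fderiv_apply hf hg]
  have hg0 : ∀ i, g xs i = 0 := fun i => congrFun hgxs i
  have hfoj := congrFun hfo j
  have hgradj : grad f xs j = fderiv ℝ f xs (Pi.single j 1) := rfl
  have hmv : ((jac g xs)ᵀ *ᵥ lam) j = ∑ i, lam i * fderiv ℝ (fun z => g z i) xs (Pi.single j 1) := by
    simp only [mulVec, dotProduct, Matrix.transpose_apply]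
    exact Finset.sum_congr rfl fun i _ => by rw [mul_comm]; rfl
  rw [hgradj, hmv] at hfoj
  simp only [hg0, mul_zero, zero_mul, Finset.sum_const_zero]
  rw [hfoj]
  simp

lemma Lfun_hess {xs : Fin n → ℝ} (hf : ContDiff ℝ 2 f) (hg : ContDiff ℝ 2 g)
    (hgxs : g xs = 0) :
    hess (Lfun f g lam ρ) xs
      = (hess f xs - ∑ i, lam i • hess (fun y => g y i) xs)
        + (2 * ρ) • ((jac g xs)ᵀ * jac g xs) := by
  have hgi : ∀ i, ContDiff ℝ 2 (fun z => g z i) := fun i => (contDiff_pi.mp hg) i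
  have hg0 : ∀ i, g xs i = 0 := fun i => congrFun hgxs i
  ext i j
  -- rewrite the function y ↦ fderiv L y (e j)
  have hfun : (fun y => fderiv ℝ (Lfun f g lam ρ) y (Pi.single j 1))
      = fun y => (fderiv ℝ f y (Pi.single j 1)
          - ∑ i', lam i' * fderiv ℝ (fun z => g z i') y (Pi.single j 1))
        + ρ * ∑ i', (2 * g y i') * fderiv ℝ (fun z => g z i') y (Pi.single j 1) := by
    funext y
    rw [Lfun_fderiv_apply hf hg]
  -- differentiability of the building blocks at xs
  have hPc : ContDiff ℝ 1 (fun y => fderiv ℝ f y (Pi.single j 1)) :=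
    (hf.fderiv_right (le_refl 2)).clm_apply contDiff_const
  have hQc : ∀ i', ContDiff ℝ 1 (fun y => fderiv ℝ (fun z => g z i') y (Pi.single j 1)) :=
    fun i' => ((hgi i').fderiv_right (le_refl 2)).clm_apply contDiff_const
  have hP' : HasFDerivAt (fun y => fderiv ℝ f y (Pi.single j 1))
      (fderiv ℝ (fun y => fderiv ℝ f y (Pi.single j 1)) xs) xs :=
    ((hPc.differentiable one_ne_zero) xs).hasFDerivAt
  have hQ' : ∀ i', HasFDerivAt (fun y => fderiv ℝ (fun z => g z i') y (Pi.single j 1))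
      (fderiv ℝ (fun y => fderiv ℝ (fun z => g z i') y (Pi.single j 1)) xs) xs :=
    fun i' => (((hQc i').differentiable one_ne_zero) xs).hasFDerivAt
  have hg' : ∀ i', HasFDerivAt (fun z => g z i') (fderiv ℝ (fun z => g z i') xs) xs :=
    fun i' => (((hgi i').differentiable two_ne_zero) xs).hasFDerivAt
  -- derivative of the whole expression
  have hsum1 : HasFDerivAt
      (fun y => ∑ i', lam i' * fderiv ℝ (fun z => g z i') y (Pi.single j 1))
      (∑ i', lam i' • fderiv ℝ (fun y => fderiv ℝ (fun z => g z i') y (Pi.single j 1)) xs) xs :=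
    HasFDerivAt.fun_sum (fun i' _ => (hQ' i').const_mul (lam i'))
  have hsum2 : HasFDerivAt
      (fun y => ∑ i', (2 * g y i') * fderiv ℝ (fun z => g z i') y (Pi.single j 1))
      (∑ i', ((2 * g xs i') • fderiv ℝ (fun y => fderiv ℝ (fun z => g z i') y (Pi.single j 1)) xs
        + (fderiv ℝ (fun z => g z i') xs (Pi.single j 1)) • ((2:ℝ) • fderiv ℝ (fun z => g z i') xs))) xs := by
    apply HasFDerivAt.fun_sum
    intro i' _
    exact ((hg' i').const_mul 2).mul (hQ' i')
  have hwhole := ((hP'.fun_sub hsum1).fun_add (hsum2.const_mul ρ)).fderiv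
  have hentry : hess (Lfun f g lam ρ) xs i j
      = fderiv ℝ (fun y => fderiv ℝ (Lfun f g lam ρ) y (Pi.single j 1)) xs (Pi.single i 1) := rfl
  rw [hentry, hfun, hwhole]
  simp only [hg0, mul_zero, zero_smul, zero_add, ContinuousLinearMap.add_apply,
    ContinuousLinearMap.sub_apply, ContinuousLinearMap.smul_apply,
    ContinuousLinearMap.sum_apply, smul_eq_mul]
  have hrhs : ((hess f xs - ∑ i', lam i' • hess (fun y => g y i') xs)
      + (2 * ρ) • ((jac g xs)ᵀ * jac g xs)) i j
      = hess f xs i j - (∑ i', lam i' * hess (fun y => g y i') xs i j)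
        + (2 * ρ) * ∑ i', jac g xs i' i * jac g xs i' j := by
    simp [Matrix.add_apply, Matrix.sub_apply, Matrix.sum_apply, Matrix.smul_apply,
      Matrix.mul_apply, Matrix.transpose_apply, smul_eq_mul]
  rw [hrhs]
  have h1 : ∀ i', fderiv ℝ (fun y => fderiv ℝ (fun z => g z i') y (Pi.single j 1)) xs (Pi.single i 1)
      = hess (fun y => g y i') xs i j := fun i' => rfl
  have h2 : ∀ i', fderiv ℝ (fun z => g z i') xs (Pi.single j 1) = jac g xs i' j := fun i' => rfl
  have h3 : ∀ i', fderiv ℝ (fun z => g z i') xs (Pi.single i 1) = jac g xs i' i := fun i' => rfl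
  have h4 : fderiv ℝ (fun y => fderiv ℝ f y (Pi.single j 1)) xs (Pi.single i 1)
      = hess f xs i j := rfl
  simp only [h1, h2, h3, h4]
  rw [Finset.mul_sum, Finset.mul_sum]
  congr 1
  refine Finset.sum_congr rfl fun i' _ => ?_
  ring

end Lag

/-- second-order sufficient optimality conditions for an
equality-constrained local minimum. -/
theorem stmt_1 {n m : ℕ} (hm : 0 < m) (hmn : m ≤ n)
    (f : (Fin n → ℝ) → ℝ) (g : (Fin n → ℝ) → Fin m → ℝ)
    (hf : ContDiff ℝ 2 f) (hg : ContDiff ℝ 2 g)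
    (xs : Fin n → ℝ) (hgxs : g xs = 0)
    (hrank : (jac g xs).rank = m)
    (lam : Fin m → ℝ) (hfo : grad f xs = (jac g xs)ᵀ *ᵥ lam)
    (hso : ∀ v : Fin n → ℝ, jac g xs *ᵥ v = 0 → v ≠ 0 →
      0 < v ⬝ᵥ ((hess f xs - ∑ i, lam i • hess (fun y => g y i) xs) *ᵥ v)) :
    ∃ U ∈ nhds xs, ∀ y ∈ U, g y = 0 → f xs ≤ f y := by
  obtain ⟨ρ, hρ, hpen⟩ := penalty_param
    (hess f xs - ∑ i, lam i • hess (fun y => g y i) xs) (jac g xs)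
    (fun v hv hvne => hso v hv hvne)
  have hL := Lfun_contDiff (lam := lam) (ρ := ρ/2) hf hg
  have h0 := Lfun_fderiv_zero (ρ := ρ/2) hf hg hgxs hfo
  have hhess := Lfun_hess (lam := lam) (ρ := ρ/2) hf hg hgxs
  have hpos : ∀ v : Fin n → ℝ, v ≠ 0 →
      0 < v ⬝ᵥ (hess (Lfun f g lam (ρ/2)) xs *ᵥ v) := by
    intro v hv
    rw [hhess]
    have hr2 : 2 * (ρ/2) = ρ := by ring
    have hJJ : v ⬝ᵥ (((jac g xs)ᵀ * jac g xs) *ᵥ v)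
        = (jac g xs *ᵥ v) ⬝ᵥ (jac g xs *ᵥ v) := by
      rw [← Matrix.mulVec_mulVec, Matrix.dotProduct_mulVec, Matrix.vecMul_transpose]
    rw [hr2, Matrix.add_mulVec, dotProduct_add, Matrix.smul_mulVec, dotProduct_smul,
      hJJ, smul_eq_mul]
    exact hpen v hv
  obtain ⟨U, hU, hmin⟩ := core_unconstrained hL xs h0 hpos
  refine ⟨U, hU, fun y hy hgy => ?_⟩
  have h1 : Lfun f g lam (ρ/2) xs = f xs := by
    have h : ∀ i, g xs i = 0 := fun i => congrFun hgxs i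
    simp [Lfun, h]
  have h2 : Lfun f g lam (ρ/2) y = f y := by
    have h : ∀ i, g y i = 0 := fun i => congrFun hgy i
    simp [Lfun, h]
  rw [← h1, ← h2]
  exact hmin y hy
end

section
/- Let m ≤ n, let g : ℝⁿ → ℝᵐ be C² and let x ∈ ℝⁿ be such that the Jacobian Jg(x) has full rank m. On the open set where Jg has full rank define the matrix-valued map Π_g(y) = Iₙ − Jg(y)ᵀ (Jg(y) Jg(y)ᵀ)⁻¹ Jg(y) (the orthogonal projection onto Ker(Jg(y))). Then for every v ∈ Ker(Jg(x)), the directional derivative of Π_g at x in the direction v, applied to the vector v, equals −Jg(x)ᵀ (Jg(x) Jg(x)ᵀ)⁻¹ q(v), where q(v) ∈ ℝᵐ is the vector with components vᵀ ∇²gᵢ(x) v, i = 1,…,m. -/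
open Matrix Set Metric

section Aux
variable {E : Type*} [NormedAddCommGroup E] [NormedSpace ℝ E] {x : E}

theorem diffAt_matrix_det {k : Type*} [Fintype k] [DecidableEq k] {M : E → Matrix k k ℝ}
    (h : ∀ i j, DifferentiableAt ℝ (fun y => M y i j) x) :
    DifferentiableAt ℝ (fun y => (M y).det) x := by
  have e : (fun y => (M y).det)
      = fun y => ∑ σ : Equiv.Perm k, ((Equiv.Perm.sign σ : ℤ) : ℝ) * ∏ i, M y (σ i) i := by
    funext y; rw [Matrix.det_apply']
  rw [e]
  refine DifferentiableAt.fun_sum fun σ _ => DifferentiableAt.const_mul ?_ _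
  exact (HasFDerivAt.finset_prod (u := Finset.univ)
    (g := fun i y => M y (σ i) i) (fun i _ => (h (σ i) i).hasFDerivAt)).differentiableAt

theorem diffAt_matrix_adjugate {k : Type*} [Fintype k] [DecidableEq k] {M : E → Matrix k k ℝ}
    (h : ∀ i j, DifferentiableAt ℝ (fun y => M y i j) x) (i j : k) :
    DifferentiableAt ℝ (fun y => (M y).adjugate i j) x := by
  have e : (fun y => (M y).adjugate i j)
      = fun y => ((M y).updateRow j (Pi.single i 1)).det := by
    funext y; rw [Matrix.adjugate_apply]
  rw [e]
  refine diffAt_matrix_det fun a b => ?_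
  rcases eq_or_ne a j with rfl | hne
  · simp only [Matrix.updateRow_self]
    exact differentiableAt_const _
  · simp only [Matrix.updateRow_ne hne]
    exact h a b

theorem diffAt_matrix_inv {k : Type*} [Fintype k] [DecidableEq k] {M : E → Matrix k k ℝ}
    (h : ∀ i j, DifferentiableAt ℝ (fun y => M y i j) x)
    (hdet : (M x).det ≠ 0) (i j : k) :
    DifferentiableAt ℝ (fun y => (M y)⁻¹ i j) x := by
  have e : (fun y => (M y)⁻¹ i j)
      = fun y => ((M y).det)⁻¹ * (M y).adjugate i j := by
    funext y
    rw [Matrix.inv_def, Matrix.smul_apply, Ring.inverse_eq_inv', smul_eq_mul]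
  rw [e]
  exact ((diffAt_matrix_det h).inv hdet).mul (diffAt_matrix_adjugate h i j)

theorem diffAt_matrix_mul {a b c : Type*} [Fintype a] [Fintype b] [Fintype c]
    {P : E → Matrix a b ℝ} {Q : E → Matrix b c ℝ}
    (hP : ∀ i j, DifferentiableAt ℝ (fun y => P y i j) x)
    (hQ : ∀ i j, DifferentiableAt ℝ (fun y => Q y i j) x)
    (i : a) (j : c) :
    DifferentiableAt ℝ (fun y => (P y * Q y) i j) x := by
  simp only [Matrix.mul_apply]
  exact DifferentiableAt.fun_sum fun p _ => (hP i p).mul (hQ p j)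

theorem fderiv_matrix_mul {a b c : Type*} [Fintype a] [Fintype b] [Fintype c]
    {P : E → Matrix a b ℝ} {Q : E → Matrix b c ℝ}
    (hP : ∀ i j, DifferentiableAt ℝ (fun y => P y i j) x)
    (hQ : ∀ i j, DifferentiableAt ℝ (fun y => Q y i j) x)
    (v : E) (i : a) (j : c) :
    fderiv ℝ (fun y => (P y * Q y) i j) x v
      = ∑ p, (fderiv ℝ (fun y => P y i p) x v * Q x p j
          + P x i p * fderiv ℝ (fun y => Q y p j) x v) := by
  have e : (fun y => (P y * Q y) i j) = fun y => ∑ p, P y i p * Q y p j := by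
    funext y; rw [Matrix.mul_apply]
  rw [e, fderiv_fun_sum (A := fun p y => P y i p * Q y p j) fun p _ => (hP i p).mul (hQ p j)]
  rw [ContinuousLinearMap.sum_apply]
  refine Finset.sum_congr rfl fun p _ => ?_
  rw [fderiv_fun_mul (hP i p) (hQ p j)]
  simp [ContinuousLinearMap.add_apply, ContinuousLinearMap.smul_apply, smul_eq_mul]
  ring

end Aux

/-- the derivative of the field of orthogonal projections onto
Ker(Jg(y)) (second fundamental form of the constraint submanifold). -/
theorem stmt_5 {n m : ℕ} (hmn : m ≤ n)
    (g : (Fin n → ℝ) → Fin m → ℝ) (hg : ContDiff ℝ 2 g)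
    (x : Fin n → ℝ) (hrank : (jac g x).rank = m)
    (Pig : (Fin n → ℝ) → Fin n → Fin n → ℝ)
    (hPig : ∀ y : Fin n → ℝ, (jac g y).rank = m →
      Pig y = Matrix.of.symm
        ((1 : Matrix (Fin n) (Fin n) ℝ) -
          (jac g y)ᵀ * (jac g y * (jac g y)ᵀ)⁻¹ * jac g y))
    (v : Fin n → ℝ) (hv : jac g x *ᵥ v = 0) :
    Matrix.of (fderiv ℝ Pig x v) *ᵥ v =
      -((jac g x)ᵀ *ᵥ ((jac g x * (jac g x)ᵀ)⁻¹ *ᵥ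
          fun i => v ⬝ᵥ ((hess (fun y => g y i) x) *ᵥ v))) := by
  classical
  set A : (Fin n → ℝ) → Matrix (Fin m) (Fin n) ℝ := jac g with hAdef
  have hgi : ∀ i, ContDiff ℝ 2 (fun z => g z i) := fun i =>
    (ContinuousLinearMap.proj i : ((Fin m) → ℝ) →L[ℝ] ℝ).contDiff.comp hg
  have hD : ∀ i, ContDiff ℝ 1 (fun y => fderiv ℝ (fun z => g z i) y) := fun i =>
    (hgi i).fderiv_right (by norm_num)
  have hAe : ∀ (i : Fin m) (j : Fin n), DifferentiableAt ℝ (fun z => A z i j) x := by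
    intro i j
    have e : (fun z => A z i j) = fun z => (fderiv ℝ (fun w => g w i) z) (Pi.single j 1) := by
      funext z; rw [hAdef]; rfl
    rw [e]
    exact (((hD i).clm_apply contDiff_const).differentiable one_ne_zero) x
  have hATe : ∀ (i : Fin n) (j : Fin m), DifferentiableAt ℝ (fun z => (A z)ᵀ i j) x :=
    fun i j => hAe j i
  set S : (Fin n → ℝ) → Matrix (Fin m) (Fin m) ℝ := fun y => A y * (A y)ᵀ with hSdef
  have hSe : ∀ i j, DifferentiableAt ℝ (fun y => S y i j) x :=
    fun i j => diffAt_matrix_mul hAe hATe i j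
  have hdetx : (S x).det ≠ 0 := by
    have hrankS : (S x).rank = m := by
      rw [hSdef]; rw [Matrix.rank_self_mul_transpose]; exact hrank
    have hsurj : Function.Surjective ((S x).mulVec) := by
      have htop : LinearMap.range (S x).mulVecLin = ⊤ := by
        apply Submodule.eq_top_of_finrank_eq
        rw [Module.finrank_fintype_fun_eq_card, Fintype.card_fin]
        exact hrankS
      intro w
      obtain ⟨u, hu⟩ := (LinearMap.range_eq_top).1 htop w
      exact ⟨u, hu⟩
    have hU : IsUnit (S x) := Matrix.mulVec_surjective_iff_isUnit.1 hsurj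
    exact fun hc => by
      simp [Matrix.isUnit_iff_isUnit_det, hc, isUnit_iff_ne_zero] at hU
  have hdet_cont : ContinuousAt (fun y => (S y).det) x := (diffAt_matrix_det hSe).continuousAt
  have hev : ∀ᶠ y in nhds x, (S y).det ≠ 0 := hdet_cont.eventually_ne hdetx
  have hrank_ev : ∀ᶠ y in nhds x, (A y).rank = m := by
    filter_upwards [hev] with y hy
    have hU : IsUnit (S y) := (Matrix.isUnit_iff_isUnit_det _).2 (isUnit_iff_ne_zero.2 hy)
    have h1 : (S y).rank = m := by rw [Matrix.rank_of_isUnit _ hU, Fintype.card_fin]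
    have h2 : (A y).rank ≤ m := by
      have := Matrix.rank_le_card_height (A y); rwa [Fintype.card_fin] at this
    have h3 : m ≤ (A y).rank := by
      conv_lhs => rw [← h1]
      exact Matrix.rank_mul_le_left (A y) ((A y)ᵀ)
    omega
  -- directional derivative of A entries
  have hBval : ∀ (p : Fin m) (j : Fin n),
      fderiv ℝ (fun z => A z p j) x v = ∑ k, v k * hess (fun z => g z p) x k j := by
    intro p j
    have hv' : v = ∑ k, v k • (Pi.single k 1 : Fin n → ℝ) := by
      funext l
      rw [Finset.sum_apply]
      simp [Pi.single_apply]
    conv_lhs => rw [hv']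
    rw [map_sum]
    refine Finset.sum_congr rfl fun k _ => ?_
    rw [_root_.map_smul, smul_eq_mul]
    congr 1
  -- M entries
  set T : (Fin n → ℝ) → Matrix (Fin m) (Fin m) ℝ := fun y => (S y)⁻¹ with hTdef
  set P : (Fin n → ℝ) → Matrix (Fin n) (Fin m) ℝ := fun y => (A y)ᵀ * T y with hPdef
  set M : (Fin n → ℝ) → Matrix (Fin n) (Fin n) ℝ := fun y => P y * A y with hMdef
  have hTe : ∀ i j, DifferentiableAt ℝ (fun y => T y i j) x := fun i j =>
    diffAt_matrix_inv hSe hdetx i j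
  have hPe : ∀ i j, DifferentiableAt ℝ (fun y => P y i j) x := fun i j =>
    diffAt_matrix_mul hATe hTe i j
  have hMe : ∀ i j, DifferentiableAt ℝ (fun y => M y i j) x := fun i j =>
    diffAt_matrix_mul hPe hAe i j
  -- Pig entries eventually equal 1 - M
  have hPigM : ∀ i j, (fun y => Pig y i j)
      =ᶠ[nhds x] fun y => (1 : Matrix (Fin n) (Fin n) ℝ) i j - M y i j := by
    intro i j
    filter_upwards [hrank_ev] with y hy
    rw [hPig y hy]
    show ((1 : Matrix (Fin n) (Fin n) ℝ) - (A y)ᵀ * (S y)⁻¹ * A y) i j = _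
    rw [Matrix.sub_apply]
  have hPige : ∀ i j, DifferentiableAt ℝ (fun y => Pig y i j) x := fun i j =>
    ((differentiableAt_const _).sub (hMe i j)).congr_of_eventuallyEq (hPigM i j)
  -- entries of fderiv Pig x v
  have hfd : ∀ i j, fderiv ℝ Pig x v i j = -(fderiv ℝ (fun y => M y i j) x v) := by
    intro i j
    have h1 : fderiv ℝ Pig x = ContinuousLinearMap.pi
        (fun i => fderiv ℝ (fun y => Pig y i) x) :=
      fderiv_pi (fun i => differentiableAt_pi.2 fun j => hPige i j)
    rw [h1, ContinuousLinearMap.pi_apply]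
    have h2 : fderiv ℝ (fun y => Pig y i) x = ContinuousLinearMap.pi
        (fun j => fderiv ℝ (fun y => Pig y i j) x) :=
      fderiv_pi (fun j => hPige i j)
    rw [h2, ContinuousLinearMap.pi_apply]
    rw [(hPigM i j).fderiv_eq]
    rw [fderiv_fun_sub (differentiableAt_const _) (hMe i j)]
    simp
  -- value of fderiv M entries applied and contracted with v
  have hv0 : ∀ p, ∑ j, A x p j * v j = 0 := by
    intro p
    have := congrFun hv p
    simpa [Matrix.mulVec, dotProduct] using this
  have hkey : ∀ i, ∑ j, fderiv ℝ (fun y => M y i j) x v * v j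
      = ∑ p, P x i p * (v ⬝ᵥ (hess (fun z => g z p) x *ᵥ v)) := by
    intro i
    have e1 : ∀ j, fderiv ℝ (fun y => M y i j) x v
        = ∑ p, (fderiv ℝ (fun y => P y i p) x v * A x p j
            + P x i p * fderiv ℝ (fun y => A y p j) x v) := by
      intro j
      have := fderiv_matrix_mul hPe hAe v i j
      simpa [hMdef] using this
    calc ∑ j, fderiv ℝ (fun y => M y i j) x v * v j
        = ∑ j, ∑ p, (fderiv ℝ (fun y => P y i p) x v * (A x p j * v j)
            + P x i p * (fderiv ℝ (fun y => A y p j) x v * v j)) := by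
          refine Finset.sum_congr rfl fun j _ => ?_
          rw [e1 j, Finset.sum_mul]
          refine Finset.sum_congr rfl fun p _ => ?_
          ring
      _ = ∑ p, ∑ j, (fderiv ℝ (fun y => P y i p) x v * (A x p j * v j)
            + P x i p * (fderiv ℝ (fun y => A y p j) x v * v j)) := Finset.sum_comm
      _ = ∑ p, (fderiv ℝ (fun y => P y i p) x v * ∑ j, A x p j * v j
            + P x i p * ∑ j, fderiv ℝ (fun y => A y p j) x v * v j) := by
          refine Finset.sum_congr rfl fun p _ => ?_
          rw [Finset.sum_add_distrib, ← Finset.mul_sum, ← Finset.mul_sum]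
      _ = ∑ p, P x i p * (v ⬝ᵥ (hess (fun z => g z p) x *ᵥ v)) := by
          refine Finset.sum_congr rfl fun p _ => ?_
          rw [hv0 p, mul_zero, zero_add]
          congr 1
          calc ∑ j, fderiv ℝ (fun y => A y p j) x v * v j
              = ∑ j, (∑ k, v k * hess (fun z => g z p) x k j) * v j := by
                refine Finset.sum_congr rfl fun j _ => ?_
                rw [hBval p j]
            _ = ∑ j, ∑ k, v k * (hess (fun z => g z p) x k j * v j) := by
                refine Finset.sum_congr rfl fun j _ => ?_
                rw [Finset.sum_mul]
                exact Finset.sum_congr rfl fun k _ => by ring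
            _ = ∑ k, v k * ∑ j, hess (fun z => g z p) x k j * v j := by
                rw [Finset.sum_comm]
                exact Finset.sum_congr rfl fun k _ => by rw [← Finset.mul_sum]
            _ = v ⬝ᵥ (hess (fun z => g z p) x *ᵥ v) := by
                simp [dotProduct, Matrix.mulVec]
  funext i
  have hL : (Matrix.of (fderiv ℝ Pig x v) *ᵥ v) i
      = -(∑ p, P x i p * (v ⬝ᵥ (hess (fun z => g z p) x *ᵥ v))) := by
    rw [← hkey i]
    simp only [Matrix.mulVec, dotProduct, Matrix.of_apply]
    rw [← Finset.sum_neg_distrib]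
    refine Finset.sum_congr rfl fun j _ => ?_
    rw [hfd i j]
    ring
  rw [hL]
  have hR : ((A x)ᵀ *ᵥ ((S x)⁻¹ *ᵥ fun p => v ⬝ᵥ (hess (fun z => g z p) x *ᵥ v))) i
      = ∑ p, P x i p * (v ⬝ᵥ (hess (fun z => g z p) x *ᵥ v)) := by
    rw [Matrix.mulVec_mulVec]
    simp only [Matrix.mulVec, dotProduct, hPdef, hTdef]
  rw [Pi.neg_apply, hR]
end

section
/- Let m ≤ n, let g : ℝⁿ → ℝᵐ be C² and let x ∈ ℝⁿ be such that Jg(x) has full rank m. Define Π_g(y) = Iₙ − Jg(y)ᵀ (Jg(y) Jg(y)ᵀ)⁻¹ Jg(y) on the open set where Jg has full rank. Then for all u, v ∈ Ker(Jg(x)): (1) the vector (DΠ_g(x)[v]) u is orthogonal to Ker(Jg(x)), i.e. Π_g(x) (DΠ_g(x)[v]) u = 0; and (2) (DΠ_g(x)[v]) u = (DΠ_g(x)[u]) v, where DΠ_g(x)[v] denotes the Fréchet derivative of the matrix-valued map Π_g at x evaluated at v. -/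
open Matrix Set Metric

section Aux

variable {E : Type*} [NormedAddCommGroup E] [NormedSpace ℝ E] {x : E}

lemma entry_diff {a b : ℕ} {F : E → Fin a → Fin b → ℝ} (hF : DifferentiableAt ℝ F x)
    (i : Fin a) (j : Fin b) : DifferentiableAt ℝ (fun y => F y i j) x :=
  differentiableAt_pi.1 (differentiableAt_pi.1 hF i) j

lemma entry_fderiv {a b : ℕ} {F : E → Fin a → Fin b → ℝ} (hF : DifferentiableAt ℝ F x)
    (i : Fin a) (j : Fin b) (w : E) :
    fderiv ℝ (fun y => F y i j) x w = fderiv ℝ F x w i j := by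
  have h1 := hasFDerivAt_pi'.1 hF.hasFDerivAt i
  have h2 := hasFDerivAt_pi'.1 h1 j
  rw [h2.fderiv]
  rfl

lemma matmul_diff {a b c : ℕ} {F : E → Fin a → Fin b → ℝ} {G : E → Fin b → Fin c → ℝ}
    (hF : DifferentiableAt ℝ F x) (hG : DifferentiableAt ℝ G x) :
    DifferentiableAt ℝ
      (fun y => Matrix.of.symm (Matrix.of (F y) * Matrix.of (G y) : Matrix (Fin a) (Fin c) ℝ)) x := by
  refine differentiableAt_pi.2 fun i => differentiableAt_pi.2 fun j => ?_
  simp only [Matrix.of_symm_apply, Matrix.mul_apply]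
  exact DifferentiableAt.fun_sum fun k _ => (entry_diff hF i k).mul (entry_diff hG k j)

lemma matmul_fderiv {a b c : ℕ} {F : E → Fin a → Fin b → ℝ} {G : E → Fin b → Fin c → ℝ}
    (hF : DifferentiableAt ℝ F x) (hG : DifferentiableAt ℝ G x) (w : E) :
    Matrix.of (fderiv ℝ
      (fun y => Matrix.of.symm (Matrix.of (F y) * Matrix.of (G y) : Matrix (Fin a) (Fin c) ℝ)) x w)
      = Matrix.of (fderiv ℝ F x w) * Matrix.of (G x)
        + Matrix.of (F x) * Matrix.of (fderiv ℝ G x w) := by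
  ext i j
  have hFG := matmul_diff hF hG
  rw [Matrix.of_apply, ← entry_fderiv hFG i j w]
  have h1 : (fun y => Matrix.of.symm
      (Matrix.of (F y) * Matrix.of (G y) : Matrix (Fin a) (Fin c) ℝ) i j)
      = fun y => ∑ k, F y i k * G y k j := by
    funext y; simp [Matrix.mul_apply]
  rw [h1, fderiv_fun_sum (A := fun k y => F y i k * G y k j) (fun k _ => (entry_diff hF i k).mul (entry_diff hG k j))]
  simp only [ContinuousLinearMap.coe_sum', Finset.sum_apply]
  have h2 : ∀ k, fderiv ℝ (fun y => F y i k * G y k j) x w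
      = F x i k * fderiv ℝ G x w k j + G x k j * fderiv ℝ F x w i k := by
    intro k
    rw [fderiv_fun_mul (entry_diff hF i k) (entry_diff hG k j)]
    simp [entry_fderiv hF i k w, entry_fderiv hG k j w]
  simp only [h2]
  simp only [Matrix.add_apply, Matrix.mul_apply, Matrix.of_apply]
  rw [Finset.sum_add_distrib, add_comm]
  congr 1
  exact Finset.sum_congr rfl fun k _ => mul_comm _ _
end Aux


section Aux

variable {E : Type*} [NormedAddCommGroup E] [NormedSpace ℝ E] {x : E}

lemma det_differentiable {k : ℕ} :
    Differentiable ℝ (fun M : Fin k → Fin k → ℝ => (Matrix.of M).det) := by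
  classical
  have h : (fun M : Fin k → Fin k → ℝ => (Matrix.of M).det)
      = fun M => ∑ σ : Equiv.Perm (Fin k), (((Equiv.Perm.sign σ : ℤ) : ℝ)) * ∏ i, M (σ i) i := by
    funext M
    rw [Matrix.det_apply']
    rfl
  rw [h]
  refine Differentiable.fun_sum fun σ _ => Differentiable.const_mul ?_ _
  intro M
  refine (HasFDerivAt.finset_prod (u := Finset.univ)
    (g := fun i (N : Fin k → Fin k → ℝ) => N (σ i) i)
    (g' := fun i => (ContinuousLinearMap.proj (R := ℝ) (φ := fun _ : Fin k => ℝ) i).comp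
      (ContinuousLinearMap.proj (R := ℝ) (φ := fun _ : Fin k => Fin k → ℝ) (σ i))) ?_).differentiableAt
  intro i _
  exact ((ContinuousLinearMap.proj (R := ℝ) (φ := fun _ : Fin k => ℝ) i).comp
    (ContinuousLinearMap.proj (R := ℝ) (φ := fun _ : Fin k => Fin k → ℝ) (σ i))).hasFDerivAt

lemma adj_differentiable {k : ℕ} :
    Differentiable ℝ (fun M : Fin k → Fin k → ℝ =>
      Matrix.of.symm (Matrix.adjugate (Matrix.of M))) := by
  classical
  refine differentiable_pi''  fun i => differentiable_pi'' fun j => ?_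
  have h : (fun M : Fin k → Fin k → ℝ => Matrix.of.symm (Matrix.adjugate (Matrix.of M)) i j)
      = fun M => (Matrix.of (fun a b =>
          if a = j then (Pi.single i 1 : Fin k → ℝ) b else M a b)).det := by
    funext M
    show Matrix.adjugate (Matrix.of M) i j = _
    rw [Matrix.adjugate_apply]
    congr 1
    ext a b
    rw [Matrix.updateRow_apply]
    simp
  rw [h]
  have hinner : Differentiable ℝ (fun M : Fin k → Fin k → ℝ => (fun a b =>
      if a = j then (Pi.single i 1 : Fin k → ℝ) b else M a b : Fin k → Fin k → ℝ)) := by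
    refine differentiable_pi'' fun a => differentiable_pi'' fun b => ?_
    by_cases haj : a = j
    · simp only [haj, if_true]
      exact differentiable_const _
    · simp only [haj, if_false]
      exact (differentiable_apply b).comp (differentiable_apply a : Differentiable ℝ (fun M : Fin k → Fin k → ℝ => M a))
  exact det_differentiable.comp hinner

end Aux



namespace Stmt6Aux

noncomputable def Af {n m : ℕ} (g : (Fin n → ℝ) → Fin m → ℝ) :
    (Fin n → ℝ) → Fin m → Fin n → ℝ :=
  fun y i j => fderiv ℝ g y (Pi.single j 1) i

noncomputable def ATf {n m : ℕ} (g : (Fin n → ℝ) → Fin m → ℝ) :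
    (Fin n → ℝ) → Fin n → Fin m → ℝ :=
  fun y i j => Af g y j i

noncomputable def Bf {n m : ℕ} (g : (Fin n → ℝ) → Fin m → ℝ) :
    (Fin n → ℝ) → Fin m → Fin m → ℝ :=
  fun y => Matrix.of.symm (Matrix.of (Af g y) * Matrix.of (ATf g y))

noncomputable def detB {n m : ℕ} (g : (Fin n → ℝ) → Fin m → ℝ) : (Fin n → ℝ) → ℝ :=
  fun y => (Matrix.of (Bf g y)).det

noncomputable def Cf {n m : ℕ} (g : (Fin n → ℝ) → Fin m → ℝ) :
    (Fin n → ℝ) → Fin m → Fin m → ℝ :=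
  fun y => (detB g y)⁻¹ • Matrix.of.symm (Matrix.adjugate (Matrix.of (Bf g y)))

noncomputable def ATCf {n m : ℕ} (g : (Fin n → ℝ) → Fin m → ℝ) :
    (Fin n → ℝ) → Fin n → Fin m → ℝ :=
  fun y => Matrix.of.symm (Matrix.of (ATf g y) * Matrix.of (Cf g y))

noncomputable def Sf {n m : ℕ} (g : (Fin n → ℝ) → Fin m → ℝ) :
    (Fin n → ℝ) → Fin n → Fin n → ℝ :=
  fun y => Matrix.of.symm (Matrix.of (ATCf g y) * Matrix.of (Af g y))

noncomputable def Qf {n m : ℕ} (g : (Fin n → ℝ) → Fin m → ℝ) :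
    (Fin n → ℝ) → Fin n → Fin n → ℝ :=
  fun y => Matrix.of.symm ((1 : Matrix (Fin n) (Fin n) ℝ) - Matrix.of (Sf g y))

lemma jac_eq {n m : ℕ} {g : (Fin n → ℝ) → Fin m → ℝ} (hgd : Differentiable ℝ g)
    (y : Fin n → ℝ) : jac g y = Matrix.of (Af g y) := by
  ext i j
  show fderiv ℝ (fun z => g z i) y (Pi.single j 1) = fderiv ℝ g y (Pi.single j 1) i
  rw [(hasFDerivAt_pi'.1 (hgd y).hasFDerivAt i).fderiv]
  rfl

end Stmt6Aux

open Stmt6Aux in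
/-- the second fundamental form (u,v) ↦ (DΠ_g(x)[v])u of the
constraint submanifold takes values orthogonal to the tangent space and is
symmetric. -/
theorem stmt_6 {n m : ℕ} (hmn : m ≤ n)
    (g : (Fin n → ℝ) → Fin m → ℝ) (hg : ContDiff ℝ 2 g)
    (x : Fin n → ℝ) (hrank : (jac g x).rank = m)
    (Pig : (Fin n → ℝ) → Fin n → Fin n → ℝ)
    (hPig : ∀ y : Fin n → ℝ, (jac g y).rank = m →
      Pig y = Matrix.of.symm
        ((1 : Matrix (Fin n) (Fin n) ℝ) -
          (jac g y)ᵀ * (jac g y * (jac g y)ᵀ)⁻¹ * jac g y))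
    (u v : Fin n → ℝ) (hu : jac g x *ᵥ u = 0) (hv : jac g x *ᵥ v = 0) :
    Matrix.of (Pig x) *ᵥ (Matrix.of (fderiv ℝ Pig x v) *ᵥ u) = 0 ∧
    Matrix.of (fderiv ℝ Pig x v) *ᵥ u = Matrix.of (fderiv ℝ Pig x u) *ᵥ v := by
  classical
  have hgd : Differentiable ℝ g := hg.differentiable (by norm_num)
  have h1 : ContDiff ℝ 1 (fderiv ℝ g) := hg.fderiv_right (by norm_num)
  set D2 := fderiv ℝ (fderiv ℝ g) x with hD2def
  have hD2 : HasFDerivAt (fderiv ℝ g) D2 x := (h1.differentiable one_ne_zero x).hasFDerivAt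
  -- differentiability of the matrix of first derivatives
  have hAentry : ∀ (i : Fin m) (j : Fin n), HasFDerivAt (fun y => Af g y i j)
      (((ContinuousLinearMap.proj (R := ℝ) (φ := fun _ : Fin m => ℝ) i).comp
        (ContinuousLinearMap.apply ℝ (Fin m → ℝ) (Pi.single j 1))).comp D2) x := by
    intro i j
    exact (((ContinuousLinearMap.proj (R := ℝ) (φ := fun _ : Fin m => ℝ) i).comp
        (ContinuousLinearMap.apply ℝ (Fin m → ℝ) (Pi.single j 1))).hasFDerivAt).comp x hD2
  have hAd : DifferentiableAt ℝ (Af g) x :=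
    differentiableAt_pi.2 fun i => differentiableAt_pi.2 fun j => (hAentry i j).differentiableAt
  have hA'app : ∀ (w : Fin n → ℝ) (i : Fin m) (j : Fin n),
      fderiv ℝ (Af g) x w i j = D2 w (Pi.single j 1) i := by
    intro w i j
    rw [← entry_fderiv hAd i j w, (hAentry i j).fderiv]
    rfl
  have hATd : DifferentiableAt ℝ (ATf g) x :=
    differentiableAt_pi.2 fun i => differentiableAt_pi.2 fun j => entry_diff hAd j i
  -- differentiability chain
  have hBd : DifferentiableAt ℝ (Bf g) x := matmul_diff hAd hATd
  have hdetBd : DifferentiableAt ℝ (detB g) x := by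
    rw [show detB g = (fun M : Fin m → Fin m → ℝ => (Matrix.of M).det) ∘ (Bf g) from rfl]
    exact DifferentiableAt.comp x (det_differentiable _) hBd
  have hadjd : DifferentiableAt ℝ
      (fun y => Matrix.of.symm (Matrix.adjugate (Matrix.of (Bf g y)))) x := by
    rw [show (fun y => Matrix.of.symm (Matrix.adjugate (Matrix.of (Bf g y))))
      = (fun M : Fin m → Fin m → ℝ => Matrix.of.symm (Matrix.adjugate (Matrix.of M))) ∘ (Bf g)
      from rfl]
    exact DifferentiableAt.comp x (adj_differentiable _) hBd
  -- nonvanishing of detB at x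
  have hBB : Matrix.of (Bf g x) = jac g x * (jac g x)ᵀ := by
    rw [jac_eq hgd]; rfl
  have hrB : (Matrix.of (Bf g x)).rank = m := by
    rw [hBB, Matrix.rank_self_mul_transpose, hrank]
  have hsurj : Function.Surjective (Matrix.of (Bf g x)).mulVec := by
    have htop : LinearMap.range (Matrix.of (Bf g x)).mulVecLin = ⊤ := by
      apply Submodule.eq_top_of_finrank_eq
      rw [Module.finrank_fin_fun]
      exact hrB
    intro y
    obtain ⟨w, hw⟩ := LinearMap.range_eq_top.1 htop y
    exact ⟨w, by rwa [Matrix.mulVecLin_apply] at hw⟩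
  have hBunit : IsUnit (Matrix.of (Bf g x)) := Matrix.mulVec_surjective_iff_isUnit.1 hsurj
  have hdetx : detB g x ≠ 0 :=
    isUnit_iff_ne_zero.1 ((Matrix.isUnit_iff_isUnit_det _).1 hBunit)
  -- rest of the chain
  have hCd : DifferentiableAt ℝ (Cf g) x := (hdetBd.inv hdetx).smul hadjd
  have hATCd : DifferentiableAt ℝ (ATCf g) x := matmul_diff hATd hCd
  have hSd : DifferentiableAt ℝ (Sf g) x := matmul_diff hATCd hAd
  -- eventual equality of Pig and Qf
  have hev : ∀ᶠ y in nhds x, detB g y ≠ 0 := hdetBd.continuousAt.eventually_ne hdetx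
  have hPQ : Pig =ᶠ[nhds x] Qf g := by
    refine hev.mono fun y hy => ?_
    have hBBy : Matrix.of (Bf g y) = jac g y * (jac g y)ᵀ := by
      rw [jac_eq hgd]; rfl
    have hr : (jac g y).rank = m := by
      have hBun : IsUnit (Matrix.of (Bf g y)) :=
        (Matrix.isUnit_iff_isUnit_det _).2 (isUnit_iff_ne_zero.2 hy)
      have h' : (Matrix.of (Bf g y)).rank = m := by
        rw [Matrix.rank_of_isUnit _ hBun, Fintype.card_fin]
      rwa [hBBy, Matrix.rank_self_mul_transpose] at h'
    have hinv : (jac g y * (jac g y)ᵀ)⁻¹ = Matrix.of (Cf g y) := by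
      rw [← hBBy, Matrix.inv_def, Ring.inverse_eq_inv]
      rfl
    rw [hPig y hr, hinv, jac_eq hgd y]
    rfl
  have hfd : fderiv ℝ Pig x = fderiv ℝ (Qf g) x := hPQ.fderiv_eq
  have hPx : Pig x = Qf g x := hPQ.eq_of_nhds
  -- derivative formulas
  have hSapp : ∀ w, Matrix.of (fderiv ℝ (Sf g) x w)
      = Matrix.of (fderiv ℝ (ATCf g) x w) * Matrix.of (Af g x)
        + Matrix.of (ATCf g x) * Matrix.of (fderiv ℝ (Af g) x w) :=
    fun w => matmul_fderiv hATCd hAd w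
  have hQapp : ∀ w, Matrix.of (fderiv ℝ (Qf g) x w) = -(Matrix.of (fderiv ℝ (Sf g) x w)) := by
    intro w
    have h : fderiv ℝ (Qf g) x = -fderiv ℝ (Sf g) x :=
      fderiv_const_sub (Matrix.of.symm (1 : Matrix (Fin n) (Fin n) ℝ))
    rw [h]
    rfl
  -- main mulVec computation
  have hu' : Matrix.of (Af g x) *ᵥ u = 0 := by rwa [jac_eq hgd x] at hu
  have hv' : Matrix.of (Af g x) *ᵥ v = 0 := by rwa [jac_eq hgd x] at hv
  have hmain : ∀ (w z : Fin n → ℝ), Matrix.of (Af g x) *ᵥ z = 0 →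
      Matrix.of (fderiv ℝ (Qf g) x w) *ᵥ z
        = -(Matrix.of (ATCf g x) *ᵥ (Matrix.of (fderiv ℝ (Af g) x w) *ᵥ z)) := by
    intro w z hz
    rw [hQapp, Matrix.neg_mulVec, hSapp, Matrix.add_mulVec, ← Matrix.mulVec_mulVec,
      ← Matrix.mulVec_mulVec, hz, Matrix.mulVec_zero, zero_add]
  -- symmetry of the second derivative
  have hsymm := second_derivative_symmetric (f := g) (f' := fderiv ℝ g)
    (fun y => (hgd y).hasFDerivAt) hD2
  have hAsym : ∀ (w z : Fin n → ℝ),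
      Matrix.of (fderiv ℝ (Af g) x w) *ᵥ z = D2 w z := by
    intro w z
    funext i
    have hzz : z = ∑ j, z j • (Pi.single j 1 : Fin n → ℝ) := by
      have h1 : ∀ j, z j • (Pi.single j 1 : Fin n → ℝ) = Pi.single j (z j) := by
        intro j; funext b
        simp [Pi.single_apply, mul_ite]
      simp only [h1, Finset.univ_sum_single]
    have hD2z : D2 w z i = ∑ j, z j * D2 w (Pi.single j 1) i := by
      conv_lhs => rw [hzz]
      rw [map_sum]
      simp
    show ∑ j, Matrix.of (fderiv ℝ (Af g) x w) i j * z j = D2 w z i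
    rw [hD2z]
    refine Finset.sum_congr rfl fun j _ => ?_
    rw [Matrix.of_apply, hA'app w i j, mul_comm]
  -- key algebraic identity
  have hCinv : Matrix.of (Cf g x) = (Matrix.of (Bf g x))⁻¹ := by
    rw [Matrix.inv_def, Ring.inverse_eq_inv]
    rfl
  have hdetB' : IsUnit (Matrix.of (Bf g x)).det := (Matrix.isUnit_iff_isUnit_det _).1 hBunit
  have hkey : Matrix.of (Qf g x) * Matrix.of (ATCf g x) = 0 := by
    have hQx : Matrix.of (Qf g x)
        = 1 - Matrix.of (ATCf g x) * Matrix.of (Af g x) := rfl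
    have hT : Matrix.of (ATCf g x) = Matrix.of (ATf g x) * Matrix.of (Cf g x) := rfl
    have hB : Matrix.of (Bf g x) = Matrix.of (Af g x) * Matrix.of (ATf g x) := rfl
    set A₀ := Matrix.of (Af g x)
    set T₀ := Matrix.of (ATf g x)
    set B₀ := Matrix.of (Bf g x)
    rw [hQx, hT, hCinv, Matrix.sub_mul, Matrix.one_mul]
    have hh : T₀ * B₀⁻¹ * A₀ * (T₀ * B₀⁻¹) = T₀ * B₀⁻¹ := by
      calc T₀ * B₀⁻¹ * A₀ * (T₀ * B₀⁻¹)
          = T₀ * B₀⁻¹ * (A₀ * T₀ * B₀⁻¹) := by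
            rw [Matrix.mul_assoc (T₀ * B₀⁻¹) A₀, Matrix.mul_assoc A₀ T₀]
        _ = T₀ * B₀⁻¹ * (B₀ * B₀⁻¹) := by rw [← hB]
        _ = T₀ * B₀⁻¹ := by rw [Matrix.mul_nonsing_inv _ hdetB', Matrix.mul_one]
    rw [hh, sub_self]
  constructor
  · rw [hfd, hPx, hmain v u hu', Matrix.mulVec_neg, Matrix.mulVec_mulVec, hkey,
      Matrix.zero_mulVec, neg_zero]
  · rw [hfd, hmain v u hu', hmain u v hv', hAsym, hAsym, hsymm v u]
end

section
/- Let m ≤ n, let g : ℝⁿ → ℝᵐ be C², let x* ∈ ℝⁿ with g(x*) = 0 and Jg(x*) of full rank m, and let v ∈ Ker(Jg(x*)) be a unit vector. Let ε > 0 and let γ : (−ε, ε) → ℝⁿ be a C² curve such that γ(0) = x*, γ'(0) = v, ‖γ'(s)‖ = 1 for all s, g(γ(s)) = 0 for all s, and γ(s) ∈ x* + span{v} + Range(Jg(x*)ᵀ) for all s. Then γ''(0) = −Jg(x*)ᵀ (Jg(x*) Jg(x*)ᵀ)⁻¹ q(v), where q(v) ∈ ℝᵐ is the vector with components vᵀ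 ∇²gᵢ(x*) v, i = 1,…,m. -/
open Matrix Set Metric

lemma clm_pi_apply {n : ℕ} {F : Type*} [NormedAddCommGroup F] [NormedSpace ℝ F]
    (L : (Fin n → ℝ) →L[ℝ] F) (w : Fin n → ℝ) :
    L w = ∑ j, w j • L (Pi.single j 1) := by
  have : w = ∑ j, w j • (Pi.single j 1 : Fin n → ℝ) := by
    funext k
    simp [Finset.sum_apply, Pi.single_apply, Finset.sum_ite_eq' (Finset.univ) k]
  conv_lhs => rw [this]
  simp

lemma bilin_expand {n : ℕ} (B : (Fin n → ℝ) →L[ℝ] (Fin n → ℝ) →L[ℝ] ℝ) (v : Fin n → ℝ) :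
    B v v = ∑ i, ∑ j, v i * (v j * B (Pi.single i 1) (Pi.single j 1)) := by
  rw [clm_pi_apply B v]
  simp only [ContinuousLinearMap.coe_sum', Finset.sum_apply, ContinuousLinearMap.coe_smul',
    Pi.smul_apply, smul_eq_mul]
  refine Finset.sum_congr rfl fun i _ => ?_
  rw [clm_pi_apply (B (Pi.single i 1)) v, Finset.mul_sum]
  simp [mul_comm]

lemma deriv_mem_of_closed {E : Type*} [NormedAddCommGroup E] [NormedSpace ℝ E]
    {W : Submodule ℝ E} (hW : IsClosed (W : Set E)) {f : ℝ → E} {s : ℝ} {d : E}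
    (hf : HasDerivAt f d s) (h : ∀ᶠ t in nhds s, f t ∈ W) : d ∈ W := by
  rw [hasDerivAt_iff_tendsto_slope] at hf
  refine hW.mem_of_tendsto hf ?_
  have h' : ∀ᶠ t in nhdsWithin s {s}ᶜ, f t ∈ W := nhdsWithin_le_nhds h
  filter_upwards [h'] with t ht
  exact W.smul_mem _ (W.sub_mem ht h.self_of_nhds)

/-- the second derivative at 0 of an arc-length parametrized normal
section of the constraint submanifold {g = 0} equals the second fundamental form
value h(v,v) = -Jg(x*)ᵀ(Jg(x*)Jg(x*)ᵀ)⁻¹ q(v). -/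
theorem stmt_8 {n m : ℕ} (hmn : m ≤ n)
    (g : (Fin n → ℝ) → Fin m → ℝ) (hg : ContDiff ℝ 2 g)
    (xs : Fin n → ℝ) (hgxs : g xs = 0) (hrank : (jac g xs).rank = m)
    (v : Fin n → ℝ) (hv1 : euclNorm v = 1) (hv : jac g xs *ᵥ v = 0)
    (ε : ℝ) (hε : 0 < ε)
    (γ : ℝ → Fin n → ℝ) (hγ : ContDiffOn ℝ 2 γ (Ioo (-ε) ε))
    (hγ0 : γ 0 = xs) (hγ'0 : deriv γ 0 = v)
    (hunit : ∀ s ∈ Ioo (-ε) ε, euclNorm (deriv γ s) = 1)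
    (hlevel : ∀ s ∈ Ioo (-ε) ε, g (γ s) = 0)
    (hplane : ∀ s ∈ Ioo (-ε) ε, ∃ (t : ℝ) (b : Fin m → ℝ),
      γ s = xs + t • v + (jac g xs)ᵀ *ᵥ b) :
    deriv (deriv γ) 0 =
      -((jac g xs)ᵀ *ᵥ ((jac g xs * (jac g xs)ᵀ)⁻¹ *ᵥ
          fun i => v ⬝ᵥ ((hess (fun y => g y i) xs) *ᵥ v))) := by
  classical
  set J := jac g xs with hJdef
  set q : Fin m → ℝ := fun i => v ⬝ᵥ ((hess (fun y => g y i) xs) *ᵥ v) with hqdef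
  set a := deriv (deriv γ) 0 with hadef
  have h0ε : (0 : ℝ) ∈ Ioo (-ε) ε := ⟨by linarith, hε⟩
  have hIo : IsOpen (Ioo (-ε) ε) := isOpen_Ioo
  -- regularity of γ
  have hγ2 : ∀ s ∈ Ioo (-ε) ε, ContDiffAt ℝ 2 γ s :=
    fun s hs => hγ.contDiffAt (hIo.mem_nhds hs)
  have hγd : ∀ s ∈ Ioo (-ε) ε, HasDerivAt γ (deriv γ s) s :=
    fun s hs => ((hγ2 s hs).differentiableAt (by norm_num)).hasDerivAt
  -- deriv γ differentiable at 0
  have hD2 : DifferentiableAt ℝ (deriv γ) 0 := by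
    have h1 : ContDiffAt ℝ 1 (fderiv ℝ γ) 0 := (hγ2 0 h0ε).fderiv_right (by norm_num)
    have h2 : DifferentiableAt ℝ (fun s => fderiv ℝ γ s 1) 0 :=
      (h1.differentiableAt (by norm_num)).clm_apply (differentiableAt_const 1)
    exact h2
  have hDa : HasDerivAt (deriv γ) a 0 := hD2.hasDerivAt
  -- v has unit norm
  have hvv : v ⬝ᵥ v = 1 := Real.sqrt_eq_one.mp hv1
  -- the subspace W
  set W : Submodule ℝ (Fin n → ℝ) :=
    Submodule.span ℝ {v} ⊔ LinearMap.range (Jᵀ).mulVecLin with hWdef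
  have hWclosed : IsClosed (W : Set (Fin n → ℝ)) := Submodule.closed_of_finiteDimensional W
  have hmemγ : ∀ s ∈ Ioo (-ε) ε, γ s - xs ∈ W := by
    intro s hs
    obtain ⟨t, b, hb⟩ := hplane s hs
    have : γ s - xs = t • v + Jᵀ *ᵥ b := by rw [hb]; abel
    rw [this]
    exact W.add_mem
      (Submodule.mem_sup_left (Submodule.smul_mem _ t (Submodule.mem_span_singleton_self v)))
      (Submodule.mem_sup_right ⟨b, rfl⟩)
  have hmemγ' : ∀ s ∈ Ioo (-ε) ε, deriv γ s ∈ W := by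
    intro s hs
    refine deriv_mem_of_closed hWclosed ((hγd s hs).sub_const xs) ?_
    filter_upwards [hIo.mem_nhds hs] with t ht using hmemγ t ht
  have hmema : a ∈ W := by
    refine deriv_mem_of_closed hWclosed hDa ?_
    filter_upwards [hIo.mem_nhds h0ε] with t ht using hmemγ' t ht
  -- level-set second order identity
  have hkey : ∀ i, (fderiv ℝ (fderiv ℝ (fun y => g y i)) xs v) v
      + fderiv ℝ (fun y => g y i) xs a = 0 := by
    intro i
    set Gi : (Fin n → ℝ) → ℝ := fun y => g y i with hGidef
    have hGi : ContDiff ℝ 2 Gi := (ContinuousLinearMap.proj (R := ℝ) (φ := fun _ : Fin m => ℝ) i).contDiff.comp hg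
    have hGid : Differentiable ℝ Gi := hGi.differentiable (by norm_num)
    -- first-order identity on Ioo
    have hψ : ∀ s ∈ Ioo (-ε) ε, fderiv ℝ Gi (γ s) (deriv γ s) = 0 := by
      intro s hs
      have h1 : HasDerivAt (fun t => Gi (γ t)) (fderiv ℝ Gi (γ s) (deriv γ s)) s :=
        (hGid (γ s)).hasFDerivAt.comp_hasDerivAt s (hγd s hs)
      have heq : (fun t => Gi (γ t)) =ᶠ[nhds s] fun _ => (0 : ℝ) := by
        filter_upwards [hIo.mem_nhds hs] with t ht
        simp [hGidef, hlevel t ht]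
      exact (h1.congr_of_eventuallyEq heq.symm).unique (hasDerivAt_const s 0)
    -- c is differentiable
    have hfd1 : ContDiffAt ℝ 1 (fderiv ℝ Gi) xs := hGi.contDiffAt.fderiv_right (by norm_num)
    have hd0 : HasDerivAt γ v 0 := by have := hγd 0 h0ε; rwa [hγ'0] at this
    have hc : HasDerivAt (fun s => fderiv ℝ Gi (γ s)) (fderiv ℝ (fderiv ℝ Gi) xs v) 0 := by
      have hb : HasFDerivAt (fderiv ℝ Gi) (fderiv ℝ (fderiv ℝ Gi) xs) (γ 0) := by
        rw [hγ0]; exact (hfd1.differentiableAt (by norm_num)).hasFDerivAt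
      exact hb.comp_hasDerivAt 0 hd0
    have h2 : HasDerivAt (fun s => fderiv ℝ Gi (γ s) (deriv γ s))
        ((fderiv ℝ (fderiv ℝ Gi) xs v) (deriv γ 0) + fderiv ℝ Gi (γ 0) a) 0 :=
      hc.clm_apply hDa
    rw [hγ0, hγ'0] at h2
    have heq : (fun s => fderiv ℝ Gi (γ s) (deriv γ s)) =ᶠ[nhds 0] fun _ => (0 : ℝ) := by
      filter_upwards [hIo.mem_nhds h0ε] with t ht using hψ t ht
    exact (h2.congr_of_eventuallyEq heq.symm).unique (hasDerivAt_const 0 0)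
  -- connect fderiv with jac
  have hjac : ∀ (i : Fin m) (w : Fin n → ℝ), (J *ᵥ w) i = fderiv ℝ (fun y => g y i) xs w := by
    intro i w
    rw [clm_pi_apply (fderiv ℝ (fun y => g y i) xs) w]
    simp only [Matrix.mulVec, dotProduct, smul_eq_mul]
    refine Finset.sum_congr rfl fun j _ => ?_
    rw [mul_comm]
    rfl
  -- connect second fderiv with hess
  have hhess : ∀ i : Fin m,
      (fderiv ℝ (fderiv ℝ (fun y => g y i)) xs v) v = q i := by
    intro i
    set Gi : (Fin n → ℝ) → ℝ := fun y => g y i with hGidef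
    have hGi : ContDiff ℝ 2 Gi := (ContinuousLinearMap.proj (R := ℝ) (φ := fun _ : Fin m => ℝ) i).contDiff.comp hg
    have hfd1 : ContDiffAt ℝ 1 (fderiv ℝ Gi) xs := hGi.contDiffAt.fderiv_right (by norm_num)
    have hent : ∀ k j : Fin n, hess Gi xs k j
        = (fderiv ℝ (fderiv ℝ Gi) xs (Pi.single k 1)) (Pi.single j 1) := by
      intro k j
      have : fderiv ℝ (fun y => fderiv ℝ Gi y (Pi.single j 1)) xs
          = (fderiv ℝ (fderiv ℝ Gi) xs).flip (Pi.single j 1) := by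
        have := fderiv_clm_apply (𝕜 := ℝ) (c := fderiv ℝ Gi)
          (u := fun _ => (Pi.single j 1 : Fin n → ℝ)) (x := xs)
          (hfd1.differentiableAt (by norm_num)) (differentiableAt_const _)
        simpa using this
      simp only [hess, Matrix.of_apply, this]
      rfl
    have hentM : hess (fun y => g y i) xs
        = Matrix.of fun k j => ((fderiv ℝ (fderiv ℝ Gi) xs) (Pi.single k 1)) (Pi.single j 1) := by
      ext k j; exact hent k j
    rw [bilin_expand (fderiv ℝ (fderiv ℝ Gi) xs) v, hqdef]
    simp only [hentM, dotProduct, Matrix.mulVec, Matrix.of_apply]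
    refine Finset.sum_congr rfl fun k _ => ?_
    rw [Finset.mul_sum]
    exact Finset.sum_congr rfl fun j _ => by ring
  -- J *ᵥ a = -q
  have hJa : J *ᵥ a = -q := by
    funext i
    have := hkey i
    rw [hhess i] at this
    have h2 : fderiv ℝ (fun y => g y i) xs a = (J *ᵥ a) i := (hjac i a).symm
    rw [h2] at this
    simp only [Pi.neg_apply]
    linarith
  -- v ⬝ᵥ a = 0 via arclength
  have hva : v ⬝ᵥ a = 0 := by
    have hNderiv : ∀ j : Fin n, HasDerivAt (fun s => deriv γ s j) (a j) 0 := by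
      intro j
      have := (ContinuousLinearMap.proj (R := ℝ) (φ := fun _ : Fin n => ℝ) j).hasFDerivAt.comp_hasDerivAt 0 hDa
      exact this
    have hN : HasDerivAt (fun s => ∑ j, deriv γ s j * deriv γ s j)
        (∑ j, (a j * deriv γ 0 j + deriv γ 0 j * a j)) 0 :=
      HasDerivAt.fun_sum fun j _ => (hNderiv j).mul (hNderiv j)
    have heq : (fun s => ∑ j, deriv γ s j * deriv γ s j) =ᶠ[nhds 0] fun _ => (1 : ℝ) := by
      filter_upwards [hIo.mem_nhds h0ε] with t ht
      have := Real.sqrt_eq_one.mp (hunit t ht)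
      simpa [dotProduct] using this
    have h0 : (∑ j, (a j * deriv γ 0 j + deriv γ 0 j * a j)) = 0 :=
      (hN.congr_of_eventuallyEq heq.symm).unique (hasDerivAt_const 0 1)
    rw [hγ'0] at h0
    have : (2 : ℝ) * (v ⬝ᵥ a) = 0 := by
      rw [← h0]
      simp only [dotProduct, Finset.mul_sum]
      exact Finset.sum_congr rfl fun j _ => by ring
    linarith
  -- decompose a
  obtain ⟨w1, hw1, w2, hw2, hsum⟩ := Submodule.mem_sup.mp hmema
  obtain ⟨t, rfl⟩ := Submodule.mem_span_singleton.mp hw1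
  obtain ⟨b, rfl⟩ := hw2
  have hw2' : (Jᵀ).mulVecLin b = Jᵀ *ᵥ b := rfl
  have ht : t = 0 := by
    have h1 : v ⬝ᵥ a = t * (v ⬝ᵥ v) + (J *ᵥ v) ⬝ᵥ b := by
      rw [← hsum, hw2', dotProduct_add, dotProduct_smul,
        Matrix.dotProduct_mulVec, Matrix.vecMul_transpose, smul_eq_mul]
    rw [hva, hvv, hv, zero_dotProduct, mul_one, add_zero] at h1
    exact h1.symm
  have ha : a = Jᵀ *ᵥ b := by rw [← hsum, hw2', ht, zero_smul, zero_add]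
  -- invertibility of J * Jᵀ
  have hrank2 : (J * Jᵀ).rank = m := by rw [Matrix.rank_self_mul_transpose]; exact hrank
  have hUnit : IsUnit (J * Jᵀ) := by
    rw [← Matrix.mulVec_surjective_iff_isUnit]
    have hrge : LinearMap.range (J * Jᵀ).mulVecLin = ⊤ := by
      apply Submodule.eq_top_of_finrank_eq
      rw [← Matrix.rank, hrank2, Module.finrank_fin_fun]
    intro y
    obtain ⟨x, hx⟩ := LinearMap.range_eq_top.mp hrge y
    exact ⟨x, hx⟩
  have hdet : IsUnit (J * Jᵀ).det := (Matrix.isUnit_iff_isUnit_det _).mp hUnit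
  have hb : b = (J * Jᵀ)⁻¹ *ᵥ (-q) := by
    have h1 : (J * Jᵀ) *ᵥ b = -q := by
      rw [← Matrix.mulVec_mulVec, ← ha, hJa]
    calc b = ((J * Jᵀ)⁻¹ * (J * Jᵀ)) *ᵥ b := by
            rw [Matrix.nonsing_inv_mul _ hdet, Matrix.one_mulVec]
      _ = (J * Jᵀ)⁻¹ *ᵥ ((J * Jᵀ) *ᵥ b) := by rw [Matrix.mulVec_mulVec]
      _ = (J * Jᵀ)⁻¹ *ᵥ (-q) := by rw [h1]
  rw [ha, hb, Matrix.mulVec_neg, Matrix.mulVec_neg]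
end

section
/- Let f, g : ℝ² → ℝ be C² functions and let x* be a local minimum of f subject to the constraint g = 0, with ∇f(x*) ≠ 0 and ∇g(x*) ≠ 0, and let λ* ∈ ℝ satisfy ∇f(x*) = λ* ∇g(x*) (so λ* ≠ 0). Define the unit tangent vectors u_f = (∂₂f(x*), −∂₁f(x*))/‖∇f(x*)‖ and u_g = (∂₂g(x*), −∂₁g(x*))/‖∇g(x*)‖, and the algebraic curvatures κ_f(x*) = −u_fᵀ ∇²f(x*) u_f / ‖∇f(x*)‖ and κ_g(x*) = −u_gᵀ ∇²g(x*) u_g / ‖∇g(x*)‖. Then κ_f(x*) ≤ (λ*/|λ*|) · κ_g(x*). -/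
open Matrix Set Metric

open Asymptotics Filter
open scoped Topology

section AuxLemmas

variable {E : Type*} [NormedAddCommGroup E] [NormedSpace ℝ E]

/-- Second-order Taylor expansion with Peano remainder for a C² function. -/
theorem taylor2_isLittleO (L : E → ℝ) (hL : ContDiff ℝ 2 L) (xs : E) :
    (fun h : E => L (xs + h) - L xs - fderiv ℝ L xs h
      - (1/2) * (fderiv ℝ (fderiv ℝ L) xs h h)) =o[nhds 0] (fun h => ‖h‖^2) := by
  set F : E → (E →L[ℝ] ℝ) := fderiv ℝ L with hFdef
  have hLd : Differentiable ℝ L := hL.differentiable two_ne_zero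
  have hFc : ContDiff ℝ 1 F := hL.fderiv_right (le_refl _)
  have hFd : HasFDerivAt F (fderiv ℝ F xs) xs := (hFc.differentiable one_ne_zero xs).hasFDerivAt
  set B := fderiv ℝ F xs with hBdef
  rw [isLittleO_iff]
  intro ε hε
  have hFd' := hFd.isLittleO
  rw [isLittleO_iff] at hFd'
  have h1 := hFd' hε
  rw [Metric.eventually_nhds_iff] at h1
  obtain ⟨δ, hδ, hδ'⟩ := h1
  rw [Metric.eventually_nhds_iff]
  refine ⟨δ, hδ, fun h hh => ?_⟩
  rw [dist_zero_right] at hh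
  -- one-variable function along the segment
  set φ : ℝ → ℝ := fun t => L (xs + t • h) - t * (F xs h) - (t^2/2) * (B h h) with hφdef
  have hderiv : ∀ t : ℝ, HasDerivAt φ (F (xs + t • h) h - F xs h - t * B h h) t := by
    intro t
    have h1 : HasDerivAt (fun t : ℝ => xs + t • h) h t := by
      simpa using ((hasDerivAt_id t).smul_const h).const_add xs
    have h2 : HasDerivAt (fun t : ℝ => L (xs + t • h)) (F (xs + t • h) h) t :=
      (hLd (xs + t • h)).hasFDerivAt.comp_hasDerivAt t h1
    have h3 : HasDerivAt (fun t : ℝ => t * (F xs h)) (F xs h) t := by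
      simpa using (hasDerivAt_id t).mul_const (F xs h)
    have h4 : HasDerivAt (fun t : ℝ => (t^2/2) * (B h h)) (t * B h h) t := by
      have : HasDerivAt (fun t : ℝ => t^2/2) t t := by
        have := (hasDerivAt_pow 2 t).div_const 2
        simpa using this
      simpa using this.mul_const (B h h)
    exact (h2.sub h3).sub h4
  have bound : ∀ t ∈ Ico (0:ℝ) 1, ‖F (xs + t • h) h - F xs h - t * B h h‖ ≤ ε * ‖h‖^2 := by
    intro t ht
    have ht0 := ht.1
    have ht1 := ht.2.le
    have hdist : dist (xs + t • h) xs < δ := by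
      rw [dist_eq_norm]
      simp only [add_sub_cancel_left, norm_smul, Real.norm_eq_abs, abs_of_nonneg ht0]
      calc t * ‖h‖ ≤ 1 * ‖h‖ := by gcongr
        _ = ‖h‖ := one_mul _
        _ < δ := hh
    have hb := hδ' hdist
    have key : F (xs + t • h) h - F xs h - t * B h h
        = (F (xs + t • h) - F xs - B ((xs + t • h) - xs)) h := by
      simp only [ContinuousLinearMap.sub_apply, add_sub_cancel_left, _root_.map_smul]
      simp [smul_eq_mul]
    rw [key]
    calc ‖(F (xs + t • h) - F xs - B ((xs + t • h) - xs)) h‖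
        ≤ ‖F (xs + t • h) - F xs - B ((xs + t • h) - xs)‖ * ‖h‖ :=
          ContinuousLinearMap.le_opNorm _ _
      _ ≤ (ε * ‖xs + t • h - xs‖) * ‖h‖ := by gcongr
      _ ≤ (ε * ‖h‖) * ‖h‖ := by
          gcongr
          simp only [add_sub_cancel_left, norm_smul, Real.norm_eq_abs, abs_of_nonneg ht0]
          calc t * ‖h‖ ≤ 1 * ‖h‖ := by gcongr
            _ = ‖h‖ := one_mul _
      _ = ε * ‖h‖^2 := by ring
  have hmvt := norm_image_sub_le_of_norm_deriv_le_segment_01'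
    (f := φ) (f' := fun t => F (xs + t • h) h - F xs h - t * B h h)
    (fun t _ => (hderiv t).hasDerivWithinAt) bound
  have : φ 1 - φ 0 = L (xs + h) - L xs - fderiv ℝ L xs h - (1/2) * (B h h) := by
    simp [hφdef]; ring
  rw [this] at hmvt
  simpa [Real.norm_eq_abs, abs_of_nonneg (sq_nonneg ‖h‖)] using hmvt

/-- Second-order necessary condition along a differentiable curve. -/
theorem snd_order_nec (L : E → ℝ) (hL : ContDiff ℝ 2 L) (xs : E)
    (hgrad : fderiv ℝ L xs = 0) (v : E) (γ : ℝ → E) (hγ0 : γ 0 = xs)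
    (hγd : HasDerivAt γ v 0) (hmin : ∀ᶠ t in 𝓝 (0:ℝ), L xs ≤ L (γ t)) :
    0 ≤ fderiv ℝ (fderiv ℝ L) xs v v := by
  set B := fderiv ℝ (fderiv ℝ L) xs with hB
  set h : ℝ → E := fun t => γ t - xs with hh
  have hh0 : Tendsto h (𝓝 0) (𝓝 0) := by
    have := hγd.continuousAt.tendsto
    rw [hγ0] at this
    simpa [hh] using (this.sub_const xs)
  -- h =O t
  have hOB : (fun t : ℝ => h t) =O[𝓝 0] (fun t => t) := by
    have := hγd.isBigO_sub
    simpa [hh, hγ0] using this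
  -- remainder little-o
  set R : E → ℝ := fun w => L (xs + w) - L xs - fderiv ℝ L xs w - (1/2) * (B w w) with hR
  have hRlo : R =o[𝓝 0] (fun w : E => ‖w‖^2) := taylor2_isLittleO L hL xs
  have hRcomp : (fun t : ℝ => R (h t)) =o[𝓝 0] (fun t => t^2) := by
    have h1 : (fun t : ℝ => R (h t)) =o[𝓝 0] (fun t => ‖h t‖^2) := hRlo.comp_tendsto hh0
    have h2 : (fun t : ℝ => ‖h t‖^2) =O[𝓝 0] (fun t => t^2) := by
      simpa [pow_two] using hOB.norm_left.mul hOB.norm_left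
    exact h1.trans_isBigO h2
  have hRt : Tendsto (fun t : ℝ => R (h t) / t^2) (𝓝 0) (𝓝 0) :=
    hRcomp.tendsto_div_nhds_zero
  -- slope tendsto
  have hslope : Tendsto (fun t : ℝ => t⁻¹ • h t) (𝓝[≠] 0) (𝓝 v) := by
    have h1 := hasDerivAt_iff_tendsto_slope.mp hγd
    refine h1.congr fun t => ?_
    simp [slope_def_module, hh, hγ0]
  have hBv : Tendsto (fun t : ℝ => B (t⁻¹ • h t) (t⁻¹ • h t)) (𝓝[≠] 0) (𝓝 (B v v)) := by
    have hc : Continuous fun w : E => B w w := B.continuous₂.comp (continuous_id.prodMk continuous_id)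
    exact (hc.tendsto v).comp hslope
  -- Q tendsto
  set Q : ℝ → ℝ := fun t => (L (γ t) - L xs) / t^2 with hQ
  have hQt : Tendsto Q (𝓝[≠] 0) (𝓝 ((1/2) * B v v)) := by
    have heq : ∀ t : ℝ, t ≠ 0 → Q t = R (h t) / t^2 + (1/2) * (B (t⁻¹ • h t) (t⁻¹ • h t)) := by
      intro t ht
      have hx : xs + h t = γ t := by simp [hh]
      have hBexp : B (t⁻¹ • h t) (t⁻¹ • h t) = t⁻¹ * (t⁻¹ * B (h t) (h t)) := by
        simp only [_root_.map_smul, ContinuousLinearMap.smul_apply, smul_eq_mul]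
      have : R (h t) = L (γ t) - L xs - (1/2) * (B (h t) (h t)) := by
        rw [hR]
        simp [hx, hgrad]
      rw [hQ]
      simp only [this, hBexp]
      field_simp
      ring
    have : Tendsto (fun t : ℝ => R (h t) / t^2 + (1/2) * (B (t⁻¹ • h t) (t⁻¹ • h t))) (𝓝[≠] 0)
        (𝓝 (0 + (1/2) * B v v)) :=
      (hRt.mono_left nhdsWithin_le_nhds).add (hBv.const_mul _)
    rw [zero_add] at this
    exact this.congr' (by filter_upwards [self_mem_nhdsWithin] with t ht using (heq t ht).symm)
  -- Q eventually nonneg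
  have hQpos : ∀ᶠ t in 𝓝[≠] (0:ℝ), 0 ≤ Q t := by
    filter_upwards [hmin.filter_mono nhdsWithin_le_nhds, self_mem_nhdsWithin] with t ht ht0
    exact div_nonneg (by linarith) (sq_nonneg t)
  have := ge_of_tendsto hQt hQpos
  linarith

/-- Existence of a curve in the level set of g tangent to a kernel vector. -/
theorem constraint_curve (g : (Fin 2 → ℝ) → ℝ) (hg : ContDiff ℝ 2 g) (xs : Fin 2 → ℝ)
    (hg0 : fderiv ℝ g xs ≠ 0) (v : Fin 2 → ℝ) (hv : fderiv ℝ g xs v = 0) :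
    ∃ γ : ℝ → (Fin 2 → ℝ), γ 0 = xs ∧ HasDerivAt γ v 0 ∧
      ∀ᶠ t in 𝓝 (0:ℝ), g (γ t) = g xs := by
  set g' := fderiv ℝ g xs with hg'
  have hst : HasStrictFDerivAt g g' xs :=
    (hg.contDiffAt).hasStrictFDerivAt two_ne_zero
  have hsurj : LinearMap.range (g' : (Fin 2 → ℝ) →ₗ[ℝ] ℝ) = ⊤ := by
    obtain ⟨w, hw⟩ : ∃ w, g' w ≠ 0 := by
      by_contra hc
      push_neg at hc
      exact hg0 (ContinuousLinearMap.ext fun w => by simp [hc w])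
    rw [LinearMap.range_eq_top]
    intro y
    exact ⟨(y / g' w) • w, by simp [smul_eq_mul]; field_simp⟩
  set vK : LinearMap.ker (g' : (Fin 2 → ℝ) →ₗ[ℝ] ℝ) := ⟨v, by simpa using hv⟩ with hvK
  set ψ := hst.implicitFunction g g' hsurj with hψ
  set γ : ℝ → (Fin 2 → ℝ) := fun t => ψ (g xs) (t • vK) with hγ
  refine ⟨γ, ?_, ?_, ?_⟩
  · show ψ (g xs) ((0:ℝ) • vK) = xs
    rw [zero_smul]
    exact hst.implicitFunction_apply_image hsurj
  · have hd := hst.to_implicitFunction hsurj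
    have h1 : HasDerivAt (fun t : ℝ => t • vK) vK 0 := by
      simpa using (hasDerivAt_id (0:ℝ)).smul_const vK
    have hd' : HasFDerivAt (ψ (g xs)) (LinearMap.ker (g' : (Fin 2 → ℝ) →ₗ[ℝ] ℝ)).subtypeL ((0:ℝ) • vK) := by
      rw [zero_smul]; exact hd.hasFDerivAt
    have := hd'.comp_hasDerivAt 0 h1
    exact this
  · have hmap := hst.map_implicitFunction_eq hsurj
    have htend : Tendsto (fun t : ℝ => ((g xs, t • vK) : ℝ × LinearMap.ker (g' : (Fin 2 → ℝ) →ₗ[ℝ] ℝ)))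
        (𝓝 0) (𝓝 (g xs, 0)) := by
      refine Tendsto.prodMk_nhds tendsto_const_nhds ?_
      have : Continuous fun t : ℝ => t • vK := by continuity
      simpa using this.tendsto 0
    exact htend.eventually hmap

theorem clm_apply_pi2 (φ : (Fin 2 → ℝ) →L[ℝ] ℝ) (v : Fin 2 → ℝ) :
    φ v = v 0 * φ (Pi.single 0 1) + v 1 * φ (Pi.single 1 1) := by
  have hv : v = v 0 • (Pi.single 0 1 : Fin 2 → ℝ) + v 1 • (Pi.single 1 1 : Fin 2 → ℝ) := by
    funext j; fin_cases j <;> simp [Pi.single_apply]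
  conv_lhs => rw [hv]
  simp [smul_eq_mul]

theorem fderiv_fderiv_apply (p : (Fin 2 → ℝ) → ℝ) (hp : ContDiff ℝ 2 p) (xs w : Fin 2 → ℝ) :
    HasFDerivAt (fun y => fderiv ℝ p y w)
      ((ContinuousLinearMap.apply ℝ ℝ w).comp (fderiv ℝ (fderiv ℝ p) xs)) xs := by
  have hFp : DifferentiableAt ℝ (fderiv ℝ p) xs :=
    ((hp.fderiv_right (m := 1) le_rfl).differentiable one_ne_zero) xs
  exact ((ContinuousLinearMap.apply ℝ ℝ w).hasFDerivAt).comp xs hFp.hasFDerivAt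

theorem hess_eq (p : (Fin 2 → ℝ) → ℝ) (hp : ContDiff ℝ 2 p) (xs : Fin 2 → ℝ) (i j : Fin 2) :
    hess p xs i j = fderiv ℝ (fderiv ℝ p) xs (Pi.single i 1) (Pi.single j 1) := by
  show fderiv ℝ (fun y => fderiv ℝ p y (Pi.single j 1)) xs (Pi.single i 1) = _
  rw [(fderiv_fderiv_apply p hp xs (Pi.single j 1)).fderiv]
  rfl

end AuxLemmas

/-- in the plane, at a constrained local minimum the algebraic
curvatures of the level curve of f and of the constraint curve satisfy
κ_f(x*) ≤ (λ*/|λ*|)·κ_g(x*). -/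
theorem stmt_9 (f g : (Fin 2 → ℝ) → ℝ) (hf : ContDiff ℝ 2 f) (hg : ContDiff ℝ 2 g)
    (xs : Fin 2 → ℝ) (hgxs : g xs = 0)
    (hmin : ∃ U ∈ nhds xs, ∀ y ∈ U, g y = 0 → f xs ≤ f y)
    (hf0 : grad f xs ≠ 0) (hg0 : grad g xs ≠ 0)
    (lam : ℝ) (hlam : grad f xs = lam • grad g xs)
    (uf ug : Fin 2 → ℝ)
    (huf : uf = (euclNorm (grad f xs))⁻¹ • ![grad f xs 1, -(grad f xs 0)])
    (hug : ug = (euclNorm (grad g xs))⁻¹ • ![grad g xs 1, -(grad g xs 0)])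
    (kf kg : ℝ)
    (hkf : kf = -(uf ⬝ᵥ (hess f xs *ᵥ uf)) / euclNorm (grad f xs))
    (hkg : kg = -(ug ⬝ᵥ (hess g xs *ᵥ ug)) / euclNorm (grad g xs)) :
    kf ≤ (lam / |lam|) * kg := by
  have hfd := hf.differentiable two_ne_zero
  have hgd := hg.differentiable two_ne_zero
  -- lam ≠ 0
  have hlam0 : lam ≠ 0 := by
    rintro rfl
    apply hf0
    rw [hlam, zero_smul]
  have habs : 0 < |lam| := abs_pos.mpr hlam0
  -- positivity of N
  set N := euclNorm (grad g xs) with hNdef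
  have hgg : 0 < (grad g xs) ⬝ᵥ (grad g xs) := by
    obtain ⟨i, hi⟩ := Function.ne_iff.mp hg0
    have : (grad g xs) ⬝ᵥ (grad g xs)
        = grad g xs 0 * grad g xs 0 + grad g xs 1 * grad g xs 1 := by
      simp [dotProduct, Fin.sum_univ_two]
    rw [this]
    have h2 : 0 < grad g xs i * grad g xs i := mul_self_pos.mpr (by simpa using hi)
    have h3 : 0 ≤ grad g xs 0 * grad g xs 0 := mul_self_nonneg _
    have h4 : 0 ≤ grad g xs 1 * grad g xs 1 := mul_self_nonneg _
    fin_cases i <;> simp only [Fin.mk_zero, Fin.mk_one] at h2 <;> linarith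
  have hNpos : 0 < N := Real.sqrt_pos.mpr hgg
  -- ug components
  have hug0 : ug 0 = N⁻¹ * grad g xs 1 := by rw [hug]; simp [hNdef]
  have hug1 : ug 1 = N⁻¹ * (-(grad g xs 0)) := by rw [hug]; simp [hNdef]
  -- norm of grad f
  have hNf : euclNorm (grad f xs) = |lam| * N := by
    have hdot : (grad f xs) ⬝ᵥ (grad f xs) = lam^2 * ((grad g xs) ⬝ᵥ (grad g xs)) := by
      rw [hlam]; simp [dotProduct, Fin.sum_univ_two, smul_eq_mul]; ring
    show Real.sqrt _ = _
    rw [hdot, Real.sqrt_mul (sq_nonneg lam), Real.sqrt_sq_eq_abs]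
    rfl
  -- uf = s • ug
  set s : ℝ := lam / |lam| with hs
  have huf_eq : uf = s • ug := by
    rw [huf, hug, hNf]
    have h0 := congrFun hlam 0
    have h1 := congrFun hlam 1
    simp only [Pi.smul_apply, smul_eq_mul] at h0 h1
    funext i
    fin_cases i <;>
      simp only [Pi.smul_apply, Matrix.cons_val_zero, Matrix.cons_val_one, Matrix.head_cons,
        smul_eq_mul, h0, h1, hs, Fin.zero_eta, Fin.mk_one] <;> (field_simp; try ring)
  have hs2 : s * s = 1 := by
    rw [hs, div_mul_div_comm, ← sq, ← sq, sq_abs, div_self (by positivity)]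
  -- transfer the uf-quadratic form to ug
  have hAfuf : uf ⬝ᵥ (hess f xs *ᵥ uf) = ug ⬝ᵥ (hess f xs *ᵥ ug) := by
    rw [huf_eq]
    simp only [dotProduct, Matrix.mulVec, Fin.sum_univ_two, Pi.smul_apply, smul_eq_mul]
    linear_combination (ug 0 * (hess f xs 0 0 * ug 0 + hess f xs 0 1 * ug 1)
      + ug 1 * (hess f xs 1 0 * ug 0 + hess f xs 1 1 * ug 1)) * hs2
  -- the Lagrangian
  set L : (Fin 2 → ℝ) → ℝ := fun y => f y - lam * g y with hLdef
  have hL : ContDiff ℝ 2 L := hf.sub (contDiff_const.mul hg)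
  have hLf : ∀ y, fderiv ℝ L y = fderiv ℝ f y - lam • fderiv ℝ g y := fun y =>
    ((hfd y).hasFDerivAt.sub ((hgd y).hasFDerivAt.const_mul lam)).fderiv
  have hgi : ∀ i, fderiv ℝ L xs (Pi.single i 1) = 0 := by
    intro i
    have hi := congrFun hlam i
    simp only [Pi.smul_apply, smul_eq_mul] at hi
    rw [hLf xs]
    simp only [ContinuousLinearMap.sub_apply, ContinuousLinearMap.smul_apply, smul_eq_mul]
    have e1 : fderiv ℝ f xs (Pi.single i 1) = grad f xs i := rfl
    have e2 : fderiv ℝ g xs (Pi.single i 1) = grad g xs i := rfl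
    rw [e1, e2, hi]; ring
  have hgradL : fderiv ℝ L xs = 0 := by
    refine ContinuousLinearMap.ext fun w => ?_
    rw [clm_apply_pi2, hgi 0, hgi 1]; simp
  -- Hessian of L
  have hhessL : ∀ i j, fderiv ℝ (fderiv ℝ L) xs (Pi.single i 1) (Pi.single j 1)
      = hess f xs i j - lam * hess g xs i j := by
    intro i j
    have h1 := fderiv_fderiv_apply f hf xs (Pi.single j 1)
    have h2 := fderiv_fderiv_apply g hg xs (Pi.single j 1)
    have h3 := fderiv_fderiv_apply L hL xs (Pi.single j 1)
    have h4 : HasFDerivAt (fun y => fderiv ℝ L y (Pi.single j 1))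
        (((ContinuousLinearMap.apply ℝ ℝ (Pi.single j 1)).comp (fderiv ℝ (fderiv ℝ f) xs))
          - lam • ((ContinuousLinearMap.apply ℝ ℝ (Pi.single j 1)).comp
              (fderiv ℝ (fderiv ℝ g) xs))) xs := by
      have h5 := h1.sub (h2.const_mul lam)
      refine h5.congr_of_eventuallyEq (Filter.Eventually.of_forall fun y => ?_)
      show fderiv ℝ L y (Pi.single j 1)
        = fderiv ℝ f y (Pi.single j 1) - lam * fderiv ℝ g y (Pi.single j 1)
      rw [hLf y]; simp
    have huniq := h3.unique h4
    have := congrArg (fun (T : (Fin 2 → ℝ) →L[ℝ] ℝ) => T (Pi.single i 1))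
      (congrArg (fun T => T) huniq)
    have happ : fderiv ℝ (fderiv ℝ L) xs (Pi.single i 1) (Pi.single j 1)
        = fderiv ℝ (fderiv ℝ f) xs (Pi.single i 1) (Pi.single j 1)
          - lam * fderiv ℝ (fderiv ℝ g) xs (Pi.single i 1) (Pi.single j 1) := by
      have := congrFun (congrArg DFunLike.coe huniq) (Pi.single i 1)
      simp only [ContinuousLinearMap.comp_apply, ContinuousLinearMap.sub_apply,
        ContinuousLinearMap.smul_apply, ContinuousLinearMap.apply_apply, smul_eq_mul] at this
      simpa using this
    rw [happ, hess_eq f hf xs i j, hess_eq g hg xs i j]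
  -- kernel membership of ug
  have hker : fderiv ℝ g xs ug = 0 := by
    rw [clm_apply_pi2]
    have e1 : fderiv ℝ g xs (Pi.single 0 1) = grad g xs 0 := rfl
    have e2 : fderiv ℝ g xs (Pi.single 1 1) = grad g xs 1 := rfl
    rw [e1, e2, hug0, hug1]; ring
  have hfderivg0 : fderiv ℝ g xs ≠ 0 := by
    intro hcon
    apply hg0
    funext i
    show fderiv ℝ g xs (Pi.single i 1) = 0
    rw [hcon]; rfl
  obtain ⟨γ, hγ0, hγd, hγg⟩ := constraint_curve g hg xs hfderivg0 ug hker
  -- eventual minimality of L along γ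
  have hminL : ∀ᶠ t in 𝓝 (0:ℝ), L xs ≤ L (γ t) := by
    obtain ⟨U, hU, hUmin⟩ := hmin
    have hten : Filter.Tendsto γ (𝓝 0) (𝓝 xs) := by
      rw [← hγ0]; exact hγd.continuousAt.tendsto
    filter_upwards [hten.eventually_mem hU, hγg] with t htU htg
    have hgt : g (γ t) = 0 := by rw [htg, hgxs]
    have := hUmin _ htU hgt
    simp only [hLdef, hgt, hgxs, mul_zero, sub_zero]
    linarith
  have hsnd := snd_order_nec L hL xs hgradL ug γ hγ0 hγd hminL
  -- expand the second derivative quadratic form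
  set BL := fderiv ℝ (fderiv ℝ L) xs with hBL
  have hrow : ∀ w : Fin 2 → ℝ, BL ug w
      = ug 0 * BL (Pi.single 0 1) w + ug 1 * BL (Pi.single 1 1) w := by
    intro w
    have := clm_apply_pi2 (BL.flip w) ug
    simpa [ContinuousLinearMap.flip_apply] using this
  have hBLuu : BL ug ug
      = ug 0 * (ug 0 * BL (Pi.single 0 1) (Pi.single 0 1) + ug 1 * BL (Pi.single 0 1) (Pi.single 1 1))
        + ug 1 * (ug 0 * BL (Pi.single 1 1) (Pi.single 0 1) + ug 1 * BL (Pi.single 1 1) (Pi.single 1 1)) := by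
    rw [hrow ug, clm_apply_pi2 (BL (Pi.single 0 1)) ug, clm_apply_pi2 (BL (Pi.single 1 1)) ug]
    try ring
  have hdiff : ug ⬝ᵥ (hess f xs *ᵥ ug) - lam * (ug ⬝ᵥ (hess g xs *ᵥ ug)) = BL ug ug := by
    rw [hBLuu, hhessL 0 0, hhessL 0 1, hhessL 1 0, hhessL 1 1]
    simp only [dotProduct, Matrix.mulVec, Fin.sum_univ_two]
    ring
  have hkey : lam * (ug ⬝ᵥ (hess g xs *ᵥ ug)) ≤ ug ⬝ᵥ (hess f xs *ᵥ ug) := by linarith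
  -- final algebra
  rw [hkf, hkg, hAfuf, hNf]
  have hRHS : s * (-(ug ⬝ᵥ (hess g xs *ᵥ ug)) / N)
      = (-(lam * (ug ⬝ᵥ (hess g xs *ᵥ ug)))) / (|lam| * N) := by
    rw [hs]; field_simp
  show -(ug ⬝ᵥ (hess f xs *ᵥ ug)) / (|lam| * N) ≤ s * (-(ug ⬝ᵥ (hess g xs *ᵥ ug)) / N)
  rw [hRHS]
  exact (div_le_div_iff_of_pos_right (by positivity)).mpr (by linarith)
end

section
/- Let f, g : ℝⁿ → ℝ be C² functions, let x* be a local minimum of f subject to the constraint g = 0 with ∇g(x*) ≠ 0, and suppose ∇f(x*) = λ* ∇g(x*) with λ* ≠ 0. Let γ : (−ε, ε) → ℝⁿ be a C² curve with γ(0) = x* and g(γ(t)) = 0 for all t ∈ (−ε, ε). Then −γ'(0)ᵀ ∇²f(x*) γ'(0) / ‖∇f(x*)‖ ≤ −(λ*/|λ*|) · γ'(0)ᵀ ∇²g(x*) γ'(0) / ‖∇g(x*)‖. -/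
open Matrix Set Metric

open Filter
-- decompose a vector in the standard basis
lemma vec_eq_sum {n : ℕ} (u : Fin n → ℝ) : u = ∑ i, u i • (Pi.single i 1 : Fin n → ℝ) := by
  funext j
  simp [Finset.sum_apply, Pi.single_apply]

lemma clm_eq_zero_of_basis {n : ℕ} {L : (Fin n → ℝ) →L[ℝ] ℝ}
    (h : ∀ i, L (Pi.single i 1) = 0) : L = 0 := by
  ext u
  conv_lhs => rw [vec_eq_sum u]
  simp [h]

lemma secondDeriv_nonneg_of_isLocalMin {φ dφ : ℝ → ℝ} {a : ℝ}
    (hmin : IsLocalMin φ 0)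
    (hd : ∀ᶠ t in nhds (0:ℝ), HasDerivAt φ (dφ t) t)
    (hd0 : dφ 0 = 0) (hdd : HasDerivAt dφ a 0) : 0 ≤ a := by
  by_contra hcon
  push_neg at hcon
  have hs : Tendsto (slope dφ 0) (nhdsWithin 0 {(0:ℝ)}ᶜ) (nhds a) :=
    hasDerivAt_iff_tendsto_slope.mp hdd
  have hneg : ∀ᶠ t in nhdsWithin (0:ℝ) {(0:ℝ)}ᶜ, slope dφ 0 t < 0 :=
    hs.eventually_lt_const hcon
  rw [eventually_nhdsWithin_iff] at hneg
  have hall : ∀ᶠ t in nhds (0:ℝ),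
      (t ∈ ({(0:ℝ)}ᶜ : Set ℝ) → slope dφ 0 t < 0) ∧ HasDerivAt φ (dφ t) t ∧ φ 0 ≤ φ t :=
    hneg.and (hd.and hmin)
  rw [Metric.eventually_nhds_iff] at hall
  obtain ⟨δ, hδ, hδall⟩ := hall
  set b := δ/2 with hb
  have hb0 : 0 < b := by positivity
  have hmem : ∀ t ∈ Icc (0:ℝ) b, dist t 0 < δ := by
    intro t ht
    rw [Real.dist_eq, sub_zero, abs_of_nonneg ht.1]
    calc t ≤ b := ht.2
    _ < δ := by rw [hb]; linarith
  have hcont : ContinuousOn φ (Icc 0 b) := fun t ht =>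
    ((hδall (hmem t ht)).2.1.continuousAt).continuousWithinAt
  obtain ⟨c, hc, hceq⟩ := exists_hasDerivAt_eq_slope φ dφ hb0 hcont
    (fun x hx => (hδall (hmem x ⟨le_of_lt hx.1, le_of_lt hx.2⟩)).2.1)
  have hc0 : 0 < c := hc.1
  have hslope : slope dφ 0 c < 0 := by
    refine (hδall (hmem c ⟨le_of_lt hc.1, le_of_lt hc.2⟩)).1 ?_
    simp [ne_of_gt hc0]
  rw [slope_def_field, hd0] at hslope
  have hdc : dφ c < 0 := by
    have h2 : (dφ c - 0) / (c - 0) < 0 := hslope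
    rw [sub_zero, sub_zero] at h2
    rcases div_neg_iff.mp h2 with ⟨h1, h2'⟩ | ⟨h1, h2'⟩
    · linarith
    · linarith
  have hφb : φ 0 ≤ φ b := (hδall (hmem b ⟨le_of_lt hb0, le_refl _⟩)).2.2
  rw [hceq] at hdc
  have : 0 ≤ (φ b - φ 0) / (b - 0) := div_nonneg (by linarith) (by linarith)
  linarith

lemma hess_bilin {n : ℕ} {F : (Fin n → ℝ) → ℝ} (hF : ContDiff ℝ 2 F) (x v : Fin n → ℝ) :
    fderiv ℝ (fderiv ℝ F) x v v = v ⬝ᵥ (hess F x *ᵥ v) := by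
  have hdF : Differentiable ℝ (fderiv ℝ F) :=
    (hF.fderiv_right (m := 1) (by norm_num)).differentiable (by norm_num)
  have hentry : ∀ i j, hess F x i j = fderiv ℝ (fderiv ℝ F) x (Pi.single i 1) (Pi.single j 1) := by
    intro i j
    have h1 : fderiv ℝ (fun y => fderiv ℝ F y (Pi.single j 1)) x
        = (fderiv ℝ (fderiv ℝ F) x).flip (Pi.single j 1) := by
      rw [fderiv_clm_apply (hdF x) (differentiableAt_const _)]
      simp
    simp only [hess, Matrix.of_apply]
    rw [h1]
    simp
  have key : ∀ (D : (Fin n → ℝ) →L[ℝ] ((Fin n → ℝ) →L[ℝ] ℝ)) (u w : Fin n → ℝ),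
      D u w = ∑ i, ∑ j, u i * w j * D (Pi.single i 1) (Pi.single j 1) := by
    intro D u w
    conv_lhs => rw [vec_eq_sum u, vec_eq_sum w]
    simp only [map_sum, _root_.map_smul, ContinuousLinearMap.sum_apply,
      ContinuousLinearMap.coe_smul', Pi.smul_apply, ContinuousLinearMap.smul_apply,
      smul_eq_mul, Finset.mul_sum]
    rw [Finset.sum_comm]
    refine Finset.sum_congr rfl fun i _ => Finset.sum_congr rfl fun j _ => by ring
  rw [key]
  simp only [dotProduct, mulVec]
  refine Finset.sum_congr rfl fun i _ => ?_
  rw [Finset.mul_sum]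
  refine Finset.sum_congr rfl fun j _ => ?_
  rw [hentry i j]
  ring

/-- curvature-type inequality along any C² curve in the constraint
set through a constrained local minimum (case m = 1). -/
theorem stmt_10 {n : ℕ} (f g : (Fin n → ℝ) → ℝ)
    (hf : ContDiff ℝ 2 f) (hg : ContDiff ℝ 2 g)
    (xs : Fin n → ℝ) (hgxs : g xs = 0)
    (hmin : ∃ U ∈ nhds xs, ∀ y ∈ U, g y = 0 → f xs ≤ f y)
    (hg0 : grad g xs ≠ 0)
    (lam : ℝ) (hlam0 : lam ≠ 0) (hlam : grad f xs = lam • grad g xs)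
    (ε : ℝ) (hε : 0 < ε)
    (γ : ℝ → Fin n → ℝ) (hγ : ContDiffOn ℝ 2 γ (Ioo (-ε) ε))
    (hγ0 : γ 0 = xs)
    (hγg : ∀ t ∈ Ioo (-ε) ε, g (γ t) = 0) :
    -(deriv γ 0 ⬝ᵥ (hess f xs *ᵥ deriv γ 0)) / euclNorm (grad f xs) ≤
      -((lam / |lam|) *
        ((deriv γ 0 ⬝ᵥ (hess g xs *ᵥ deriv γ 0)) / euclNorm (grad g xs))) := by
  classical
  have h0mem : (0:ℝ) ∈ Ioo (-ε) ε := ⟨by linarith, hε⟩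
  have hIo : IsOpen (Ioo (-ε) ε) := isOpen_Ioo
  have hnhds : Ioo (-ε) ε ∈ nhds (0:ℝ) := hIo.mem_nhds h0mem
  set v := deriv γ 0 with hvdef
  have hγdiff : ∀ t ∈ Ioo (-ε) ε, DifferentiableAt ℝ γ t := fun t ht =>
    (hγ.differentiableOn (by norm_num)).differentiableAt (hIo.mem_nhds ht)
  have hγ' : ContDiffOn ℝ 1 (deriv γ) (Ioo (-ε) ε) :=
    hγ.deriv_of_isOpen hIo (by norm_num)
  have hγ'diff : DifferentiableAt ℝ (deriv γ) 0 :=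
    (hγ'.differentiableOn (by norm_num)).differentiableAt hnhds
  set w := deriv (deriv γ) 0 with hwdef
  set F : (Fin n → ℝ) → ℝ := fun y => f y - lam * g y with hFdef
  have hFc : ContDiff ℝ 2 F := hf.sub (contDiff_const.mul hg)
  have hFdiff : Differentiable ℝ F := hFc.differentiable (by norm_num)
  have hfd : Differentiable ℝ f := hf.differentiable (by norm_num)
  have hgd : Differentiable ℝ g := hg.differentiable (by norm_num)
  have hFder : ∀ y, fderiv ℝ F y = fderiv ℝ f y - lam • fderiv ℝ g y := fun y => by
    rw [hFdef]
    rw [fderiv_fun_sub (hfd y) ((hgd y).const_mul lam), fderiv_const_mul (hgd y) lam]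
  have hgradF : fderiv ℝ F xs = 0 := by
    rw [hFder]
    apply clm_eq_zero_of_basis
    intro i
    have := congrFun hlam i
    simp only [grad, Pi.smul_apply, smul_eq_mul] at this
    simp [this]
  -- the function φ = F ∘ γ and its derivative dφ
  set φ : ℝ → ℝ := fun t => F (γ t) with hφdef
  set dφ : ℝ → ℝ := fun t => fderiv ℝ F (γ t) (deriv γ t) with hdφdef
  have hd : ∀ t ∈ Ioo (-ε) ε, HasDerivAt φ (dφ t) t := by
    intro t ht
    exact (hFdiff (γ t)).hasFDerivAt.comp_hasDerivAt t (hγdiff t ht).hasDerivAt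
  have hd0 : dφ 0 = 0 := by
    simp only [hdφdef, hγ0, hgradF]
    simp
  -- local min of φ at 0
  have hmin' : IsLocalMin φ 0 := by
    obtain ⟨U, hU, hUmin⟩ := hmin
    have hcont : ContinuousAt γ 0 := (hγdiff 0 h0mem).continuousAt
    have hpre : γ ⁻¹' U ∈ nhds (0:ℝ) := by
      apply hcont
      rwa [hγ0]
    filter_upwards [hpre, hnhds] with t htU htI
    have hgt : g (γ t) = 0 := hγg t htI
    simp only [hφdef, hFdef, hγ0, hgxs, hgt, mul_zero, sub_zero]
    exact hUmin (γ t) htU hgt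
  -- second derivative of φ at 0
  have hDD : Differentiable ℝ (fderiv ℝ F) :=
    (hFc.fderiv_right (m := 1) (by norm_num)).differentiable (by norm_num)
  have hc : HasDerivAt (fun t => fderiv ℝ F (γ t)) (fderiv ℝ (fderiv ℝ F) xs v) 0 := by
    have h1 : HasFDerivAt (fderiv ℝ F) (fderiv ℝ (fderiv ℝ F) (γ 0)) (γ 0) :=
      (hDD (γ 0)).hasFDerivAt
    rw [hγ0] at h1
    exact h1.comp_hasDerivAt_of_eq 0 (hγdiff 0 h0mem).hasDerivAt hγ0.symm
  have hdd : HasDerivAt dφ (fderiv ℝ (fderiv ℝ F) xs v v) 0 := by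
    have := hc.clm_apply hγ'diff.hasDerivAt
    rw [hγ0, hgradF] at this
    simpa using this
  have hkey : 0 ≤ fderiv ℝ (fderiv ℝ F) xs v v :=
    secondDeriv_nonneg_of_isLocalMin hmin'
      (Filter.eventually_of_mem hnhds hd) hd0 hdd
  rw [hess_bilin hFc] at hkey
  -- hess F = hess f - lam • hess g
  have hdf1 : Differentiable ℝ (fderiv ℝ f) :=
    (hf.fderiv_right (m := 1) (by norm_num)).differentiable (by norm_num)
  have hdg1 : Differentiable ℝ (fderiv ℝ g) :=
    (hg.fderiv_right (m := 1) (by norm_num)).differentiable (by norm_num)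
  have hhess : ∀ i j, hess F xs i j = hess f xs i j - lam * hess g xs i j := by
    intro i j
    simp only [hess, Matrix.of_apply]
    have heq : (fun y => fderiv ℝ F y (Pi.single j 1))
        = fun y => fderiv ℝ f y (Pi.single j 1) - lam * fderiv ℝ g y (Pi.single j 1) := by
      funext y
      rw [hFder y]
      simp
    rw [heq]
    have hdfj : DifferentiableAt ℝ (fun y => fderiv ℝ f y (Pi.single j 1)) xs :=
      (hdf1 xs).clm_apply (differentiableAt_const _)
    have hdgj : DifferentiableAt ℝ (fun y => fderiv ℝ g y (Pi.single j 1)) xs :=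
      (hdg1 xs).clm_apply (differentiableAt_const _)
    rw [fderiv_fun_sub hdfj (hdgj.const_mul lam), fderiv_const_mul hdgj lam]
    simp
  have hsplit : v ⬝ᵥ (hess F xs *ᵥ v)
      = v ⬝ᵥ (hess f xs *ᵥ v) - lam * (v ⬝ᵥ (hess g xs *ᵥ v)) := by
    have hM : hess F xs = hess f xs - lam • hess g xs := by
      ext i j
      simp [hhess i j]
    rw [hM, Matrix.sub_mulVec, Matrix.smul_mulVec, dotProduct_sub, dotProduct_smul,
      smul_eq_mul]
  rw [hsplit] at hkey
  -- norms
  set A := v ⬝ᵥ (hess f xs *ᵥ v)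
  set B := v ⬝ᵥ (hess g xs *ᵥ v)
  set N := euclNorm (grad g xs) with hNdef
  have hNpos : 0 < N := by
    rw [hNdef, euclNorm]
    apply Real.sqrt_pos.mpr
    rcases lt_or_eq_of_le (Finset.sum_nonneg (fun i _ => mul_self_nonneg (grad g xs i))) with h | h
    · exact h
    · exact absurd (dotProduct_self_eq_zero.mp h.symm) hg0
  have hnormf : euclNorm (grad f xs) = |lam| * N := by
    have h1 : (lam • grad g xs) ⬝ᵥ (lam • grad g xs)
        = (|lam| * |lam|) * (grad g xs ⬝ᵥ grad g xs) := by
      simp only [smul_dotProduct, dotProduct_smul, smul_eq_mul]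
      rw [abs_mul_abs_self]
      ring
    rw [hlam, hNdef]
    simp only [euclNorm]
    rw [h1, Real.sqrt_mul (mul_self_nonneg |lam|), Real.sqrt_mul_self (abs_nonneg lam)]
  have hlampos : 0 < |lam| := abs_pos.mpr hlam0
  rw [hnormf]
  have hRHS : -((lam / |lam|) * (B / N)) = (-(lam * B)) / (|lam| * N) := by
    field_simp
  rw [hRHS]
  rw [div_le_div_iff₀ (by positivity) (by positivity)]
  nlinarith [hkey, mul_pos hlampos hNpos]
end

section
/- Let m ≤ n, let f : ℝⁿ → ℝ and g : ℝⁿ → ℝᵐ be C², let x* satisfy g(x*) = 0 with Jg(x*) of full rank m, and let λ* ∈ ℝᵐ satisfy ∇f(x*) = Jg(x*)ᵀ λ*. Let V be an n×(n−m) matrix whose columns span Ker(Jg(x*)), let r̄ > 0, and let ψ : B(0, r̄) ⊆ ℝ^{n−m} → ℝᵐ be a C² map with ψ(0) = 0, Jψ(0) = 0, and g(x* + Va + Jg(x*)ᵀ ψ(a)) = 0 for all a ∈ B(0, r̄). Define F : B(0, r̄) → ℝ by F(a) = f(x* + Va + Jg(x*)ᵀ ψ(a)). Then the Hessian of F at 0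 satisfies ∇²F(0) = Vᵀ (∇²f(x*) − Σᵢ₌₁ᵐ λᵢ* ∇²gᵢ(x*)) V. -/
open Matrix Set Metric

lemma clm_decomp {N : ℕ} {E : Type*} [NormedAddCommGroup E] [NormedSpace ℝ E]
    (L : (Fin N → ℝ) →L[ℝ] E) (y : Fin N → ℝ) :
    L y = ∑ p, y p • L (Pi.single p 1) := by
  have hy : y = ∑ p, (y p) • (Pi.single p 1 : Fin N → ℝ) := by
    conv_lhs => rw [← Finset.univ_sum_single y]
    congr 1; funext p
    simp [← Pi.single_smul, smul_eq_mul]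
  conv_lhs => rw [hy]
  rw [map_sum]
  simp only [_root_.map_smul]

lemma key_chain {N D M : ℕ} (h : (Fin N → ℝ) → ℝ) (hh : ContDiff ℝ 2 h)
    (ψ : (Fin D → ℝ) → Fin M → ℝ) {r : ℝ} (hr : 0 < r)
    (hψ : ContDiffOn ℝ 2 ψ (ball 0 r)) (hψ0 : ψ 0 = 0) (hJψ0 : fderiv ℝ ψ 0 = 0)
    (xs : Fin N → ℝ) (Vc : (Fin D → ℝ) →L[ℝ] (Fin N → ℝ))
    (Jc : (Fin M → ℝ) →L[ℝ] (Fin N → ℝ)) (u v : Fin D → ℝ) :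
    fderiv ℝ (fun a => fderiv ℝ (fun b => h (xs + Vc b + Jc (ψ b))) a u) 0 v
    = fderiv ℝ (fderiv ℝ h) xs (Vc v) (Vc u)
      + fderiv ℝ h xs (Jc (fderiv ℝ (fun a => fderiv ℝ ψ a u) 0 v)) := by
  have hball0 : (0 : Fin D → ℝ) ∈ ball 0 r := mem_ball_self hr
  have hψd : ∀ a ∈ ball (0 : Fin D → ℝ) r, DifferentiableAt ℝ ψ a := fun a ha =>
    (hψ.contDiffAt (isOpen_ball.mem_nhds ha)).differentiableAt two_ne_zero
  set Φ : (Fin D → ℝ) → Fin N → ℝ := fun b => xs + Vc b + Jc (ψ b) with hΦdef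
  have hΦfd : ∀ a ∈ ball (0 : Fin D → ℝ) r,
      HasFDerivAt Φ (Vc + Jc.comp (fderiv ℝ ψ a)) a := by
    intro a ha
    exact (Vc.hasFDerivAt.const_add xs).add
      (Jc.hasFDerivAt.comp a (hψd a ha).hasFDerivAt)
  have hΦ0 : Φ 0 = xs := by simp [hΦdef, hψ0]
  -- step 1: replace the inner fderiv on the ball
  have hev : (fun a => fderiv ℝ (fun b => h (Φ b)) a u)
      =ᶠ[nhds (0 : Fin D → ℝ)]
      (fun a => (fderiv ℝ h (Φ a)) (Vc u + Jc (fderiv ℝ ψ a u))) := by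
    filter_upwards [isOpen_ball.mem_nhds hball0] with a ha
    have hcomp : fderiv ℝ (fun b => h (Φ b)) a
        = (fderiv ℝ h (Φ a)).comp (Vc + Jc.comp (fderiv ℝ ψ a)) := by
      have := (hh.differentiable two_ne_zero (Φ a)).hasFDerivAt.comp a (hΦfd a ha)
      exact this.fderiv
    simp [hcomp]
  rw [hev.fderiv_eq]
  -- step 2: differentiate a ↦ (k (Φ a)) (w a)
  set k : (Fin N → ℝ) → (Fin N → ℝ) →L[ℝ] ℝ := fderiv ℝ h with hk
  have hkC : ContDiff ℝ 1 k := hh.fderiv_right (by norm_num : (1:WithTop ℕ∞)+1 ≤ 2)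
  have hΦd0 : DifferentiableAt ℝ Φ 0 := (hΦfd 0 hball0).differentiableAt
  have hcd : DifferentiableAt ℝ (fun a => k (Φ a)) 0 :=
    ((hkC.differentiable one_ne_zero (Φ 0)).comp 0 hΦd0)
  have hdψ : DifferentiableAt ℝ (fderiv ℝ ψ) 0 :=
    ((hψ.contDiffAt (isOpen_ball.mem_nhds hball0)).fderiv_right
      (by norm_num : (1:WithTop ℕ∞)+1 ≤ 2)).differentiableAt one_ne_zero
  have hdψu : DifferentiableAt ℝ (fun a => fderiv ℝ ψ a u) 0 :=
    hdψ.clm_apply (differentiableAt_const u)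
  have hwdiff : DifferentiableAt ℝ (fun a => Vc u + Jc (fderiv ℝ ψ a u)) 0 :=
    ((Jc.differentiable.differentiableAt).comp 0 hdψu).const_add (Vc u)
  have h1 : fderiv ℝ (fun a => Vc u + Jc (fderiv ℝ ψ a u)) 0
      = Jc.comp (fderiv ℝ (fun a => fderiv ℝ ψ a u) 0) := by
    exact ((Jc.hasFDerivAt.comp 0 hdψu.hasFDerivAt).const_add (Vc u)).fderiv
  have hΦf0 : HasFDerivAt Φ Vc 0 := by
    have h0 := hΦfd 0 hball0
    rwa [hJψ0, ContinuousLinearMap.comp_zero, add_zero] at h0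
  have h2 : fderiv ℝ (fun a => k (Φ a)) 0 = (fderiv ℝ k xs).comp Vc := by
    have hkx : DifferentiableAt ℝ k (Φ 0) := hkC.differentiable one_ne_zero (Φ 0)
    have hc := (hkx.hasFDerivAt.comp 0 hΦf0).fderiv
    rw [hΦ0] at hc
    exact hc
  rw [fderiv_clm_apply hcd hwdiff, h1]
  simp only [ContinuousLinearMap.add_apply, ContinuousLinearMap.coe_comp',
    Function.comp_apply, ContinuousLinearMap.flip_apply, h2, hΦ0, hJψ0,
    ContinuousLinearMap.zero_apply, map_zero, add_zero]
  rw [add_comm]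

lemma second_deriv_zero {D : ℕ} (φ : (Fin D → ℝ) → ℝ) {r : ℝ} (hr : 0 < r)
    (h0 : ∀ a ∈ ball (0 : Fin D → ℝ) r, φ a = 0) (u v : Fin D → ℝ) :
    fderiv ℝ (fun a => fderiv ℝ φ a u) 0 v = 0 := by
  have hball0 : (0 : Fin D → ℝ) ∈ ball 0 r := mem_ball_self hr
  have hev : (fun a => fderiv ℝ φ a u) =ᶠ[nhds (0 : Fin D → ℝ)] (fun _ => 0) := by
    filter_upwards [isOpen_ball.mem_nhds hball0] with a ha
    have hloc : φ =ᶠ[nhds a] (fun _ => (0 : ℝ)) := by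
      filter_upwards [isOpen_ball.mem_nhds ha] with b hb
      exact h0 b hb
    rw [hloc.fderiv_eq, fderiv_fun_const]
    simp
  rw [hev.fderiv_eq]
  simp


/-- the Hessian at 0 of the objective in the local parametrization
of the constraint set equals Vᵀ∇²ₓₓL(x*,λ*)V. -/
theorem stmt_11 {n m : ℕ} (hmn : m ≤ n)
    (f : (Fin n → ℝ) → ℝ) (g : (Fin n → ℝ) → Fin m → ℝ)
    (hf : ContDiff ℝ 2 f) (hg : ContDiff ℝ 2 g)
    (xs : Fin n → ℝ) (hgxs : g xs = 0) (hrank : (jac g xs).rank = m)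
    (lam : Fin m → ℝ) (hfo : grad f xs = (jac g xs)ᵀ *ᵥ lam)
    (V : Matrix (Fin n) (Fin (n - m)) ℝ)
    (hV : ∀ v : Fin n → ℝ, jac g xs *ᵥ v = 0 ↔ ∃ a : Fin (n - m) → ℝ, v = V *ᵥ a)
    (r : ℝ) (hr : 0 < r)
    (ψ : (Fin (n - m) → ℝ) → Fin m → ℝ)
    (hψ : ContDiffOn ℝ 2 ψ (ball 0 r))
    (hψ0 : ψ 0 = 0) (hJψ0 : fderiv ℝ ψ 0 = 0)
    (hψg : ∀ a ∈ ball (0 : Fin (n - m) → ℝ) r,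
      g (xs + V *ᵥ a + (jac g xs)ᵀ *ᵥ ψ a) = 0)
    (F : (Fin (n - m) → ℝ) → ℝ)
    (hF : F = fun a => f (xs + V *ᵥ a + (jac g xs)ᵀ *ᵥ ψ a)) :
    hess F 0 = Vᵀ * (hess f xs - ∑ i, lam i • hess (fun y => g y i) xs) * V := by
  
  subst hF
  set Vc : (Fin (n - m) → ℝ) →L[ℝ] (Fin n → ℝ) := (Matrix.mulVecLin V).toContinuousLinearMap with hVcdef
  set Jc : (Fin m → ℝ) →L[ℝ] (Fin n → ℝ) := (Matrix.mulVecLin (jac g xs)ᵀ).toContinuousLinearMap with hJcdef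
  have hVca : ∀ a, Vc a = V *ᵥ a := fun a => rfl
  have hJca : ∀ a, Jc a = (jac g xs)ᵀ *ᵥ a := fun a => rfl
  ext i j
  set u : Fin (n - m) → ℝ := Pi.single j 1 with hu
  set v : Fin (n - m) → ℝ := Pi.single i 1 with hv
  set w : Fin m → ℝ := fderiv ℝ (fun a => fderiv ℝ ψ a u) 0 v with hw
  -- generic facts
  have hlin : ∀ (h : (Fin n → ℝ) → ℝ) (y : Fin n → ℝ),
      fderiv ℝ h xs y = ∑ p, y p * grad h xs p := by
    intro h y
    rw [clm_decomp (fderiv ℝ h xs) y]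
    simp [grad, smul_eq_mul]
  have hgk2 : ∀ k, ContDiff ℝ 2 (fun y => g y k) := fun k =>
    (ContinuousLinearMap.proj k : ((Fin m → ℝ) →L[ℝ] ℝ)).contDiff.comp hg
  have hhess : ∀ (h : (Fin n → ℝ) → ℝ), ContDiff ℝ 2 h → ∀ p q : Fin n,
      hess h xs p q = fderiv ℝ (fderiv ℝ h) xs (Pi.single p 1) (Pi.single q 1) := by
    intro h hh p q
    have hd : DifferentiableAt ℝ (fderiv ℝ h) xs :=
      (hh.fderiv_right (by norm_num : (1:WithTop ℕ∞)+1 ≤ 2)).differentiable one_ne_zero xs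
    have hca := fderiv_clm_apply hd (differentiableAt_const (Pi.single q 1 : Fin n → ℝ))
    show fderiv ℝ (fun y => fderiv ℝ h y (Pi.single q 1)) xs (Pi.single p 1) = _
    rw [hca]
    simp
  have hbil : ∀ (h : (Fin n → ℝ) → ℝ), ContDiff ℝ 2 h →
      fderiv ℝ (fderiv ℝ h) xs (Vc v) (Vc u)
        = ∑ p, ∑ q, V p i * V q j * hess h xs p q := by
    intro h hh
    have hVv : ∀ p, (Vc v) p = V p i := by
      intro p; rw [hVca, hv]; simp [Matrix.mulVec_single]
    have hVu : ∀ q, (Vc u) q = V q j := by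
      intro q; rw [hVca, hu]; simp [Matrix.mulVec_single]
    set K := fderiv ℝ (fderiv ℝ h) xs with hK
    calc K (Vc v) (Vc u) = (∑ p, (Vc v) p • K (Pi.single p 1)) (Vc u) := by
          rw [← clm_decomp]
      _ = ∑ p, (Vc v) p * (K (Pi.single p 1) (Vc u)) := by
          simp [ContinuousLinearMap.sum_apply, smul_eq_mul]
      _ = ∑ p, ∑ q, V p i * V q j * hess h xs p q := by
          refine Finset.sum_congr rfl fun p _ => ?_
          rw [clm_decomp (K (Pi.single p 1)) (Vc u), Finset.mul_sum]
          refine Finset.sum_congr rfl fun q _ => ?_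
          rw [hhess h hh p q, hVv, hVu]
          simp [smul_eq_mul]; ring
  -- use the key chain rule
  have hmain := key_chain f hf ψ hr hψ hψ0 hJψ0 xs Vc Jc u v
  have hzero : ∀ k, fderiv ℝ (fun y => g y k) xs (Jc w)
      = - fderiv ℝ (fderiv ℝ (fun y => g y k)) xs (Vc v) (Vc u) := by
    intro k
    have hk := key_chain (fun y => g y k) (hgk2 k) ψ hr hψ hψ0 hJψ0 xs Vc Jc u v
    have hz := second_deriv_zero (fun b => g (xs + Vc b + Jc (ψ b)) k) hr
      (fun a ha => by
        show g (xs + Vc a + Jc (ψ a)) k = 0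
        rw [hVca, hJca, hψg a ha]; rfl) u v
    rw [hz] at hk
    linarith
  have hgrad : ∀ (k : Fin m) (p : Fin n), grad (fun y => g y k) xs p = jac g xs k p :=
    fun k p => rfl
  have hfw : fderiv ℝ f xs (Jc w) = ∑ k, lam k * fderiv ℝ (fun y => g y k) xs (Jc w) := by
    rw [hlin f (Jc w)]
    have hgf : ∀ p, grad f xs p = ∑ k, jac g xs k p * lam k := by
      intro p
      rw [hfo]
      simp [Matrix.mulVec, dotProduct, Matrix.transpose_apply]
    calc ∑ p, (Jc w) p * grad f xs p
        = ∑ p, ∑ k, (Jc w) p * (jac g xs k p * lam k) := by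
          refine Finset.sum_congr rfl fun p _ => ?_
          rw [hgf p, Finset.mul_sum]
      _ = ∑ k, ∑ p, (Jc w) p * (jac g xs k p * lam k) := Finset.sum_comm
      _ = ∑ k, lam k * fderiv ℝ (fun y => g y k) xs (Jc w) := by
          refine Finset.sum_congr rfl fun k _ => ?_
          rw [hlin (fun y => g y k) (Jc w), Finset.mul_sum]
          refine Finset.sum_congr rfl fun p _ => ?_
          rw [hgrad]
          ring
  -- assemble
  have hentry : hess (fun a => f (xs + V *ᵥ a + (jac g xs)ᵀ *ᵥ ψ a)) 0 i j
      = fderiv ℝ (fderiv ℝ f) xs (Vc v) (Vc u) + fderiv ℝ f xs (Jc w) := hmain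
  rw [hentry, hfw]
  have hsum : ∀ k, lam k * fderiv ℝ (fun y => g y k) xs (Jc w)
      = - ∑ p, ∑ q, lam k * (V p i * V q j * hess (fun y => g y k) xs p q) := by
    intro k
    rw [hzero k, hbil _ (hgk2 k)]
    simp only [mul_neg, neg_inj, Finset.mul_sum]
  simp only [hsum]
  rw [Finset.sum_neg_distrib, hbil f hf]
  have exch : ∀ (c : Fin m → Fin n → Fin n → ℝ),
      (∑ k, ∑ p, ∑ q, c k p q) = ∑ p, ∑ q, ∑ k, c k p q := by
    intro c
    rw [Finset.sum_comm]
    exact Finset.sum_congr rfl fun p _ => Finset.sum_comm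
  rw [exch, ← sub_eq_add_neg, ← Finset.sum_sub_distrib]
  simp only [Matrix.mul_apply, Matrix.transpose_apply, Matrix.sub_apply,
    Matrix.sum_apply, Matrix.smul_apply, smul_eq_mul, Finset.sum_mul]
  conv_rhs => rw [Finset.sum_comm]
  refine Finset.sum_congr rfl fun p _ => ?_
  rw [← Finset.sum_sub_distrib]
  refine Finset.sum_congr rfl fun q _ => ?_
  rw [mul_sub, sub_mul]
  congr 1
  · ring
  · rw [Finset.mul_sum, Finset.sum_mul]
    refine Finset.sum_congr rfl fun k _ => ?_
    ring
end

section
/- Let f : ℝⁿ → ℝ be C², let x* ∈ ℝⁿ with ∇f(x*) ≠ 0, and let v ∈ ℝⁿ be a unit vector with ∇f(x*)ᵀ v = 0. Then there exist ε > 0 and a C² curve γ : (−ε, ε) → ℝⁿ such that γ(0) = x*, γ'(0) = v, ‖γ'(s)‖ = 1 for all s ∈ (−ε, ε), f(γ(s)) = f(x*) for all s ∈ (−ε, ε), and γ(s) ∈ x* + span{v, ∇f(x*)} for all s ∈ (−ε, ε). -/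
open Matrix Set Metric

/-- `fderiv` applied to a vector equals the dot product with the gradient (pure linearity). -/
theorem fderiv_eq_grad_dot' {n : ℕ} (f : (Fin n → ℝ) → ℝ) (x w : Fin n → ℝ) :
    fderiv ℝ f x w = grad f x ⬝ᵥ w := by
  conv_lhs => rw [pi_eq_sum_univ w]
  rw [map_sum]
  simp only [_root_.map_smul, smul_eq_mul, dotProduct, mul_comm]
  refine Finset.sum_congr rfl fun i _ => ?_
  congr 2
  ext j; simp [grad, Pi.single_apply, eq_comm]

/-- `fderiv` on `ℝ × ℝ` in terms of partial derivatives (pure linearity). -/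
theorem fderiv_prod_eq' (F : ℝ × ℝ → ℝ) (p q : ℝ × ℝ) :
    fderiv ℝ F p q = fderiv ℝ F p (1,0) * q.1 + fderiv ℝ F p (0,1) * q.2 := by
  have h : q = q.1 • ((1:ℝ),(0:ℝ)) + q.2 • ((0:ℝ),(1:ℝ)) := by ext <;> simp
  conv_lhs => rw [h]
  rw [map_add, _root_.map_smul, _root_.map_smul]
  simp [mul_comm]

/-- Constancy from vanishing derivative on a symmetric open interval. -/
theorem const_of_deriv_zero_Ioo (h : ℝ → ℝ) (ε : ℝ)
    (hzero : ∀ t ∈ Ioo (-ε) ε, HasDerivAt h 0 t) :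
    ∀ s ∈ Ioo (-ε) ε, h s = h 0 := by
  intro s hs
  rcases le_or_gt 0 s with hle | hlt
  · have hsub : Icc (0:ℝ) s ⊆ Ioo (-ε) ε := fun t ht =>
      ⟨lt_of_lt_of_le (by linarith [hs.1, hs.2]) ht.1, lt_of_le_of_lt ht.2 hs.2⟩
    exact constant_of_has_deriv_right_zero
      (fun t ht => (hzero t (hsub ht)).continuousAt.continuousWithinAt)
      (fun t ht => (hzero t (hsub (Ico_subset_Icc_self ht))).hasDerivWithinAt)
      s (right_mem_Icc.2 hle)
  · have hsub : Icc s 0 ⊆ Ioo (-ε) ε := fun t ht =>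
      ⟨lt_of_lt_of_le hs.1 ht.1, lt_of_le_of_lt ht.2 (by linarith [hs.1, hs.2])⟩
    exact (constant_of_has_deriv_right_zero
      (fun t ht => (hzero t (hsub ht)).continuousAt.continuousWithinAt)
      (fun t ht => (hzero t (hsub (Ico_subset_Icc_self ht))).hasDerivWithinAt)
      0 (right_mem_Icc.2 hlt.le)).symm

set_option maxHeartbeats 2000000 in
/-- existence of an arc-length parametrized C² curve through x*
with initial velocity v, lying in the level hypersurface {f = f(x*)} and in the
normal-section plane x* + span{v, ∇f(x*)}. -/
theorem stmt_14 {n : ℕ} (f : (Fin n → ℝ) → ℝ) (hf : ContDiff ℝ 2 f)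
    (xs : Fin n → ℝ) (hf0 : grad f xs ≠ 0)
    (v : Fin n → ℝ) (hv1 : euclNorm v = 1) (hv : grad f xs ⬝ᵥ v = 0) :
    ∃ (ε : ℝ) (γ : ℝ → Fin n → ℝ), 0 < ε ∧
      ContDiffOn ℝ 2 γ (Ioo (-ε) ε) ∧
      γ 0 = xs ∧ deriv γ 0 = v ∧
      (∀ s ∈ Ioo (-ε) ε, euclNorm (deriv γ s) = 1) ∧
      (∀ s ∈ Ioo (-ε) ε, f (γ s) = f xs) ∧
      (∀ s ∈ Ioo (-ε) ε, ∃ a b : ℝ, γ s = xs + a • v + b • grad f xs) := by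
  classical
  set g : Fin n → ℝ := grad f xs with hgdef
  have hgg_nonneg : 0 ≤ g ⬝ᵥ g := Finset.sum_nonneg fun i _ => mul_self_nonneg _
  have hgg_pos : 0 < g ⬝ᵥ g :=
    lt_of_le_of_ne hgg_nonneg (Ne.symm (mt dotProduct_self_eq_zero.mp hf0))
  set ng : ℝ := Real.sqrt (g ⬝ᵥ g) with hngdef
  have hng : 0 < ng := Real.sqrt_pos.2 hgg_pos
  have hng2 : ng * ng = g ⬝ᵥ g := Real.mul_self_sqrt hgg_nonneg
  have hvv : v ⬝ᵥ v = 1 := Real.sqrt_eq_one.mp hv1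
  have hvg : v ⬝ᵥ g = 0 := by rw [dotProduct_comm]; exact hv
  -- orthonormal basis of the plane
  set u : Fin n → ℝ := ng⁻¹ • g with hudef
  have hvu : v ⬝ᵥ u = 0 := by rw [hudef, dotProduct_smul, hvg, smul_zero]
  have huv : u ⬝ᵥ v = 0 := by rw [dotProduct_comm]; exact hvu
  have huu : u ⬝ᵥ u = 1 := by
    rw [hudef, dotProduct_smul, smul_dotProduct, smul_eq_mul, smul_eq_mul, ← hng2]
    field_simp
  have hgu : g ⬝ᵥ u = ng := by
    rw [hudef, dotProduct_smul, smul_eq_mul, ← hng2]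
    field_simp
  set T : (ℝ × ℝ) →L[ℝ] (Fin n → ℝ) :=
    (ContinuousLinearMap.fst ℝ ℝ ℝ).smulRight v + (ContinuousLinearMap.snd ℝ ℝ ℝ).smulRight u
    with hTdef
  have hT : ∀ p : ℝ × ℝ, T p = p.1 • v + p.2 • u := by intro p; simp [hTdef]
  have hTdot : ∀ p : ℝ × ℝ, (T p) ⬝ᵥ (T p) = p.1 * p.1 + p.2 * p.2 := by
    intro p
    rw [hT]
    simp only [add_dotProduct, dotProduct_add, smul_dotProduct, dotProduct_smul,
      smul_eq_mul, hvv, huu, hvu, huv]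
    ring
  set F : ℝ × ℝ → ℝ := fun p => f (xs + T p) with hFdef
  have hFC : ContDiff ℝ 2 F := hf.comp (contDiff_const.add T.contDiff)
  have hFd : Differentiable ℝ F := hFC.differentiable (by norm_num)
  have hchain : ∀ p : ℝ × ℝ, HasFDerivAt F ((fderiv ℝ f (xs + T p)).comp T) p := fun p =>
    ((hf.differentiable (by norm_num) (xs + T p)).hasFDerivAt).comp p
      (T.hasFDerivAt.const_add xs)
  have hfderivF : ∀ p q : ℝ × ℝ, fderiv ℝ F p q = fderiv ℝ f (xs + T p) (T q) := by
    intro p q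
    rw [(hchain p).fderiv]; rfl
  set G : ℝ × ℝ → ℝ × ℝ := fun p => (fderiv ℝ F p (1, 0), fderiv ℝ F p (0, 1)) with hGdef
  have hGfst : ∀ p, (G p).1 = fderiv ℝ F p (1, 0) := fun p => rfl
  have hGsnd : ∀ p, (G p).2 = fderiv ℝ F p (0, 1) := fun p => rfl
  have hT10 : T ((1:ℝ), (0:ℝ)) = v := by rw [hT]; simp
  have hT01 : T ((0:ℝ), (1:ℝ)) = u := by rw [hT]; simp
  have hG0 : G 0 = (0, ng) := by
    have hT0 : xs + T 0 = xs := by rw [map_zero, add_zero]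
    have e1 : fderiv ℝ F 0 (1, 0) = 0 := by
      rw [hfderivF, hT0, hT10, fderiv_eq_grad_dot', ← hgdef, hv]
    have e2 : fderiv ℝ F 0 (0, 1) = ng := by
      rw [hfderivF, hT0, hT01, fderiv_eq_grad_dot', ← hgdef, hgu]
    rw [hGdef]; exact Prod.ext e1 e2
  have hGC : ContDiff ℝ 1 G := by
    have h1 : ContDiff ℝ 1 (fderiv ℝ F) := hFC.fderiv_right (by norm_num)
    exact ((ContinuousLinearMap.apply ℝ ℝ ((1:ℝ), (0:ℝ))).contDiff.comp h1).prodMk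
      ((ContinuousLinearMap.apply ℝ ℝ ((0:ℝ), (1:ℝ))).contDiff.comp h1)
  -- the open region where the gradient of F does not vanish
  set U : Set (ℝ × ℝ) := {p | 0 < (G p).1 * (G p).1 + (G p).2 * (G p).2} with hUdef
  have hUopen : IsOpen U := by
    have hc : Continuous fun p => (G p).1 * (G p).1 + (G p).2 * (G p).2 :=
      ((hGC.continuous.fst.mul hGC.continuous.fst).add
        (hGC.continuous.snd.mul hGC.continuous.snd))
    exact isOpen_lt continuous_const hc
  have h0U : (0 : ℝ × ℝ) ∈ U := by
    show 0 < (G 0).1 * (G 0).1 + (G 0).2 * (G 0).2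
    have he : (G 0).1 * (G 0).1 + (G 0).2 * (G 0).2 = ng * ng := by rw [hG0]; ring
    rw [he]; nlinarith
  set m : ℝ × ℝ → ℝ := fun p => Real.sqrt (p.1 * p.1 + p.2 * p.2) with hmdef
  -- the unit tangent vector field
  set V : ℝ × ℝ → ℝ × ℝ := fun p => (m (G p))⁻¹ • ((G p).2, -(G p).1) with hVdef
  have hVcomp : ∀ p, V p = ((m (G p))⁻¹ * (G p).2, (m (G p))⁻¹ * -(G p).1) := by
    intro p; simp only [hVdef, Prod.smul_mk, smul_eq_mul]
  have hmGpos : ∀ p ∈ U, 0 < m (G p) := fun p hp => Real.sqrt_pos.2 hp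
  have hmG2 : ∀ p ∈ U, m (G p) * m (G p) = (G p).1 * (G p).1 + (G p).2 * (G p).2 :=
    fun p hp => Real.mul_self_sqrt (le_of_lt hp)
  have hVC : ∀ p ∈ U, ContDiffAt ℝ 1 V p := by
    intro p hp
    have h1 : ContDiffAt ℝ 1 (fun q => (G q).1) p := (contDiff_fst.comp hGC).contDiffAt
    have h2 : ContDiffAt ℝ 1 (fun q => (G q).2) p := (contDiff_snd.comp hGC).contDiffAt
    have hsum : ContDiffAt ℝ 1 (fun q => (G q).1 * (G q).1 + (G q).2 * (G q).2) p :=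
      (h1.mul h1).add (h2.mul h2)
    have hm : ContDiffAt ℝ 1 (fun q => m (G q)) p :=
      (Real.contDiffAt_sqrt (ne_of_gt hp)).comp p hsum
    exact (hm.inv (ne_of_gt (hmGpos p hp))).smul (h2.prodMk h1.neg)
  -- solve the ODE
  obtain ⟨σ, hσ0, ε₁, hε₁, hode₁⟩ :=
    ContDiffAt.exists_forall_mem_closedBall_exists_eq_forall_mem_Ioo_hasDerivAt₀ (E := ℝ × ℝ) (f := V) (hVC 0 h0U) 0
  rw [zero_sub, zero_add] at hode₁
  have hσcont : ContinuousAt σ 0 := (hode₁ 0 (by constructor <;> linarith)).continuousAt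
  have hnb : σ ⁻¹' U ∈ nhds (0 : ℝ) :=
    hσcont.preimage_mem_nhds (hUopen.mem_nhds (by rwa [hσ0]))
  obtain ⟨δ, hδpos, hδ⟩ := Metric.mem_nhds_iff.mp hnb
  set ε : ℝ := min ε₁ δ with hεdef
  have hεpos : 0 < ε := lt_min hε₁ hδpos
  have hode : ∀ t ∈ Ioo (-ε) ε, HasDerivAt σ (V (σ t)) t := by
    intro t ht
    exact hode₁ t ⟨lt_of_le_of_lt (neg_le_neg (min_le_left _ _)) ht.1,
      lt_of_lt_of_le ht.2 (min_le_left _ _)⟩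
  have hmem : ∀ t ∈ Ioo (-ε) ε, σ t ∈ U := by
    intro t ht
    apply hδ
    rw [mem_ball, Real.dist_eq, sub_zero, abs_lt]
    exact ⟨lt_of_le_of_lt (neg_le_neg (min_le_right _ _)) ht.1,
      lt_of_lt_of_le ht.2 (min_le_right _ _)⟩
  have h0mem : (0:ℝ) ∈ Ioo (-ε) ε := ⟨by linarith, hεpos⟩
  -- the curve
  set γ : ℝ → Fin n → ℝ := fun s => xs + T (σ s) with hγdef
  have hγd : ∀ s ∈ Ioo (-ε) ε, HasDerivAt γ (T (V (σ s))) s := fun s hs =>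
    (T.hasFDerivAt.comp_hasDerivAt s (hode s hs)).const_add xs
  -- unit speed of V on U
  have hVnorm : ∀ p ∈ U, (V p).1 * (V p).1 + (V p).2 * (V p).2 = 1 := by
    intro p hp
    rw [hVcomp]
    have h2 := hmG2 p hp
    have h0 := ne_of_gt (hmGpos p hp)
    field_simp
    nlinarith [h2]
  refine ⟨ε, γ, hεpos, ?_, ?_, ?_, ?_, ?_, ?_⟩
  · -- C² smoothness
    have hSopen : IsOpen (Ioo (-ε) ε) := isOpen_Ioo
    have hmaps : MapsTo σ (Ioo (-ε) ε) U := fun t ht => hmem t ht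
    have hVU : ContDiffOn ℝ 1 V U := fun p hp => (hVC p hp).contDiffWithinAt
    have hσcontOn : ContinuousOn σ (Ioo (-ε) ε) :=
      fun t ht => (hode t ht).continuousAt.continuousWithinAt
    have hdiff : DifferentiableOn ℝ σ (Ioo (-ε) ε) :=
      fun t ht => (hode t ht).differentiableAt.differentiableWithinAt
    have hderiv_eq : EqOn (deriv σ) (V ∘ σ) (Ioo (-ε) ε) := fun t ht => (hode t ht).deriv
    have hσ1 : ContDiffOn ℝ 1 σ (Ioo (-ε) ε) := by
      rw [show (1 : WithTop ℕ∞) = 0 + 1 from (zero_add 1).symm,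
        contDiffOn_succ_iff_deriv_of_isOpen hSopen]
      refine ⟨hdiff, by simp, ?_⟩
      rw [contDiffOn_zero]
      exact ContinuousOn.congr ((hVU.continuousOn).comp hσcontOn hmaps) hderiv_eq
    have hσ2 : ContDiffOn ℝ 2 σ (Ioo (-ε) ε) := by
      rw [show (2 : WithTop ℕ∞) = 1 + 1 by norm_num,
        contDiffOn_succ_iff_deriv_of_isOpen hSopen]
      exact ⟨hdiff, by simp, (hVU.comp hσ1 hmaps).congr hderiv_eq⟩
    exact contDiffOn_const.add (T.contDiff.comp_contDiffOn hσ2)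
  · -- γ 0 = xs
    rw [hγdef]
    simp [hσ0]
  · -- deriv γ 0 = v
    have hd := (hγd 0 h0mem).deriv
    rw [hd, hσ0]
    have hm0 : m (G 0) = ng := by
      rw [hG0, hmdef]
      simp only
      rw [show (0:ℝ) * 0 + ng * ng = ng * ng by ring, Real.sqrt_mul_self hng.le]
    have hV0 : V 0 = ((1:ℝ), (0:ℝ)) := by
      rw [hVcomp, hm0, hG0]
      simp only
      rw [inv_mul_cancel₀ (ne_of_gt hng)]
      norm_num
    rw [hV0, hT10]
  · -- unit speed
    intro s hs
    rw [(hγd s hs).deriv]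
    have h1 := hVnorm (σ s) (hmem s hs)
    rw [euclNorm, hTdot, h1, Real.sqrt_one]
  · -- level set
    intro s hs
    have hzero : ∀ t ∈ Ioo (-ε) ε, HasDerivAt (fun t => F (σ t)) 0 t := by
      intro t ht
      have h1 : HasDerivAt (fun t => F (σ t)) (fderiv ℝ F (σ t) (V (σ t))) t :=
        ((hFd (σ t)).hasFDerivAt).comp_hasDerivAt t (hode t ht)
      have h2 : fderiv ℝ F (σ t) (V (σ t)) = 0 := by
        rw [fderiv_prod_eq', hVcomp]
        simp only
        rw [← hGfst, ← hGsnd]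
        ring
      rwa [h2] at h1
    have hconst := const_of_deriv_zero_Ioo (fun t => F (σ t)) ε hzero s hs
    have hF0 : F (σ 0) = f xs := by
      rw [hσ0, hFdef]
      simp only [map_zero, add_zero]
    calc f (γ s) = F (σ s) := by rw [hγdef, hFdef]
    _ = F (σ 0) := hconst
    _ = f xs := hF0
  · -- plane membership
    intro s hs
    refine ⟨(σ s).1, (σ s).2 * ng⁻¹, ?_⟩
    rw [hγdef]
    simp only
    rw [hT, hudef, smul_smul, ← add_assoc]
end

section
/- Let m ≤ n, let g : ℝⁿ → ℝᵐ be C², let x* satisfy g(x*) = 0 with Jg(x*) of full rank m, let V be an n×(n−m) matrix whose columns span Ker(Jg(x*)), and let ψ : B(0, r̄) ⊆ ℝ^{n−m} → ℝᵐ be C² with ψ(0) = 0, Jψ(0) = 0, and g(x* + Va + Jg(x*)ᵀ ψ(a)) = 0 for all a ∈ B(0, r̄). Then for each i = 1,…,m, the (n−m)×(n−m) matrix identity Vᵀ ∇²gᵢ(x*) V + Σⱼ₌₁ᵐ (∇gᵢ(x*)ᵀ ∇gⱼ(x*)) ∇²ψⱼ(0) = 0 holds, where ψ = (ψ₁,…,ψₘ)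 and ∇²ψⱼ(0) is the Hessian of ψⱼ at 0. -/
open Matrix Set Metric

lemma clm_apply_eq_sum_s15 {k : ℕ} {M : Type*} [NormedAddCommGroup M] [NormedSpace ℝ M]
    (L : (Fin k → ℝ) →L[ℝ] M) (v : Fin k → ℝ) :
    L v = ∑ b, v b • L (Pi.single b 1) := by
  conv_lhs => rw [← Finset.univ_sum_single v]
  rw [map_sum]
  refine Finset.sum_congr rfl fun b _ => ?_
  have h : (Pi.single b (v b) : Fin k → ℝ) = v b • (Pi.single b (1:ℝ) : Fin k → ℝ) := by
    ext j; by_cases hj : j = b <;> simp [hj, Pi.single_apply]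
  rw [h, _root_.map_smul]

lemma clm_bilin_eq_sum {k l : ℕ} (Φ : (Fin k → ℝ) →L[ℝ] (Fin l → ℝ) →L[ℝ] ℝ)
    (u : Fin k → ℝ) (v : Fin l → ℝ) :
    Φ u v = ∑ a, ∑ b, u a * v b * Φ (Pi.single a 1) (Pi.single b 1) := by
  rw [show Φ u = ∑ a, u a • Φ (Pi.single a 1) from clm_apply_eq_sum_s15 Φ u,
    ContinuousLinearMap.sum_apply]
  refine Finset.sum_congr rfl fun a _ => ?_
  rw [ContinuousLinearMap.smul_apply, clm_apply_eq_sum_s15 (Φ (Pi.single a 1)) v, smul_eq_mul,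
    Finset.mul_sum]
  exact Finset.sum_congr rfl fun b _ => by rw [smul_eq_mul]; ring


/-- twice differentiating the constraint along the implicit
parametrization gives Vᵀ∇²gᵢ(x*)V + Σⱼ (∇gᵢ(x*)ᵀ∇gⱼ(x*)) ∇²ψⱼ(0) = 0. -/
theorem stmt_15 {n m : ℕ} (hmn : m ≤ n)
    (g : (Fin n → ℝ) → Fin m → ℝ) (hg : ContDiff ℝ 2 g)
    (xs : Fin n → ℝ) (hgxs : g xs = 0) (hrank : (jac g xs).rank = m)
    (V : Matrix (Fin n) (Fin (n - m)) ℝ)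
    (hV : ∀ v : Fin n → ℝ, jac g xs *ᵥ v = 0 ↔ ∃ a : Fin (n - m) → ℝ, v = V *ᵥ a)
    (r : ℝ) (hr : 0 < r)
    (ψ : (Fin (n - m) → ℝ) → Fin m → ℝ)
    (hψ : ContDiffOn ℝ 2 ψ (ball 0 r))
    (hψ0 : ψ 0 = 0) (hJψ0 : fderiv ℝ ψ 0 = 0)
    (hψg : ∀ a ∈ ball (0 : Fin (n - m) → ℝ) r,
      g (xs + V *ᵥ a + (jac g xs)ᵀ *ᵥ ψ a) = 0) :
    ∀ i : Fin m,
      Vᵀ * hess (fun y => g y i) xs * V +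
        ∑ j, (grad (fun y => g y i) xs ⬝ᵥ grad (fun y => g y j) xs) •
          hess (fun a => ψ a j) 0 = 0 := by
  intro i
  classical
  set J : Matrix (Fin m) (Fin n) ℝ := jac g xs with hJdef
  set gi : (Fin n → ℝ) → ℝ := fun y => g y i with hgidef
  have hgi : ContDiff ℝ 2 gi :=
    (ContinuousLinearMap.proj (R := ℝ) (φ := fun _ : Fin m => ℝ) i).contDiff.comp hg
  set W : (Fin (n-m) → ℝ) →L[ℝ] (Fin n → ℝ) :=
    LinearMap.toContinuousLinearMap (Matrix.mulVecLin V) with hWdef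
  set T : (Fin m → ℝ) →L[ℝ] (Fin n → ℝ) :=
    LinearMap.toContinuousLinearMap (Matrix.mulVecLin Jᵀ) with hTdef
  have hWapp : ∀ a, W a = V *ᵥ a := fun a => by
    rw [hWdef]; rw [LinearMap.coe_toContinuousLinearMap' (Matrix.mulVecLin V)]
    exact Matrix.mulVecLin_apply V a
  have hTapp : ∀ v, T v = Jᵀ *ᵥ v := fun v => by
    rw [hTdef]; rw [LinearMap.coe_toContinuousLinearMap' (Matrix.mulVecLin Jᵀ)]
    exact Matrix.mulVecLin_apply Jᵀ v
  set F : (Fin (n-m) → ℝ) → (Fin n → ℝ) := fun a => xs + W a + T (ψ a) with hFdef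
  have hF0 : F 0 = xs := by
    simp [hFdef, hψ0, map_zero]
  have h0mem : (0 : Fin (n-m) → ℝ) ∈ ball (0 : Fin (n-m) → ℝ) r := mem_ball_self hr
  have hψd : ∀ a ∈ ball (0 : Fin (n-m) → ℝ) r, HasFDerivAt ψ (fderiv ℝ ψ a) a := by
    intro a ha
    exact ((hψ.differentiableOn (by norm_num)).differentiableAt
      (isOpen_ball.mem_nhds ha)).hasFDerivAt
  have hFD : ∀ a ∈ ball (0 : Fin (n-m) → ℝ) r,
      HasFDerivAt F (W + T.comp (fderiv ℝ ψ a)) a := by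
    intro a ha
    have h1 : HasFDerivAt (fun a => xs + W a) W a := W.hasFDerivAt.const_add xs
    have h2 : HasFDerivAt (fun a => T (ψ a)) (T.comp (fderiv ℝ ψ a)) a :=
      T.hasFDerivAt.comp a (hψd a ha)
    exact h1.add h2
  have hc0 : ∀ a ∈ ball (0 : Fin (n-m) → ℝ) r, gi (F a) = 0 := by
    intro a ha
    have hFa : g (F a) = 0 := by
      rw [hFdef]; simp only [hWapp, hTapp]; exact hψg a ha
    calc gi (F a) = (g (F a)) i := rfl
    _ = 0 := by rw [hFa]; rfl
  have hgidiff : Differentiable ℝ gi := hgi.differentiable (by norm_num)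
  have hzero : ∀ a ∈ ball (0 : Fin (n-m) → ℝ) r,
      (fderiv ℝ gi (F a)).comp (W + T.comp (fderiv ℝ ψ a)) = 0 := by
    intro a ha
    have hcomp : HasFDerivAt (fun a => gi (F a))
        ((fderiv ℝ gi (F a)).comp (W + T.comp (fderiv ℝ ψ a))) a :=
      (hgidiff (F a)).hasFDerivAt.comp a (hFD a ha)
    have heq : (fun a => gi (F a)) =ᶠ[nhds a] fun _ => (0:ℝ) := by
      filter_upwards [isOpen_ball.mem_nhds ha] with b hb using hc0 b hb
    have h0 : HasFDerivAt (fun a => gi (F a)) 0 a :=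
      (hasFDerivAt_const (𝕜 := ℝ) (0:ℝ) a).congr_of_eventuallyEq heq
    exact hcomp.unique h0
  set Φ := fderiv ℝ (fderiv ℝ gi) xs with hΦdef
  have hfgi1 : ContDiff ℝ 1 (fderiv ℝ gi) := hgi.fderiv_right (by norm_num)
  have hΦ : HasFDerivAt (fderiv ℝ gi) Φ xs :=
    ((hfgi1.differentiable one_ne_zero) xs).hasFDerivAt
  set Ψ := fderiv ℝ (fun a => fderiv ℝ ψ a) 0 with hΨdef
  have hfψ1 : ContDiffOn ℝ 1 (fun a => fderiv ℝ ψ a) (ball 0 r) :=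
    hψ.fderiv_of_isOpen isOpen_ball (by norm_num)
  have hΨ : HasFDerivAt (fun a => fderiv ℝ ψ a) Ψ 0 :=
    ((hfψ1.differentiableOn one_ne_zero).differentiableAt
      (isOpen_ball.mem_nhds h0mem)).hasFDerivAt
  -- the key second-order identity
  have key : ∀ p q : Fin (n-m),
      Φ (W (Pi.single p 1)) (W (Pi.single q 1))
        + fderiv ℝ gi xs (T (Ψ (Pi.single p 1) (Pi.single q 1))) = 0 := by
    intro p q
    set vq : Fin (n-m) → ℝ := Pi.single q 1 with hvq
    have hh0 : ∀ a ∈ ball (0 : Fin (n-m) → ℝ) r,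
        (fderiv ℝ gi (F a)) ((W + T.comp (fderiv ℝ ψ a)) vq) = (0:ℝ) := by
      intro a ha
      have := congrFun (congrArg DFunLike.coe (hzero a ha)) vq
      simpa using this
    have hφF : HasFDerivAt (fun a => fderiv ℝ gi (F a))
        (Φ.comp (W + T.comp (fderiv ℝ ψ 0))) 0 := by
      have h := hΦ
      rw [← hF0] at h
      exact h.comp 0 (hFD 0 h0mem)
    have hdψq : HasFDerivAt (fun a => (fderiv ℝ ψ a) vq)
        (((fderiv ℝ ψ 0).comp (0 : (Fin (n-m) → ℝ) →L[ℝ] (Fin (n-m) → ℝ))) + Ψ.flip vq) 0 :=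
      hΨ.clm_apply (hasFDerivAt_const vq 0)
    have hw : HasFDerivAt (fun a => (W + T.comp (fderiv ℝ ψ a)) vq)
        (T.comp (((fderiv ℝ ψ 0).comp (0 : (Fin (n-m) → ℝ) →L[ℝ] (Fin (n-m) → ℝ)))
          + Ψ.flip vq)) 0 := by
      have h2 := T.hasFDerivAt.comp 0 hdψq
      exact (h2.const_add (W vq)).congr_of_eventuallyEq (by
        filter_upwards with a
        simp [ContinuousLinearMap.add_apply, ContinuousLinearMap.comp_apply])
    have hh : HasFDerivAt (fun a => (fderiv ℝ gi (F a)) ((W + T.comp (fderiv ℝ ψ a)) vq))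
        ((fderiv ℝ gi (F 0)).comp
            (T.comp (((fderiv ℝ ψ 0).comp (0 : (Fin (n-m) → ℝ) →L[ℝ] (Fin (n-m) → ℝ)))
              + Ψ.flip vq))
          + (Φ.comp (W + T.comp (fderiv ℝ ψ 0))).flip ((W + T.comp (fderiv ℝ ψ 0)) vq)) 0 :=
      hφF.clm_apply hw
    have hhzero : HasFDerivAt
        (fun a => (fderiv ℝ gi (F a)) ((W + T.comp (fderiv ℝ ψ a)) vq))
        (0 : (Fin (n-m) → ℝ) →L[ℝ] ℝ) 0 := by
      refine (hasFDerivAt_const (𝕜 := ℝ) (0:ℝ) 0).congr_of_eventuallyEq ?_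
      exact Filter.eventuallyEq_of_mem (isOpen_ball.mem_nhds h0mem) hh0
    have hEq := hh.unique hhzero
    have := congrFun (congrArg DFunLike.coe hEq) (Pi.single p 1)
    simp only [ContinuousLinearMap.add_apply, ContinuousLinearMap.comp_apply,
      ContinuousLinearMap.flip_apply, ContinuousLinearMap.zero_apply, hJψ0, hF0,
      ContinuousLinearMap.comp_zero, ContinuousLinearMap.zero_comp, map_zero,
      add_zero, zero_add] at this
    rw [add_comm] at this
    exact this
  -- matrix-entry computations
  have hhess : ∀ k l, hess gi xs k l = Φ (Pi.single k 1) (Pi.single l 1) := by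
    intro k l
    have h1 : HasFDerivAt (fun y => (fderiv ℝ gi y) (Pi.single l 1))
        (((fderiv ℝ gi xs).comp (0 : (Fin n → ℝ) →L[ℝ] (Fin n → ℝ)))
          + Φ.flip (Pi.single l 1)) xs :=
      hΦ.clm_apply (hasFDerivAt_const (Pi.single l 1) xs)
    have h2 := h1.fderiv
    simp only [hess, Matrix.of_apply]
    rw [h2]
    simp [ContinuousLinearMap.add_apply, ContinuousLinearMap.comp_apply,
      ContinuousLinearMap.flip_apply]
  have hgradapp : ∀ (f : (Fin n → ℝ) → ℝ) (u : Fin n → ℝ),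
      fderiv ℝ f xs u = ∑ k, u k * grad f xs k := by
    intro f u
    rw [clm_apply_eq_sum_s15 (fderiv ℝ f xs) u]
    exact Finset.sum_congr rfl fun k _ => by rw [smul_eq_mul]; rfl
  have hhessψ : ∀ j p q, hess (fun a => ψ a j) 0 p q
      = Ψ (Pi.single p 1) (Pi.single q 1) j := by
    intro j p q
    have heq : (fun a => fderiv ℝ (fun a' => ψ a' j) a (Pi.single q 1))
        =ᶠ[nhds (0 : Fin (n-m) → ℝ)] (fun a => (fderiv ℝ ψ a) (Pi.single q 1) j) := by
      filter_upwards [isOpen_ball.mem_nhds h0mem] with a ha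
      have hj : HasFDerivAt (fun a' => ψ a' j)
          ((ContinuousLinearMap.proj (R := ℝ) (φ := fun _ : Fin m => ℝ) j).comp
            (fderiv ℝ ψ a)) a :=
        (ContinuousLinearMap.proj (R := ℝ) (φ := fun _ : Fin m => ℝ) j).hasFDerivAt.comp
          a (hψd a ha)
      rw [hj.fderiv]; rfl
    have h2 : HasFDerivAt (fun a => (fderiv ℝ ψ a) (Pi.single q 1) j)
        ((ContinuousLinearMap.proj (R := ℝ) (φ := fun _ : Fin m => ℝ) j).comp
          (((fderiv ℝ ψ 0).comp (0 : (Fin (n-m) → ℝ) →L[ℝ] (Fin (n-m) → ℝ)))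
            + Ψ.flip (Pi.single q 1))) 0 :=
      (ContinuousLinearMap.proj (R := ℝ) (φ := fun _ : Fin m => ℝ) j).hasFDerivAt.comp
        0 (hΨ.clm_apply (hasFDerivAt_const (Pi.single q 1) 0))
    simp only [hess, Matrix.of_apply]
    rw [heq.fderiv_eq, h2.fderiv]
    simp [ContinuousLinearMap.add_apply, ContinuousLinearMap.comp_apply,
      ContinuousLinearMap.flip_apply, ContinuousLinearMap.proj_apply, hJψ0]
  -- finish entrywise
  ext p q
  simp only [Matrix.add_apply, Matrix.sum_apply, Matrix.smul_apply, smul_eq_mul,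
    Matrix.zero_apply]
  have hA : (Vᵀ * hess gi xs * V) p q
      = Φ (W (Pi.single p 1)) (W (Pi.single q 1)) := by
    rw [clm_bilin_eq_sum Φ]
    simp only [Matrix.mul_apply, Matrix.transpose_apply, Finset.sum_mul]
    rw [Finset.sum_comm]
    refine Finset.sum_congr rfl fun k _ => Finset.sum_congr rfl fun l _ => ?_
    rw [← hhess k l, hWapp, hWapp, Matrix.mulVec_single_one, Matrix.mulVec_single_one, Matrix.col_apply, Matrix.col_apply]
    ring
  have hB : fderiv ℝ gi xs (T (Ψ (Pi.single p 1) (Pi.single q 1)))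
      = ∑ j, grad gi xs ⬝ᵥ grad (fun y => g y j) xs * hess (fun a => ψ a j) 0 p q := by
    rw [hgradapp, hTapp]
    simp only [Matrix.mulVec, Matrix.transpose_apply, dotProduct, Finset.sum_mul,
      Finset.mul_sum]
    rw [Finset.sum_comm]
    refine Finset.sum_congr rfl fun j _ => ?_
    rw [hhessψ j p q]
    refine Finset.sum_congr rfl fun k _ => ?_
    have hJk : J j k = grad (fun y => g y j) xs k := by
      rw [hJdef]; simp [jac, grad]
    rw [hJk]; ring
  rw [hA, ← hB]
  exact key p q
end

section
/- Let m ≤ n, let f : ℝⁿ → ℝ and g : ℝⁿ → ℝᵐ be C², let x* satisfy g(x*) = 0 with Jg(x*) of full rank m, let V be an n×(n−m) matrix whose columns span Ker(Jg(x*)), and let ψ = (ψ₁,…,ψₘ) : B(0, r̄) ⊆ ℝ^{n−m} → ℝᵐ be C² with ψ(0) = 0, Jψ(0) = 0 and g(x* + Va + Jg(x*)ᵀ ψ(a)) = 0 for all a ∈ B(0, r̄). Define F(a) = f(x* + Va + Jg(x*)ᵀ ψ(a)). Then the Hessian of F at 0 satisfies ∇²F(0) = Vᵀ ∇²f(x*)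 V + Σⱼ₌₁ᵐ (∇f(x*)ᵀ ∇gⱼ(x*)) ∇²ψⱼ(0), where ∇²ψⱼ(0) is the Hessian of ψⱼ at 0. -/
open Matrix Set Metric

lemma clm_apply_pi {k : ℕ} {F : Type*} [NormedAddCommGroup F] [NormedSpace ℝ F]
    (T : (Fin k → ℝ) →L[ℝ] F) (v : Fin k → ℝ) :
    T v = ∑ i, v i • T (Pi.single i 1) := by
  have hv : v = ∑ i, v i • (Pi.single i 1 : Fin k → ℝ) := by
    funext p
    simp [Finset.sum_apply, Pi.single_apply]
  conv_lhs => rw [hv]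
  rw [map_sum]
  simp


set_option maxHeartbeats 2000000 in
/-- the Hessian at 0 of the objective in the local parametrization:
∇²F(0) = Vᵀ∇²f(x*)V + Σⱼ (∇f(x*)ᵀ∇gⱼ(x*)) ∇²ψⱼ(0). -/
theorem stmt_17 {n m : ℕ} (hmn : m ≤ n)
    (f : (Fin n → ℝ) → ℝ) (g : (Fin n → ℝ) → Fin m → ℝ)
    (hf : ContDiff ℝ 2 f) (hg : ContDiff ℝ 2 g)
    (xs : Fin n → ℝ) (hgxs : g xs = 0) (hrank : (jac g xs).rank = m)
    (V : Matrix (Fin n) (Fin (n - m)) ℝ)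
    (hV : ∀ v : Fin n → ℝ, jac g xs *ᵥ v = 0 ↔ ∃ a : Fin (n - m) → ℝ, v = V *ᵥ a)
    (r : ℝ) (hr : 0 < r)
    (ψ : (Fin (n - m) → ℝ) → Fin m → ℝ)
    (hψ : ContDiffOn ℝ 2 ψ (ball 0 r))
    (hψ0 : ψ 0 = 0) (hJψ0 : fderiv ℝ ψ 0 = 0)
    (hψg : ∀ a ∈ ball (0 : Fin (n - m) → ℝ) r,
      g (xs + V *ᵥ a + (jac g xs)ᵀ *ᵥ ψ a) = 0)
    (F : (Fin (n - m) → ℝ) → ℝ)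
    (hF : F = fun a => f (xs + V *ᵥ a + (jac g xs)ᵀ *ᵥ ψ a)) :
    hess F 0 = Vᵀ * hess f xs * V +
      ∑ j, (grad f xs ⬝ᵥ grad (fun y => g y j) xs) • hess (fun a => ψ a j) 0 := by
  classical
  set A : (Fin (n - m) → ℝ) →L[ℝ] (Fin n → ℝ) :=
    LinearMap.toContinuousLinearMap (Matrix.mulVecLin V) with hAdef
  set B : (Fin m → ℝ) →L[ℝ] (Fin n → ℝ) :=
    LinearMap.toContinuousLinearMap (Matrix.mulVecLin (jac g xs)ᵀ) with hBdef
  have hAapp : ∀ v, A v = V *ᵥ v := fun v => rfl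
  have hBapp : ∀ v, B v = (jac g xs)ᵀ *ᵥ v := fun v => rfl
  set φ : (Fin (n - m) → ℝ) → (Fin n → ℝ) := fun a => xs + A a + B (ψ a) with hφdef
  have hφF : F = fun a => f (φ a) := by
    rw [hF]; funext a; rw [hφdef]; simp [hAapp, hBapp]
  have h0mem : (0 : Fin (n - m) → ℝ) ∈ ball (0 : Fin (n - m) → ℝ) r := mem_ball_self hr
  have hψat : ∀ a ∈ ball (0 : Fin (n - m) → ℝ) r, ContDiffAt ℝ 2 ψ a :=
    fun a ha => hψ.contDiffAt (isOpen_ball.mem_nhds ha)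
  have hψd : ∀ a ∈ ball (0 : Fin (n - m) → ℝ) r, DifferentiableAt ℝ ψ a :=
    fun a ha => (hψat a ha).differentiableAt (by norm_num)
  have hfd : Differentiable ℝ f := hf.differentiable (by norm_num)
  have hc : ContDiff ℝ 1 (fderiv ℝ f) := hf.fderiv_right (by norm_num)
  have hφderiv : ∀ a ∈ ball (0 : Fin (n - m) → ℝ) r,
      HasFDerivAt φ (A + B.comp (fderiv ℝ ψ a)) a := by
    intro a ha
    have h2 : HasFDerivAt (fun b => B (ψ b)) (B.comp (fderiv ℝ ψ a)) a :=
      B.hasFDerivAt.comp a (hψd a ha).hasFDerivAt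
    have h3 : HasFDerivAt (fun b => xs + A b) A a := by
      simpa using (hasFDerivAt_const xs a).add A.hasFDerivAt
    exact h3.add h2
  have hφ0 : φ 0 = xs := by simp [hφdef, hψ0]
  have hFderiv : ∀ a ∈ ball (0 : Fin (n - m) → ℝ) r,
      fderiv ℝ F a = (fderiv ℝ f (φ a)).comp (A + B.comp (fderiv ℝ ψ a)) := by
    intro a ha
    rw [hφF]
    exact ((hfd (φ a)).hasFDerivAt.comp a (hφderiv a ha)).fderiv
  have hSdiff : DifferentiableAt ℝ (fderiv ℝ ψ) 0 :=
    ((hψat 0 h0mem).fderiv_right (m := 1) (by norm_num)).differentiableAt one_ne_zero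
  have hS : HasFDerivAt (fderiv ℝ ψ) (fderiv ℝ (fderiv ℝ ψ) 0) 0 := hSdiff.hasFDerivAt
  set S : (Fin (n - m) → ℝ) →L[ℝ] ((Fin (n - m) → ℝ) →L[ℝ] (Fin m → ℝ)) :=
    fderiv ℝ (fderiv ℝ ψ) 0 with hSdef
  set H : (Fin n → ℝ) →L[ℝ] ((Fin n → ℝ) →L[ℝ] ℝ) := fderiv ℝ (fderiv ℝ f) xs with hHdef
  have hcx : HasFDerivAt (fderiv ℝ f) H xs := (hc.differentiable one_ne_zero xs).hasFDerivAt
  -- hessian of f in terms of H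
  have hessf : ∀ p q : Fin n, hess f xs p q = (H (Pi.single p 1)) (Pi.single q 1) := by
    intro p q
    have h1 : HasFDerivAt (fun y => fderiv ℝ f y (Pi.single q 1))
        (H.flip (Pi.single q 1)) xs := by
      simpa using hcx.clm_apply (hasFDerivAt_const (Pi.single q 1) xs)
    show fderiv ℝ (fun y => fderiv ℝ f y (Pi.single q 1)) xs (Pi.single p 1) = _
    rw [h1.fderiv]
    rfl
  -- hessian of ψ components in terms of S
  have hessψ : ∀ (k : Fin m) (i j : Fin (n - m)),
      hess (fun a => ψ a k) 0 i j = ((S (Pi.single i 1)) (Pi.single j 1)) k := by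
    intro k i j
    have hwj : HasFDerivAt (fun a => fderiv ℝ ψ a (Pi.single j 1))
        (S.flip (Pi.single j 1)) 0 := by
      simpa [hJψ0] using hS.clm_apply (hasFDerivAt_const (Pi.single j 1) 0)
    have hee : (fun a => fderiv ℝ (fun b => ψ b k) a (Pi.single j 1)) =ᶠ[nhds 0]
        (fun a => (fderiv ℝ ψ a (Pi.single j 1)) k) := by
      filter_upwards [ball_mem_nhds (0 : Fin (n - m) → ℝ) hr] with a ha
      have h2 : HasFDerivAt (fun b => ψ b k)
          ((ContinuousLinearMap.proj (R := ℝ) (φ := fun _ : Fin m => ℝ) k).comp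
            (fderiv ℝ ψ a)) a :=
        (ContinuousLinearMap.proj (R := ℝ) (φ := fun _ : Fin m => ℝ) k).hasFDerivAt.comp a
          (hψd a ha).hasFDerivAt
      rw [h2.fderiv]
      rfl
    have h3 : HasFDerivAt (fun a => (fderiv ℝ ψ a (Pi.single j 1)) k)
        ((ContinuousLinearMap.proj (R := ℝ) (φ := fun _ : Fin m => ℝ) k).comp
          (S.flip (Pi.single j 1))) 0 :=
      (ContinuousLinearMap.proj (R := ℝ) (φ := fun _ : Fin m => ℝ) k).hasFDerivAt.comp 0 hwj
    show fderiv ℝ (fun a => fderiv ℝ (fun b => ψ b k) a (Pi.single j 1)) 0 (Pi.single i 1) = _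
    rw [hee.fderiv_eq, h3.fderiv]
    rfl
  apply Matrix.ext
  intro i j
  -- second derivative of F at 0, entry (i,j)
  have hwj : HasFDerivAt (fun a => fderiv ℝ ψ a (Pi.single j 1))
      (S.flip (Pi.single j 1)) 0 := by
    simpa [hJψ0] using hS.clm_apply (hasFDerivAt_const (Pi.single j 1) 0)
  have hw2 : HasFDerivAt (fun a => A (Pi.single j 1) + B (fderiv ℝ ψ a (Pi.single j 1)))
      (B.comp (S.flip (Pi.single j 1))) 0 := by
    simpa using (hasFDerivAt_const (A (Pi.single j 1)) 0).add
      (B.hasFDerivAt.comp 0 hwj)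
  have hcφ : HasFDerivAt (fun a => fderiv ℝ f (φ a)) (H.comp A) 0 := by
    have h1 : HasFDerivAt (fderiv ℝ f) H (φ 0) := by rw [hφ0]; exact hcx
    have h2 := h1.comp 0 (hφderiv 0 h0mem)
    simpa [hJψ0, Function.comp_def] using h2
  have hG : HasFDerivAt
      (fun a => (fderiv ℝ f (φ a)) (A (Pi.single j 1) + B (fderiv ℝ ψ a (Pi.single j 1))))
      ((fderiv ℝ f xs).comp (B.comp (S.flip (Pi.single j 1))) +
        (H.comp A).flip (A (Pi.single j 1))) 0 := by
    have := hcφ.clm_apply hw2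
    simpa [hφ0, hJψ0] using this
  have hGE : (fun a => fderiv ℝ F a (Pi.single j 1)) =ᶠ[nhds 0]
      (fun a => (fderiv ℝ f (φ a)) (A (Pi.single j 1) + B (fderiv ℝ ψ a (Pi.single j 1)))) := by
    filter_upwards [ball_mem_nhds (0 : Fin (n - m) → ℝ) hr] with a ha
    rw [hFderiv a ha]
    rfl
  have hmain : hess F 0 i j =
      fderiv ℝ f xs (B ((S (Pi.single i 1)) (Pi.single j 1))) +
        (H (A (Pi.single i 1))) (A (Pi.single j 1)) := by
    show fderiv ℝ (fun a => fderiv ℝ F a (Pi.single j 1)) 0 (Pi.single i 1) = _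
    rw [hGE.fderiv_eq, hG.fderiv]
    simp
  have hA : ∀ i' : Fin (n - m), A (Pi.single i' 1) = fun p => V p i' := by
    intro i'
    rw [hAapp, Matrix.mulVec_single]
    simp
    rfl
  have inner2 : ∀ p : Fin n, (H (Pi.single p 1)) (A (Pi.single j 1)) =
      ∑ q, V q j * hess f xs p q := by
    intro p
    rw [clm_apply_pi (H (Pi.single p 1)) (A (Pi.single j 1))]
    refine Finset.sum_congr rfl fun q _ => ?_
    rw [hA, hessf p q, smul_eq_mul]
  have t2 : (H (A (Pi.single i 1))) (A (Pi.single j 1)) =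
      ∑ p, ∑ q, V p i * (V q j * hess f xs p q) := by
    rw [clm_apply_pi H (A (Pi.single i 1)), ContinuousLinearMap.sum_apply]
    refine Finset.sum_congr rfl fun p _ => ?_
    rw [ContinuousLinearMap.smul_apply, inner2 p, hA, smul_eq_mul, Finset.mul_sum]
  have hBz : ∀ p : Fin n, B ((S (Pi.single i 1)) (Pi.single j 1)) p =
      ∑ k, jac g xs k p * ((S (Pi.single i 1)) (Pi.single j 1)) k := by
    intro p
    rw [hBapp]
    simp [Matrix.mulVec, dotProduct, Matrix.transpose_apply]
  have t1 : fderiv ℝ f xs (B ((S (Pi.single i 1)) (Pi.single j 1))) =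
      ∑ k, (∑ p, grad f xs p * jac g xs k p) * ((S (Pi.single i 1)) (Pi.single j 1)) k := by
    rw [clm_apply_pi (fderiv ℝ f xs) (B ((S (Pi.single i 1)) (Pi.single j 1)))]
    have : ∀ p : Fin n, B ((S (Pi.single i 1)) (Pi.single j 1)) p • fderiv ℝ f xs (Pi.single p 1)
        = ∑ k, grad f xs p * jac g xs k p * ((S (Pi.single i 1)) (Pi.single j 1)) k := by
      intro p
      rw [hBz p, smul_eq_mul, Finset.sum_mul]
      refine Finset.sum_congr rfl fun k _ => ?_
      show jac g xs k p * _ * grad f xs p = _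
      ring
    simp_rw [this]
    rw [Finset.sum_comm]
    exact Finset.sum_congr rfl fun k _ => by rw [Finset.sum_mul]
  have hR1 : (Vᵀ * hess f xs * V) i j = ∑ p, ∑ q, V p i * (V q j * hess f xs p q) := by
    rw [Matrix.mul_apply]
    simp_rw [Matrix.mul_apply, Matrix.transpose_apply, Finset.sum_mul]
    rw [Finset.sum_comm]
    exact Finset.sum_congr rfl fun p _ => Finset.sum_congr rfl fun q _ => by ring
  have hR2 : (∑ k, (grad f xs ⬝ᵥ grad (fun y => g y k) xs) • hess (fun a => ψ a k) 0) i j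
      = ∑ k, (∑ p, grad f xs p * jac g xs k p) * ((S (Pi.single i 1)) (Pi.single j 1)) k := by
    rw [Matrix.sum_apply]
    refine Finset.sum_congr rfl fun k _ => ?_
    rw [Matrix.smul_apply, hessψ k i j, smul_eq_mul]
    rfl
  rw [hmain, t1, t2, Matrix.add_apply, hR1, hR2, add_comm]
end
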